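/- arXiv:1402.1288 — 7 statements merged into one kernel-verified Lean document; each statement's English description precedes it below -/
import Mathlib

section
/- Let PMI : [0,∞) → ℝ be monotone and satisfy PMI(V) = PMI(ρV) + PMI((1−ρ)V) for every V ≥ 0 and every ρ ∈ [0,1]. Then PMI(V) = PMI(1)·V for all V ≥ 0; that is, the permanent market impact is linear in the volume. -/
/-- A monotone permanent-market-impact function satisfying the
splitting identity `PMI(V) = PMI(ρV) + PMI((1−ρ)V)` for all `V ≥ 0` and `ρ ∈ [0,1]`
is linear: `PMI(V) = PMI(1)·V` for all `V ≥ 0`. -/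
theorem permanent_impact_linear
    (PMI : ℝ → ℝ)
    (hmono : MonotoneOn PMI (Set.Ici (0:ℝ)))
    (hsplit : ∀ V : ℝ, 0 ≤ V → ∀ ρ ∈ Set.Icc (0:ℝ) 1,
      PMI V = PMI (ρ * V) + PMI ((1 - ρ) * V)) :
    ∀ V : ℝ, 0 ≤ V → PMI V = PMI 1 * V := by
  -- PMI 0 = 0
  have h0 : PMI 0 = 0 := by
    have := hsplit 0 le_rfl 0 ⟨le_rfl, zero_le_one⟩
    simp at this
    linarith
  -- additivity on nonnegative reals
  have hadd : ∀ a b : ℝ, 0 ≤ a → 0 ≤ b → PMI (a + b) = PMI a + PMI b := by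
    intro a b ha hb
    rcases eq_or_lt_of_le (by linarith : (0:ℝ) ≤ a + b) with h | h
    · have ha0 : a = 0 := by linarith
      have hb0 : b = 0 := by linarith
      simp [ha0, hb0, h0]
    · have hρ : a / (a + b) ∈ Set.Icc (0:ℝ) 1 := by
        constructor
        · positivity
        · rw [div_le_one h]; linarith
      have := hsplit (a + b) (le_of_lt h) _ hρ
      have h1 : a / (a + b) * (a + b) = a := div_mul_cancel₀ a (ne_of_gt h)
      have h2 : (1 - a / (a + b)) * (a + b) = b := by
        field_simp
        ring
      rw [h1, h2] at this
      exact this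
  -- natural multiples
  have hnat : ∀ (n : ℕ) (x : ℝ), 0 ≤ x → PMI ((n : ℝ) * x) = (n : ℝ) * PMI x := by
    intro n
    induction n with
    | zero => intro x hx; simp [h0]
    | succ n ih =>
      intro x hx
      have : ((n + 1 : ℕ) : ℝ) * x = (n : ℝ) * x + x := by push_cast; ring
      rw [this, hadd _ x (by positivity) hx, ih x hx]
      push_cast; ring
  set c := PMI 1 with hc
  -- nonneg rationals
  have hrat : ∀ q : ℚ, 0 ≤ q → PMI (q : ℝ) = c * (q : ℝ) := by
    intro q hq
    have hqR : (0:ℝ) ≤ (q:ℝ) := by exact_mod_cast hq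
    have hden : (0:ℝ) < (q.den : ℝ) := by exact_mod_cast q.pos
    have hnum : ((q.num.toNat : ℕ) : ℝ) = (q.den : ℝ) * (q : ℝ) := by
      have h1 : (q : ℝ) * (q.den : ℝ) = (q.num : ℝ) := by
        rw [← Rat.cast_natCast, ← Rat.cast_mul, Rat.mul_den_eq_num, Rat.cast_intCast]
      rw [show ((q.num.toNat : ℕ) : ℝ) = (q.num : ℝ) by
        exact_mod_cast congrArg Int.cast (Int.toNat_of_nonneg (Rat.num_nonneg.mpr hq))]
      linarith
    have h1 : PMI ((q.num.toNat : ℕ) : ℝ) = ((q.num.toNat : ℕ) : ℝ) * c := by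
      have := hnat q.num.toNat 1 zero_le_one
      simpa using this
    have h2 : PMI ((q.den : ℝ) * (q : ℝ)) = (q.den : ℝ) * PMI (q : ℝ) := hnat q.den _ hqR
    rw [hnum] at h1
    rw [h2] at h1
    have := mul_left_cancel₀ (ne_of_gt hden) (by linarith : (q.den:ℝ) * PMI (q:ℝ) = (q.den:ℝ) * (c * (q:ℝ)))
    exact this
  -- c ≥ 0
  have hc0 : 0 ≤ c := by
    have := hmono (Set.mem_Ici.mpr le_rfl) (Set.mem_Ici.mpr zero_le_one) zero_le_one
    rw [h0] at this; exact this
  intro V hV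
  have hVmem : V ∈ Set.Ici (0:ℝ) := hV
  have hPV0 : 0 ≤ PMI V := by
    have := hmono (Set.mem_Ici.mpr le_rfl) hVmem hV
    rw [h0] at this; exact this
  -- upper bound: PMI V ≤ c * V
  have hub : PMI V ≤ c * V := by
    by_contra hcon
    push_neg at hcon
    rcases eq_or_lt_of_le hc0 with hc' | hc'
    · obtain ⟨q, hq⟩ := exists_rat_gt V
      have hq0 : (0:ℝ) ≤ (q:ℝ) := le_trans hV (le_of_lt hq)
      have hle : PMI V ≤ PMI (q:ℝ) := hmono hVmem hq0 (le_of_lt hq)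
      rw [hrat q (by exact_mod_cast hq0), ← hc'] at hle
      simp at hle
      nlinarith
    · obtain ⟨q, hq1, hq2⟩ := exists_rat_btwn (show V < PMI V / c by
        rw [lt_div_iff₀ hc']; linarith)
      have hq0 : (0:ℝ) ≤ (q:ℝ) := le_trans hV (le_of_lt hq1)
      have hle : PMI V ≤ PMI (q:ℝ) := hmono hVmem hq0 (le_of_lt hq1)
      rw [hrat q (by exact_mod_cast hq0)] at hle
      rw [lt_div_iff₀ hc'] at hq2
      nlinarith
  -- lower bound
  have hlb : c * V ≤ PMI V := by
    rcases eq_or_lt_of_le hV with hV0 | hV0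
    · rw [← hV0]; simp [h0]
    by_contra hcon
    push_neg at hcon
    have hc' : 0 < c := by
      rcases eq_or_lt_of_le hc0 with h | h
      · exfalso; rw [← h] at hcon; simp at hcon; linarith
      · exact h
    obtain ⟨q, hq1, hq2⟩ := exists_rat_btwn (show PMI V / c < V by
      rw [div_lt_iff₀ hc']; linarith)
    have hq0 : (0:ℝ) ≤ (q:ℝ) := by
      have : 0 ≤ PMI V / c := div_nonneg hPV0 (le_of_lt hc')
      linarith
    have hle : PMI (q:ℝ) ≤ PMI V := hmono hq0 hVmem (le_of_lt hq2)
    rw [hrat q (by exact_mod_cast hq0)] at hle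
    rw [div_lt_iff₀ hc'] at hq1
    nlinarith
  linarith
end

section
/- Let φ : [0,∞) → [0,∞) be integrable with ‖φ‖₁ := ∫₀^∞ φ < 1, let ψ := Σ_{k=1}^∞ φ^{*k}, and let κ, v > 0. Define for t ≥ 0 the propagator kernel ζ(t) := κ v (1 + ∫_t^∞ ψ(u) du − ∫_t^∞ ∫₀^t ψ(u−s) φ(s) ds du). Then ζ(t) = (κ v/(1 − ‖φ‖₁)) · ((1 − ‖φ‖₁) + ∫_t^∞ φ(s) ds) = ζ(0) · (1 − ∫₀^t φ(s) ds) for every t ≥ 0. -/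
open MeasureTheory Filter ENNReal

/-- Causal convolution of two functions supported on `[0,∞)`:
`(f * g)(t) = ∫₀^t f(t−s) g(s) ds`. -/
noncomputable def causalConv (f g : ℝ → ℝ) : ℝ → ℝ :=
  fun t => ∫ s in (0:ℝ)..t, f (t - s) * g s

/-- `convPow φ k` is the `(k+1)`-st convolution power `φ^{*(k+1)}` of `φ`. -/
noncomputable def convPow (φ : ℝ → ℝ) : ℕ → ℝ → ℝ
  | 0 => φ
  | k + 1 => causalConv φ (convPow φ k)

variable {f g : ℝ → ℝ}

lemma causalConv_neg (hf0 : ∀ t < (0:ℝ), f t = 0) (hg0 : ∀ t < (0:ℝ), g t = 0)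
    {t : ℝ} (ht : t < 0) : causalConv f g t = 0 := by
  unfold causalConv
  rw [intervalIntegral.integral_symm, intervalIntegral.integral_of_le ht.le]
  rw [setIntegral_eq_zero_of_forall_eq_zero, neg_zero]
  intro s hs
  rcases lt_or_eq_of_le hs.2 with h | h
  · rw [hg0 s h, mul_zero]
  · subst h; rw [sub_zero, hf0 t ht, zero_mul]

lemma causalConv_nonneg (hf0 : ∀ t < (0:ℝ), f t = 0) (hg0 : ∀ t < (0:ℝ), g t = 0)
    (hf : ∀ t, 0 ≤ f t) (hg : ∀ t, 0 ≤ g t) (t : ℝ) : 0 ≤ causalConv f g t := by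
  rcases lt_or_ge t 0 with ht | ht
  · rw [causalConv_neg hf0 hg0 ht]
  · exact intervalIntegral.integral_nonneg ht (fun s _ => mul_nonneg (hf _) (hg _))

lemma causalConv_eq (hf0 : ∀ t < (0:ℝ), f t = 0) (hg0 : ∀ t < (0:ℝ), g t = 0) (t : ℝ) :
    causalConv f g t = ∫ s, f (t - s) * g s := by
  rcases lt_or_ge t 0 with ht | ht
  · rw [causalConv_neg hf0 hg0 ht]
    rw [← integral_zero ℝ ℝ (μ := volume)]
    congr 1; funext s
    rcases lt_or_ge s 0 with hs | hs
    · rw [hg0 s hs, mul_zero]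
    · rw [hf0 _ (by linarith), zero_mul]
  · unfold causalConv
    rw [intervalIntegral.integral_of_le ht]
    rw [← integral_indicator measurableSet_Ioc]
    refine integral_congr_ae ?_
    have h0 : ∀ᵐ s : ℝ, s ≠ 0 := by
      have : (volume : Measure ℝ) {(0:ℝ)} = 0 := measure_singleton 0
      exact ae_iff.2 (by simpa using this)
    filter_upwards [h0] with s hs
    by_cases hmem : s ∈ Set.Ioc (0:ℝ) t
    · rw [Set.indicator_of_mem hmem]
    · rw [Set.indicator_of_notMem hmem]
      rcases not_and_or.1 hmem with h | h
      · push_neg at h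
        rw [hg0 s (lt_of_le_of_ne h hs), mul_zero]
      · push_neg at h
        rw [hf0 _ (by linarith), zero_mul]

lemma causalConv_measurable (hf : Measurable f) (hg : Measurable g)
    (hf0 : ∀ t < (0:ℝ), f t = 0) (hg0 : ∀ t < (0:ℝ), g t = 0) :
    Measurable (causalConv f g) := by
  have hK : Measurable fun p : ℝ × ℝ =>
      Set.indicator {q : ℝ × ℝ | 0 < q.2 ∧ q.2 ≤ q.1} (fun q => f (q.1 - q.2) * g q.2) p := by
    refine Measurable.indicator ?_ ?_
    · exact (hf.comp (measurable_fst.sub measurable_snd)).mul (hg.comp measurable_snd)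
    · exact MeasurableSet.inter
        (measurableSet_lt measurable_const measurable_snd)
        (measurableSet_le measurable_snd measurable_fst)
  have key : causalConv f g = fun t : ℝ =>
      ∫ s, Set.indicator {q : ℝ × ℝ | 0 < q.2 ∧ q.2 ≤ q.1}
          (fun q => f (q.1 - q.2) * g q.2) (t, s) := by
    funext t
    rcases lt_or_ge t 0 with ht | ht
    · have h1 : ∀ s : ℝ, Set.indicator {q : ℝ × ℝ | 0 < q.2 ∧ q.2 ≤ q.1}
          (fun q => f (q.1 - q.2) * g q.2) (t, s) = 0 := by
        intro s
        apply Set.indicator_of_notMem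
        rintro ⟨h1, h2⟩; simp only at h1 h2; linarith
      simp only [h1, integral_zero]
      exact causalConv_neg hf0 hg0 ht
    · unfold causalConv
      rw [intervalIntegral.integral_of_le ht, ← integral_indicator measurableSet_Ioc]
      refine integral_congr_ae (Eventually.of_forall fun s => ?_)
      by_cases hmem : s ∈ Set.Ioc (0:ℝ) t
      · rw [Set.indicator_of_mem hmem]
        simp only [Set.indicator_apply, Set.mem_setOf_eq]
        rw [if_pos ⟨hmem.1, hmem.2⟩]
      · rw [Set.indicator_of_notMem hmem]
        simp only [Set.indicator_apply, Set.mem_setOf_eq]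
        rw [if_neg (fun hq => hmem ⟨hq.1, hq.2⟩)]
  rw [key]
  exact (hK.stronglyMeasurable.integral_prod_right').measurable

section ConvPow
variable {φ : ℝ → ℝ} (hφpos : ∀ t : ℝ, 0 ≤ φ t)
  (hφsupp : ∀ t : ℝ, t < 0 → φ t = 0) (hφmeas : Measurable φ)

include hφsupp in
lemma convPow_neg : ∀ k, ∀ t < (0:ℝ), convPow φ k t = 0 := by
  intro k
  induction k with
  | zero => exact fun t ht => hφsupp t ht
  | succ k ih => exact fun t ht => causalConv_neg (fun u hu => hφsupp u hu) ih ht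

include hφsupp hφpos in
lemma convPow_nonneg : ∀ k, ∀ t, 0 ≤ convPow φ k t := by
  intro k
  induction k with
  | zero => exact hφpos
  | succ k ih =>
    exact causalConv_nonneg (fun u hu => hφsupp u hu) (convPow_neg hφsupp k) hφpos ih

include hφsupp hφmeas in
lemma convPow_measurable : ∀ k, Measurable (convPow φ k) := by
  intro k
  induction k with
  | zero => exact hφmeas
  | succ k ih =>
    exact causalConv_measurable hφmeas ih (fun u hu => hφsupp u hu) (convPow_neg hφsupp k)

include hφsupp in
lemma convPow_succ_eq (k : ℕ) (t : ℝ) :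
    convPow φ (k + 1) t = ∫ s, φ (t - s) * convPow φ k s :=
  causalConv_eq (fun u hu => hφsupp u hu) (convPow_neg hφsupp k) t

end ConvPow
section S
variable {φ : ℝ → ℝ}
  (hφpos : ∀ t : ℝ, 0 ≤ φ t)
  (hφsupp : ∀ t : ℝ, t < 0 → φ t = 0)
  (hφmeas : Measurable φ)
  (hφint : IntegrableOn φ (Set.Ici (0:ℝ)))

include hφsupp hφint in
lemma phi_integrable : Integrable φ (volume : Measure ℝ) := by
  rw [← integrableOn_univ, ← Set.Iio_union_Ici (a := (0:ℝ))]
  refine IntegrableOn.union ?_ hφint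
  have : Set.EqOn φ (fun _ => (0:ℝ)) (Set.Iio 0) := fun x hx => hφsupp x hx
  exact (integrableOn_congr_fun this measurableSet_Iio).2 (integrableOn_zero)

include hφsupp hφint in
lemma phi_integral_eq : ∫ t, φ t = ∫ t in Set.Ici (0:ℝ), φ t := by
  rw [← setIntegral_univ, ← Set.Iio_union_Ici (a := (0:ℝ)),
    setIntegral_union (Set.Iio_disjoint_Ici le_rfl) measurableSet_Ici
      ((phi_integrable hφsupp hφint).integrableOn) ((phi_integrable hφsupp hφint).integrableOn)]
  have h0 : ∫ x in Set.Iio (0:ℝ), φ x = 0 :=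
    setIntegral_eq_zero_of_forall_eq_zero (fun x hx => hφsupp x hx)
  rw [h0, zero_add]

include hφpos hφsupp hφint in
lemma lintegral_G : ∫⁻ t, ENNReal.ofReal (φ t) = ENNReal.ofReal (∫ t in Set.Ici (0:ℝ), φ t) := by
  rw [← phi_integral_eq hφsupp hφint,
    ofReal_integral_eq_lintegral_ofReal (phi_integrable hφsupp hφint)
      (Eventually.of_forall hφpos)]
end S

section S
variable {φ : ℝ → ℝ}
  (hφpos : ∀ t : ℝ, 0 ≤ φ t)
  (hφmeas : Measurable φ)

include hφpos hφmeas in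
lemma conv_total {h : ℝ → ℝ≥0∞} (hh : Measurable h) :
    ∫⁻ t, ∫⁻ s, ENNReal.ofReal (φ (t - s)) * h s
      = (∫⁻ u, ENNReal.ofReal (φ u)) * ∫⁻ s, h s := by
  rw [lintegral_lintegral_swap]
  · have : ∀ s : ℝ, ∫⁻ t, ENNReal.ofReal (φ (t - s)) * h s
        = (∫⁻ u, ENNReal.ofReal (φ u)) * h s := by
      intro s
      have hm : Measurable fun t : ℝ => ENNReal.ofReal (φ (t - s)) := by fun_prop
      rw [lintegral_mul_const _ hm,
        lintegral_sub_right_eq_self (fun u => ENNReal.ofReal (φ u)) s]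
    simp_rw [this]
    rw [lintegral_const_mul _ hh]
  · exact (((hφmeas.comp (measurable_fst.sub measurable_snd)).ennreal_ofReal).mul
      (hh.comp measurable_snd)).aemeasurable

include hφpos hφmeas in
lemma conv_step {c cnext : ℝ → ℝ}
    (hc : Measurable c) (hcpos : ∀ s, 0 ≤ c s)
    (hrep : ∀ t, cnext t = ∫ s, φ (t - s) * c s)
    (hfin : ∫⁻ s, ENNReal.ofReal (c s) ≠ ∞)
    (hαfin : (∫⁻ u, ENNReal.ofReal (φ u)) ≠ ∞) :
    (∀ᵐ t, ENNReal.ofReal (cnext t) = ∫⁻ s, ENNReal.ofReal (φ (t - s)) * ENNReal.ofReal (c s))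
    ∧ ∫⁻ t, ENNReal.ofReal (cnext t)
        = (∫⁻ u, ENNReal.ofReal (φ u)) * ∫⁻ s, ENNReal.ofReal (c s) := by
  set I : ℝ → ℝ≥0∞ := fun t => ∫⁻ s, ENNReal.ofReal (φ (t - s)) * ENNReal.ofReal (c s) with hI
  have hImeas : Measurable I := by
    apply Measurable.lintegral_prod_right'
      (f := fun p : ℝ × ℝ => ENNReal.ofReal (φ (p.1 - p.2)) * ENNReal.ofReal (c p.2))
    exact ((hφmeas.comp (measurable_fst.sub measurable_snd)).ennreal_ofReal).mul
      ((hc.comp measurable_snd).ennreal_ofReal)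
  have hItot : ∫⁻ t, I t = (∫⁻ u, ENNReal.ofReal (φ u)) * ∫⁻ s, ENNReal.ofReal (c s) :=
    conv_total hφpos hφmeas (hc.ennreal_ofReal)
  have hIfin : ∀ᵐ t, I t < ∞ := by
    apply ae_lt_top hImeas
    rw [hItot]
    exact ENNReal.mul_ne_top hαfin hfin
  have hae : ∀ᵐ t, ENNReal.ofReal (cnext t) = I t := by
    filter_upwards [hIfin] with t htI
    have hmeasInt : Measurable fun s => φ (t - s) * c s :=
      (hφmeas.comp (measurable_const.sub measurable_id)).mul hc
    have hofReal : ∀ s, ENNReal.ofReal (φ (t - s) * c s)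
        = ENNReal.ofReal (φ (t - s)) * ENNReal.ofReal (c s) := fun s =>
      ENNReal.ofReal_mul (hφpos _)
    have hIntg : Integrable (fun s => φ (t - s) * c s) := by
      refine ⟨hmeasInt.aestronglyMeasurable, ?_⟩
      show (∫⁻ s, (‖φ (t - s) * c s‖₊ : ℝ≥0∞)) < ∞
      calc ∫⁻ s, (‖φ (t - s) * c s‖₊ : ℝ≥0∞)
          = ∫⁻ s, ENNReal.ofReal (φ (t - s) * c s) := by
            refine lintegral_congr fun s => ?_
            exact Real.enorm_eq_ofReal (mul_nonneg (hφpos _) (hcpos _))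
        _ = I t := by simp_rw [hI, hofReal]
        _ < ∞ := htI
    rw [hrep t, ofReal_integral_eq_lintegral_ofReal hIntg
      (Eventually.of_forall fun s => mul_nonneg (hφpos _) (hcpos _))]
    simp_rw [hI, hofReal]
  refine ⟨hae, ?_⟩
  rw [lintegral_congr_ae hae, hItot]

end S

section S2
variable {φ : ℝ → ℝ}
  (hφpos : ∀ t : ℝ, 0 ≤ φ t)
  (hφsupp : ∀ t : ℝ, t < 0 → φ t = 0)
  (hφmeas : Measurable φ)
  (hφint : IntegrableOn φ (Set.Ici (0:ℝ)))

include hφpos hφsupp hφmeas hφint in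
lemma alpha_fin : (∫⁻ u, ENNReal.ofReal (φ u)) ≠ ∞ := by
  rw [lintegral_G hφpos hφsupp hφint]
  exact ENNReal.ofReal_ne_top

include hφpos hφsupp hφmeas hφint in
lemma convPow_lint : ∀ k : ℕ, ∫⁻ t, ENNReal.ofReal (convPow φ k t)
    = (∫⁻ u, ENNReal.ofReal (φ u)) ^ (k + 1) := by
  intro k
  induction k with
  | zero => rw [pow_one]; rfl
  | succ k ih =>
    rw [(conv_step hφpos hφmeas (convPow_measurable hφsupp hφmeas k)
      (convPow_nonneg hφpos hφsupp k) (convPow_succ_eq hφsupp k)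
      (ih ▸ ENNReal.pow_ne_top (alpha_fin hφpos hφsupp hφmeas hφint))
      (alpha_fin hφpos hφsupp hφmeas hφint)).2, ih]
    rw [mul_comm]; ring

include hφpos hφsupp hφmeas hφint in
lemma convPow_succ_ae (k : ℕ) : ∀ᵐ t, ENNReal.ofReal (convPow φ (k + 1) t)
    = ∫⁻ s, ENNReal.ofReal (φ (t - s)) * ENNReal.ofReal (convPow φ k s) :=
  (conv_step hφpos hφmeas (convPow_measurable hφsupp hφmeas k)
    (convPow_nonneg hφpos hφsupp k) (convPow_succ_eq hφsupp k)
    ((convPow_lint hφpos hφsupp hφmeas hφint k) ▸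
      ENNReal.pow_ne_top (alpha_fin hφpos hφsupp hφmeas hφint))
    (alpha_fin hφpos hφsupp hφmeas hφint)).1

include hφsupp hφmeas in
lemma F_meas : Measurable (fun t => ∑' k : ℕ, ENNReal.ofReal (convPow φ k t)) :=
  Measurable.ennreal_tsum (fun k => (convPow_measurable hφsupp hφmeas k).ennreal_ofReal)

include hφsupp in
lemma F_zero_neg {t : ℝ} (ht : t < 0) :
    (∑' k : ℕ, ENNReal.ofReal (convPow φ k t)) = 0 := by
  have : ∀ k : ℕ, ENNReal.ofReal (convPow φ k t) = 0 := by
    intro k; rw [convPow_neg hφsupp k t ht]; simp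
  simp [this]

include hφsupp hφmeas in
lemma F_lint_set (S : Set ℝ) :
    ∫⁻ t in S, (∑' k : ℕ, ENNReal.ofReal (convPow φ k t))
      = ∑' k : ℕ, ∫⁻ t in S, ENNReal.ofReal (convPow φ k t) :=
  lintegral_tsum fun k => ((convPow_measurable hφsupp hφmeas k).ennreal_ofReal).aemeasurable

include hφpos hφsupp hφmeas hφint in
lemma F_tot : ∫⁻ t, (∑' k : ℕ, ENNReal.ofReal (convPow φ k t))
    = (∫⁻ u, ENNReal.ofReal (φ u)) * (1 - ∫⁻ u, ENNReal.ofReal (φ u))⁻¹ := by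
  rw [lintegral_tsum fun k => ((convPow_measurable hφsupp hφmeas k).ennreal_ofReal).aemeasurable]
  simp_rw [convPow_lint hφpos hφsupp hφmeas hφint]
  exact ENNReal.tsum_geometric_add_one _

include hφpos hφsupp hφmeas hφint in
lemma F_renewal : ∀ᵐ t, (∑' k : ℕ, ENNReal.ofReal (convPow φ k t))
    = ENNReal.ofReal (φ t)
      + ∫⁻ s, ENNReal.ofReal (φ (t - s)) * (∑' k : ℕ, ENNReal.ofReal (convPow φ k s)) := by
  filter_upwards [ae_all_iff.2 (convPow_succ_ae hφpos hφsupp hφmeas hφint)] with t ht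
  rw [tsum_eq_zero_add' ENNReal.summable]
  congr 1
  calc ∑' k : ℕ, ENNReal.ofReal (convPow φ (k + 1) t)
      = ∑' k : ℕ, ∫⁻ s, ENNReal.ofReal (φ (t - s)) * ENNReal.ofReal (convPow φ k s) :=
        tsum_congr ht
    _ = ∫⁻ s, ∑' k : ℕ, ENNReal.ofReal (φ (t - s)) * ENNReal.ofReal (convPow φ k s) := by
        rw [lintegral_tsum]
        intro k
        exact (((hφmeas.comp (measurable_const.sub measurable_id)).ennreal_ofReal).mul
          ((convPow_measurable hφsupp hφmeas k).ennreal_ofReal)).aemeasurable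
    _ = ∫⁻ s, ENNReal.ofReal (φ (t - s)) * (∑' k : ℕ, ENNReal.ofReal (convPow φ k s)) := by
        refine lintegral_congr fun s => ?_
        rw [ENNReal.tsum_mul_left]

lemma psi_eq_toReal {ψ : ℝ → ℝ} (hφpos : ∀ t : ℝ, 0 ≤ φ t)
    (hφsupp : ∀ t : ℝ, t < 0 → φ t = 0)
    (hψ : ∀ t : ℝ, ψ t = ∑' k : ℕ, convPow φ k t) (t : ℝ) :
    ψ t = (∑' k : ℕ, ENNReal.ofReal (convPow φ k t)).toReal := by
  rw [hψ t, ENNReal.tsum_toReal_eq (fun k => ENNReal.ofReal_ne_top)]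
  exact tsum_congr fun k =>
    (ENNReal.toReal_ofReal (convPow_nonneg hφpos hφsupp k t)).symm
end S2


/-- closed form for the propagator kernel
`ζ(t) = κv(1 + ∫_t^∞ ψ − ∫_t^∞ ∫₀^t ψ(u−s)φ(s) ds du)` implied by a Hawkes order
flow with kernel `φ`, `‖φ‖₁ < 1`:
`ζ(t) = (κv/(1−‖φ‖₁))((1−‖φ‖₁) + ∫_t^∞ φ) = ζ(0)(1 − ∫₀^t φ)`. -/
theorem propagator_kernel_closed_form
    (φ : ℝ → ℝ) (κ v : ℝ) (hκ : 0 < κ) (hv : 0 < v)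
    (hφpos : ∀ t : ℝ, 0 ≤ φ t)
    (hφsupp : ∀ t : ℝ, t < 0 → φ t = 0)
    (hφmeas : Measurable φ)
    (hφint : IntegrableOn φ (Set.Ici (0:ℝ)))
    (hφnorm : ∫ t in Set.Ici (0:ℝ), φ t < 1)
    (ψ : ℝ → ℝ)
    (hψ : ∀ t : ℝ, ψ t = ∑' k : ℕ, convPow φ k t)
    (ζ : ℝ → ℝ)
    (hζ : ∀ t : ℝ, ζ t = κ * v *
      (1 + (∫ u in Set.Ici t, ψ u)
        - ∫ u in Set.Ici t, ∫ s in (0:ℝ)..t, ψ (u - s) * φ s)) :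
    ∀ t : ℝ, 0 ≤ t →
      ζ t = κ * v / (1 - ∫ s in Set.Ici (0:ℝ), φ s) *
              ((1 - ∫ s in Set.Ici (0:ℝ), φ s) + ∫ s in Set.Ici t, φ s) ∧
      ζ t = ζ 0 * (1 - ∫ s in (0:ℝ)..t, φ s) := by
  -- notation
  set G : ℝ → ENNReal := fun u => ENNReal.ofReal (φ u) with hG
  set F : ℝ → ENNReal := fun u => ∑' k : ℕ, ENNReal.ofReal (convPow φ k u) with hF
  set a : ℝ := ∫ s in Set.Ici (0:ℝ), φ s with ha
  have ha0 : 0 ≤ a := setIntegral_nonneg measurableSet_Ici (fun x _ => hφpos x)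
  have ha1 : a < 1 := hφnorm
  have h1a : (0:ℝ) < 1 - a := by linarith
  set α : ENNReal := ∫⁻ u, G u with hα
  have hαa : α = ENNReal.ofReal a := lintegral_G hφpos hφsupp hφint
  have hα1 : α < 1 := by rw [hαa]; exact ENNReal.ofReal_lt_one.2 ha1
  have hαfin : α ≠ ∞ := by rw [hαa]; exact ENNReal.ofReal_ne_top
  set M : ENNReal := α * (1 - α)⁻¹ with hM
  have h1α : (1 - α) ≠ 0 := (tsub_pos_iff_lt.2 hα1).ne'
  have hMfin : M ≠ ∞ := ENNReal.mul_ne_top hαfin (ENNReal.inv_ne_top.2 h1α)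
  have hFmeas : Measurable F := F_meas hφsupp hφmeas
  have hGmeas : Measurable G := hφmeas.ennreal_ofReal
  have hFtot : ∫⁻ u, F u = M := F_tot hφpos hφsupp hφmeas hφint
  have hFfin_ae : ∀ᵐ u, F u < ∞ := ae_lt_top hFmeas (hFtot ▸ hMfin)
  have hψF : ∀ u, ψ u = (F u).toReal := psi_eq_toReal hφpos hφsupp hψ
  have hψmeas : Measurable ψ := by
    have : ψ = fun u => (F u).toReal := funext hψF
    rw [this]; exact hFmeas.ennreal_toReal
  have hψnonneg : ∀ u, 0 ≤ ψ u := fun u => (hψF u) ▸ ENNReal.toReal_nonneg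
  have hNnull : (volume : Measure ℝ) {w : ℝ | F w = ∞} = 0 := by
    have := hFfin_ae
    rw [ae_iff] at this
    simpa [lt_top_iff_ne_top] using this
  have hm : M.toReal = a / (1 - a) := by
    rw [hM, hαa, ENNReal.toReal_mul, ENNReal.toReal_ofReal ha0, ENNReal.toReal_inv]
    have : (1 : ENNReal) - ENNReal.ofReal a = ENNReal.ofReal (1 - a) := by
      rw [ENNReal.ofReal_sub 1 ha0, ENNReal.ofReal_one]
    rw [this, ENNReal.toReal_ofReal h1a.le, div_eq_mul_inv]
  -- the key closed form
  have key : ∀ t : ℝ, 0 ≤ t →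
      ζ t = κ * v / (1 - a) * ((1 - a) + ∫ s in Set.Ici t, φ s) := by
    intro t ht
    set β : ENNReal := ∫⁻ u in Set.Ici t, G u with hβ
    have hβfin : β ≠ ∞ := ne_top_of_le_ne_top hαfin (setLIntegral_le_lintegral _ _)
    have hbβ : ∫ s in Set.Ici t, φ s = β.toReal := by
      have hint : Integrable φ (volume.restrict (Set.Ici t)) :=
        (phi_integrable hφsupp hφint).integrableOn
      have h1 : ENNReal.ofReal (∫ s in Set.Ici t, φ s) = β :=
        ofReal_integral_eq_lintegral_ofReal hint (Eventually.of_forall hφpos)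
      rw [← h1, ENNReal.toReal_ofReal (setIntegral_nonneg measurableSet_Ici fun x _ => hφpos x)]
    set TF : ENNReal := ∫⁻ u in Set.Ici t, F u with hTF
    have hTFfin : TF ≠ ∞ := ne_top_of_le_ne_top (hFtot ▸ hMfin) (setLIntegral_le_lintegral _ _)
    have hA : ∫ u in Set.Ici t, ψ u = TF.toReal := by
      rw [funext hψF]
      exact integral_toReal hFmeas.aemeasurable.restrict (ae_restrict_of_ae hFfin_ae)
    set H : ℝ → ENNReal := fun u => ∫⁻ s in Set.Ioc 0 t, F (u - s) * G s with hH
    set R : ℝ → ENNReal := fun u => ∫⁻ s in Set.Ioi t, F (u - s) * G s with hR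
    have hprodmeas : ∀ S : Set ℝ, MeasurableSet S →
        Measurable (fun u => ∫⁻ s in S, F (u - s) * G s) := by
      intro S hS
      have heq : (fun u => ∫⁻ s in S, F (u - s) * G s)
          = fun u => ∫⁻ s, S.indicator (fun _ => (1:ENNReal)) s * (F (u - s) * G s) := by
        funext u
        rw [← lintegral_indicator hS]
        refine lintegral_congr fun s => ?_
        by_cases hs : s ∈ S
        · rw [Set.indicator_of_mem hs, Set.indicator_of_mem hs, one_mul]
        · rw [Set.indicator_of_notMem hs, Set.indicator_of_notMem hs, zero_mul]
      rw [heq]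
      apply Measurable.lintegral_prod_right'
        (f := fun p : ℝ × ℝ => S.indicator (fun _ => (1:ENNReal)) p.2 * (F (p.1 - p.2) * G p.2))
      exact ((measurable_const.indicator hS).comp measurable_snd).mul
        ((hFmeas.comp (measurable_fst.sub measurable_snd)).mul (hGmeas.comp measurable_snd))
    have hHmeas : Measurable H := hprodmeas _ measurableSet_Ioc
    have hRmeas : Measurable R := hprodmeas _ measurableSet_Ioi
    have hcomm : ∀ u : ℝ, (∫⁻ s, G (u - s) * F s) = ∫⁻ s, F (u - s) * G s := by
      intro u
      have hW : Measurable fun s => F (u - s) * G s :=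
        (hFmeas.comp (measurable_const.sub measurable_id)).mul hGmeas
      calc (∫⁻ s, G (u - s) * F s) = ∫⁻ s, (fun w => F (u - w) * G w) (u - s) := by
            refine lintegral_congr fun s => ?_
            simp only [_root_.sub_sub_cancel]
            ring
        _ = ∫⁻ s, F (u - s) * G s :=
            (Measure.measurePreserving_sub_left volume u).lintegral_comp hW
    have hzero_Iic : ∀ u : ℝ, (∫⁻ s in Set.Iic (0:ℝ), F (u - s) * G s) = 0 := by
      intro u
      have hae : ∀ᵐ s : ℝ, s ∈ Set.Iic (0:ℝ) → F (u - s) * G s = 0 := by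
        have hne : ∀ᵐ s : ℝ, s ≠ 0 := by
          have h0 : (volume : Measure ℝ) {(0:ℝ)} = 0 := measure_singleton 0
          exact ae_iff.2 (by simpa using h0)
        filter_upwards [hne] with s hs hmem
        have hz : φ s = 0 := hφsupp s (lt_of_le_of_ne hmem hs)
        have : G s = 0 := by rw [hG]; simp [hz]
        rw [this, mul_zero]
      rw [setLIntegral_congr_fun_ae measurableSet_Iic hae, lintegral_zero]
    have hsplitinner : ∀ u : ℝ, (∫⁻ s, F (u - s) * G s) = H u + R u := by
      intro u
      rw [← setLIntegral_univ (fun s => F (u - s) * G s), ← Set.Iic_union_Ioi (a := (0:ℝ)),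
        lintegral_union measurableSet_Ioi (Set.Iic_disjoint_Ioi le_rfl), hzero_Iic u, zero_add,
        ← Set.Ioc_union_Ioi_eq_Ioi ht,
        lintegral_union measurableSet_Ioi (Set.Ioc_disjoint_Ioi le_rfl)]
    have hren : ∀ᵐ u : ℝ, F u = G u + ∫⁻ s, G (u - s) * F s :=
      F_renewal hφpos hφsupp hφmeas hφint
    have hTFeq : TF = β + ((∫⁻ u in Set.Ici t, H u) + ∫⁻ u in Set.Ici t, R u) := by
      have h1 : ∀ᵐ u ∂(volume.restrict (Set.Ici t)), F u = G u + (H u + R u) := by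
        refine ae_restrict_of_ae ?_
        filter_upwards [hren] with u hu
        rw [hu, hcomm u, hsplitinner u]
      calc TF = ∫⁻ u in Set.Ici t, (G u + (H u + R u)) := lintegral_congr_ae h1
        _ = β + ((∫⁻ u in Set.Ici t, H u) + ∫⁻ u in Set.Ici t, R u) := by
            rw [lintegral_add_left hGmeas, lintegral_add_left hHmeas]
    have hRtot : (∫⁻ u in Set.Ici t, R u) = M * β := by
      have hswap : (∫⁻ u in Set.Ici t, R u)
          = ∫⁻ s in Set.Ioi t, ∫⁻ u in Set.Ici t, F (u - s) * G s :=
        lintegral_lintegral_swap (f := fun u s => F (u - s) * G s)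
          (((hFmeas.comp (measurable_fst.sub measurable_snd)).mul
            (hGmeas.comp measurable_snd)).aemeasurable)
      rw [hswap]
      have hin : ∀ᵐ s ∂(volume.restrict (Set.Ioi t)),
          (∫⁻ u in Set.Ici t, F (u - s) * G s) = M * G s := by
        refine (ae_restrict_iff' measurableSet_Ioi).2 (Eventually.of_forall fun s hs => ?_)
        have hmF : Measurable fun u : ℝ => F (u - s) :=
          hFmeas.comp (measurable_id.sub measurable_const)
        rw [lintegral_mul_const _ hmF]
        have h2 : (∫⁻ u in Set.Ici t, F (u - s)) = ∫⁻ w in Set.Ici (t - s), F w := by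
          rw [← lintegral_indicator measurableSet_Ici, ← lintegral_indicator measurableSet_Ici]
          have hpt : ∀ u : ℝ, (Set.Ici t).indicator (fun u => F (u - s)) u
              = (Set.Ici (t - s)).indicator F (u - s) := by
            intro u
            by_cases hu : t ≤ u
            · rw [Set.indicator_of_mem (Set.mem_Ici.2 hu),
                Set.indicator_of_mem (Set.mem_Ici.2 (sub_le_sub_right hu s))]
            · rw [Set.indicator_of_notMem (fun hc => hu (Set.mem_Ici.1 hc)),
                Set.indicator_of_notMem
                  (fun hc => hu ((sub_le_sub_iff_right s).1 (Set.mem_Ici.1 hc)))]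
          simp_rw [hpt]
          exact lintegral_sub_right_eq_self ((Set.Ici (t - s)).indicator F) s
        have h3 : (∫⁻ w in Set.Ici (t - s), F w) = M := by
          have hz : (∫⁻ w in Set.Iio (t - s), F w) = 0 := by
            have hzz : ∀ᵐ w : ℝ, w ∈ Set.Iio (t - s) → F w = 0 :=
              Eventually.of_forall fun w hw =>
                F_zero_neg hφsupp (lt_trans hw (sub_neg.2 hs))
            rw [setLIntegral_congr_fun_ae measurableSet_Iio hzz, lintegral_zero]
          have huniv : (∫⁻ w, F w)
              = (∫⁻ w in Set.Iio (t - s), F w) + ∫⁻ w in Set.Ici (t - s), F w := by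
            rw [← lintegral_union measurableSet_Ici (Set.Iio_disjoint_Ici le_rfl),
              Set.Iio_union_Ici, setLIntegral_univ]
          rw [← hFtot, huniv, hz, zero_add]
        rw [h2, h3, mul_comm]
      rw [lintegral_congr_ae hin, lintegral_const_mul M hGmeas]
      congr 1
      exact setLIntegral_congr Ioi_ae_eq_Ici
    have hTHIfin : (∫⁻ u in Set.Ici t, H u) ≠ ∞ := by
      intro hc
      apply hTFfin
      rw [hTFeq, hc]
      simp
    have hHfin_ae : ∀ᵐ u ∂(volume.restrict (Set.Ici t)), H u < ∞ := ae_lt_top hHmeas hTHIfin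
    have hBae : ∀ᵐ u ∂(volume.restrict (Set.Ici t)),
        (∫ s in (0:ℝ)..t, ψ (u - s) * φ s) = (H u).toReal := by
      filter_upwards [hHfin_ae] with u hu
      rw [intervalIntegral.integral_of_le ht]
      have hae_s : ∀ᵐ s : ℝ, F (u - s) ≠ ∞ := by
        have hpre := (Measure.measurePreserving_sub_left volume
          u).quasiMeasurePreserving.preimage_null hNnull
        rw [ae_iff]
        simpa using hpre
      have hofReal : ∀ᵐ s ∂(volume.restrict (Set.Ioc 0 t)),
          ENNReal.ofReal (ψ (u - s) * φ s) = F (u - s) * G s := by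
        refine ae_restrict_of_ae ?_
        filter_upwards [hae_s] with s hs
        rw [ENNReal.ofReal_mul (hψnonneg _), hψF (u - s), ENNReal.ofReal_toReal hs]
      have hintS : Integrable (fun s => ψ (u - s) * φ s) (volume.restrict (Set.Ioc 0 t)) := by
        refine ⟨((hψmeas.comp (measurable_const.sub measurable_id)).mul
          hφmeas).aestronglyMeasurable, ?_⟩
        show (∫⁻ s in Set.Ioc 0 t, (‖ψ (u - s) * φ s‖₊ : ENNReal)) < ∞
        have hcong : ∀ᵐ s ∂(volume.restrict (Set.Ioc 0 t)),
            (‖ψ (u - s) * φ s‖₊ : ENNReal) = F (u - s) * G s := by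
          filter_upwards [hofReal] with s hs
          rw [← hs]; exact Real.enorm_eq_ofReal (mul_nonneg (hψnonneg _) (hφpos _))
        rw [lintegral_congr_ae hcong]
        exact hu
      have hkey : ENNReal.ofReal (∫ s in Set.Ioc 0 t, ψ (u - s) * φ s) = H u := by
        rw [ofReal_integral_eq_lintegral_ofReal hintS
          (Eventually.of_forall fun s => mul_nonneg (hψnonneg _) (hφpos _)),
          lintegral_congr_ae hofReal]
      rw [← hkey, ENNReal.toReal_ofReal
        (setIntegral_nonneg measurableSet_Ioc fun s _ => mul_nonneg (hψnonneg _) (hφpos _))]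
    have hB : (∫ u in Set.Ici t, ∫ s in (0:ℝ)..t, ψ (u - s) * φ s)
        = (∫⁻ u in Set.Ici t, H u).toReal := by
      rw [integral_congr_ae hBae]
      exact integral_toReal hHmeas.aemeasurable.restrict hHfin_ae
    have hTFtoReal : TF.toReal
        = β.toReal + ((∫⁻ u in Set.Ici t, H u).toReal + M.toReal * β.toReal) := by
      rw [hTFeq, hRtot, ENNReal.toReal_add hβfin
        (ENNReal.add_ne_top.2 ⟨hTHIfin, ENNReal.mul_ne_top hMfin hβfin⟩),
        ENNReal.toReal_add hTHIfin (ENNReal.mul_ne_top hMfin hβfin), ENNReal.toReal_mul]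
    have hfin : κ * v * (1 + TF.toReal - (∫⁻ u in Set.Ici t, H u).toReal)
        = κ * v / (1 - a) * ((1 - a) + β.toReal) := by
      rw [hTFtoReal, hm]
      field_simp
      ring
    rw [hζ t, hA, hB, hbβ]
    exact hfin
  intro t ht
  refine ⟨key t ht, ?_⟩
  have hζ0 : ζ 0 = κ * v / (1 - a) := by
    rw [key 0 le_rfl, ← ha]
    ring
  have hsplit : a = (∫ s in (0:ℝ)..t, φ s) + ∫ s in Set.Ici t, φ s := by
    rw [intervalIntegral.integral_of_le ht, ha, integral_Ici_eq_integral_Ioi,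
      ← Set.Ioc_union_Ioi_eq_Ioi ht,
      setIntegral_union (Set.Ioc_disjoint_Ioi le_rfl) measurableSet_Ioi
        ((phi_integrable hφsupp hφint).integrableOn)
        ((phi_integrable hφsupp hφint).integrableOn),
      integral_Ici_eq_integral_Ioi]
  rw [key t ht, hζ0]
  have : (1 : ℝ) - ∫ s in (0:ℝ)..t, φ s = (1 - a) + ∫ s in Set.Ici t, φ s := by
    rw [hsplit]; ring
  rw [this]
end

section
/- Let φ : [0,∞) → [0,∞) be continuous and integrable with ‖φ‖₁ := ∫₀^∞ φ < 1, let ψ := Σ_{k=1}^∞ φ^{*k}, and let κ, v > 0. Define ζ(t) := κ v (1 + ∫_t^∞ ψ(u) du − ∫_t^∞ ∫₀^t ψ(u−s) φ(s) ds du). Then ζ is differentiable on (0,∞) and ζ′(t) = −κ v (1 + ‖ψ‖₁) φ(t) = −ζ(0) φ(t) for every t > 0, where ‖ψ‖₁ = ∫₀^∞ ψ. -/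
open MeasureTheory Filter

namespace PropAux

variable {f g : ℝ → ℝ}

lemma cc_eq_setIoc (hg : ∀ t : ℝ, t < 0 → g t = 0) (t : ℝ) :
    causalConv f g t = ∫ s in Set.Ioc 0 t, f (t - s) * g s := by
  rcases le_or_gt t 0 with ht | ht
  · have h2 : Set.Ioc (0:ℝ) t = ∅ := Set.Ioc_eq_empty (by linarith)
    have h1 : causalConv f g t = -∫ s in t..0, f (t - s) * g s := by
      rw [causalConv, intervalIntegral.integral_symm]
    rw [h1, intervalIntegral.integral_of_le ht, integral_Ioc_eq_integral_Ioo, h2]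
    rw [setIntegral_congr_fun measurableSet_Ioo (g := fun _ => (0:ℝ))]
    · simp
    · intro s hs
      simp [hg s hs.2]
  · rw [causalConv, intervalIntegral.integral_of_le ht.le]

lemma cc_zero_of_nonpos (hg : ∀ t : ℝ, t < 0 → g t = 0) {t : ℝ} (ht : t ≤ 0) :
    causalConv f g t = 0 := by
  rw [cc_eq_setIoc hg, Set.Ioc_eq_empty (by linarith)]
  simp

lemma cc_eq_indicator (hg : ∀ t : ℝ, t < 0 → g t = 0) (t : ℝ) :
    causalConv f g t = ∫ s, (Set.Ioc 0 t).indicator (fun s => f (t - s) * g s) s := by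
  rw [cc_eq_setIoc hg, integral_indicator measurableSet_Ioc]

lemma cc_measurable (hf : Measurable f) (hg : Measurable g)
    (hgs : ∀ t : ℝ, t < 0 → g t = 0) : Measurable (causalConv f g) := by
  have key : causalConv f g =
      fun t => ∫ s, ({q : ℝ × ℝ | 0 < q.2 ∧ q.2 ≤ q.1}.indicator
        (fun q => f (q.1 - q.2) * g q.2)) (t, s) := by
    funext t
    rw [cc_eq_indicator hgs]
    refine integral_congr_ae (Eventually.of_forall fun s => ?_)
    simp only [Set.indicator_apply, Set.mem_Ioc, Set.mem_setOf_eq]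
  rw [key]
  have hS : MeasurableSet {q : ℝ × ℝ | 0 < q.2 ∧ q.2 ≤ q.1} :=
    (measurableSet_lt measurable_const measurable_snd).inter
      (measurableSet_le measurable_snd measurable_fst)
  have hm : Measurable fun q : ℝ × ℝ => f (q.1 - q.2) * g q.2 :=
    (hf.comp (measurable_fst.sub measurable_snd)).mul (hg.comp measurable_snd)
  exact (((hm.indicator hS).stronglyMeasurable).integral_prod_right').measurable

lemma cc_nonneg (hf : ∀ t, 0 ≤ f t) (hg : ∀ t, 0 ≤ g t)
    (hgs : ∀ t : ℝ, t < 0 → g t = 0) (t : ℝ) : 0 ≤ causalConv f g t := by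
  rcases le_or_gt t 0 with ht | ht
  · rw [cc_zero_of_nonpos hgs ht]
  · exact intervalIntegral.integral_nonneg ht.le fun s _ => mul_nonneg (hf _) (hg _)

lemma cc_eq_integral (hfs : ∀ t : ℝ, t < 0 → f t = 0) (hgs : ∀ t : ℝ, t < 0 → g t = 0)
    (t : ℝ) : causalConv f g t = ∫ s, f (t - s) * g s := by
  rw [cc_eq_setIoc hgs, setIntegral_congr_set (μ := volume) Ioc_ae_eq_Icc]
  have key : ∀ s, f (t - s) * g s =
      (Set.Icc 0 t).indicator (fun s => f (t - s) * g s) s := by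
    intro s
    by_cases hs : s ∈ Set.Icc 0 t
    · rw [Set.indicator_of_mem hs]
    · rw [Set.indicator_of_notMem hs]
      rcases lt_or_ge s 0 with h | h
      · rw [hgs s h, mul_zero]
      · have h2 : t < s := by
          by_contra h3
          exact hs ⟨h, le_of_not_gt h3⟩
        rw [hfs (t - s) (by linarith), zero_mul]
  have h2 : ∫ s, f (t - s) * g s =
      ∫ s, (Set.Icc 0 t).indicator (fun s => f (t - s) * g s) s :=
    integral_congr_ae (Eventually.of_forall fun s => key s)
  rw [h2, integral_indicator measurableSet_Icc]

lemma cc_eq_conv (hfs : ∀ t : ℝ, t < 0 → f t = 0) (hgs : ∀ t : ℝ, t < 0 → g t = 0) :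
    causalConv f g = MeasureTheory.convolution g f (ContinuousLinearMap.mul ℝ ℝ) volume := by
  funext t
  rw [cc_eq_integral hfs hgs, MeasureTheory.convolution_def]
  simp only [ContinuousLinearMap.mul_apply']
  exact integral_congr_ae (Eventually.of_forall fun s => mul_comm _ _)

lemma cc_integrable (hfs : ∀ t : ℝ, t < 0 → f t = 0) (hgs : ∀ t : ℝ, t < 0 → g t = 0)
    (hfi : Integrable f) (hgi : Integrable g) : Integrable (causalConv f g) := by
  rw [cc_eq_conv hfs hgs]
  exact hgi.integrable_convolution (ContinuousLinearMap.mul ℝ ℝ) hfi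

lemma cc_integral (hfs : ∀ t : ℝ, t < 0 → f t = 0) (hgs : ∀ t : ℝ, t < 0 → g t = 0)
    (hfi : Integrable f) (hgi : Integrable g) :
    ∫ t, causalConv f g t = (∫ t, f t) * ∫ t, g t := by
  rw [cc_eq_conv hfs hgs]
  rw [integral_convolution (ContinuousLinearMap.mul ℝ ℝ) hgi hfi]
  simp [mul_comm]

end PropAux


namespace PropAux

structure NiceFn (f : ℝ → ℝ) : Prop where
  meas : Measurable f
  nonneg : ∀ t, 0 ≤ f t
  supp : ∀ t : ℝ, t < 0 → f t = 0
  int : Integrable f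

variable {f g φ : ℝ → ℝ}

lemma NiceFn.cc (hf : NiceFn f) (hg : NiceFn g) : NiceFn (causalConv f g) where
  meas := cc_measurable hf.meas hg.meas hg.supp
  nonneg := cc_nonneg hf.nonneg hg.nonneg hg.supp
  supp := fun t ht => cc_zero_of_nonpos hg.supp ht.le
  int := cc_integrable hf.supp hg.supp hf.int hg.int

lemma convPow_nice (hφ : NiceFn φ) : ∀ k, NiceFn (convPow φ k)
  | 0 => hφ
  | k + 1 => hφ.cc (convPow_nice hφ k)

lemma convPow_integral (hφ : NiceFn φ) :
    ∀ k, (∫ t, convPow φ k t) = (∫ t, φ t) ^ (k + 1)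
  | 0 => by simp [convPow]
  | k + 1 => by
    have h := cc_integral hφ.supp (convPow_nice hφ k).supp hφ.int (convPow_nice hφ k).int
    rw [show convPow φ (k+1) = causalConv φ (convPow φ k) from rfl, h,
      convPow_integral hφ k]
    ring

lemma convPow_succ_eq (hφ : NiceFn φ) (k : ℕ) (u : ℝ) :
    convPow φ (k + 1) u = ∫ s in Set.Ioc 0 u, φ (u - s) * convPow φ k s :=
  cc_eq_setIoc (convPow_nice hφ k).supp u

lemma integrand_integrableOn (hφ : NiceFn φ) {u M : ℝ} (hu : 0 ≤ u)
    (hM : ∀ x ∈ Set.Icc 0 u, φ x ≤ M) (k : ℕ) :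
    IntegrableOn (fun s => φ (u - s) * convPow φ k s) (Set.Ioc 0 u) := by
  refine Integrable.mono' (((convPow_nice hφ k).int.integrableOn).const_mul M)
    ?_ ?_
  · exact ((hφ.meas.comp (measurable_const.sub measurable_id)).mul
      (convPow_nice hφ k).meas).aestronglyMeasurable
  · rw [ae_restrict_iff' measurableSet_Ioc]
    refine Eventually.of_forall fun s hs => ?_
    rw [Real.norm_of_nonneg (mul_nonneg (hφ.nonneg _) ((convPow_nice hφ k).nonneg _))]
    exact mul_le_mul_of_nonneg_right
      (hM _ ⟨by linarith [hs.2], by linarith [hs.1]⟩) ((convPow_nice hφ k).nonneg _)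

lemma integrand_int_le (hφ : NiceFn φ) {u M : ℝ} (hu : 0 ≤ u) (hM0 : 0 ≤ M)
    (hM : ∀ x ∈ Set.Icc 0 u, φ x ≤ M) (k : ℕ) :
    ∫ s in Set.Ioc 0 u, φ (u - s) * convPow φ k s ≤ M * (∫ t, φ t) ^ (k + 1) := by
  have h1 : ∫ s in Set.Ioc 0 u, φ (u - s) * convPow φ k s ≤
      ∫ s in Set.Ioc 0 u, M * convPow φ k s := by
    refine setIntegral_mono_on (integrand_integrableOn hφ hu hM k)
      (((convPow_nice hφ k).int.integrableOn).const_mul M) measurableSet_Ioc ?_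
    intro s hs
    exact mul_le_mul_of_nonneg_right
      (hM _ ⟨by linarith [hs.2], by linarith [hs.1]⟩) ((convPow_nice hφ k).nonneg _)
  have h2 : ∫ s in Set.Ioc 0 u, M * convPow φ k s
      = M * ∫ s in Set.Ioc 0 u, convPow φ k s := integral_const_mul M _
  have h3 : ∫ s in Set.Ioc 0 u, convPow φ k s ≤ ∫ t, convPow φ k t :=
    setIntegral_le_integral (convPow_nice hφ k).int
      (Eventually.of_forall (convPow_nice hφ k).nonneg)
  calc ∫ s in Set.Ioc 0 u, φ (u - s) * convPow φ k s
      ≤ M * ∫ s in Set.Ioc 0 u, convPow φ k s := by rw [← h2]; exact h1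
    _ ≤ M * ∫ t, convPow φ k t := mul_le_mul_of_nonneg_left h3 hM0
    _ = M * (∫ t, φ t) ^ (k + 1) := by rw [convPow_integral hφ k]

lemma convPow_succ_le (hφ : NiceFn φ) {u M : ℝ} (hu : 0 ≤ u) (hM0 : 0 ≤ M)
    (hM : ∀ x ∈ Set.Icc 0 u, φ x ≤ M) (k : ℕ) :
    convPow φ (k + 1) u ≤ M * (∫ t, φ t) ^ (k + 1) := by
  rw [convPow_succ_eq hφ]
  exact integrand_int_le hφ hu hM0 hM k

lemma exists_bound (hc : Continuous φ) (hφ : NiceFn φ) (u : ℝ) (hu : 0 ≤ u) :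
    ∃ M : ℝ, 0 ≤ M ∧ ∀ x ∈ Set.Icc 0 u, φ x ≤ M := by
  obtain ⟨M, hM⟩ := (isCompact_Icc (a := (0:ℝ)) (b := u)).exists_bound_of_continuousOn
    hc.continuousOn
  refine ⟨M, le_trans (norm_nonneg _) (hM 0 ⟨le_refl _, hu⟩), fun x hx => ?_⟩
  exact le_trans (le_abs_self _) (hM x hx)

lemma convPow_summable (hc : Continuous φ) (hφ : NiceFn φ)
    (hL1 : (∫ t, φ t) < 1) (u : ℝ) :
    Summable (fun k => convPow φ k u) := by
  rcases lt_or_ge u 0 with hu | hu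
  · refine (summable_zero).congr fun k => ?_
    rw [(convPow_nice hφ k).supp u hu]
  · obtain ⟨M, hM0, hM⟩ := exists_bound hc hφ u hu
    set L := ∫ t, φ t with hLdef
    have hL0 : 0 ≤ L := integral_nonneg hφ.nonneg
    have hs : Summable (fun k : ℕ => M * L ^ (k + 1)) := by
      have := (summable_geometric_of_lt_one hL0 hL1).mul_left (M * L)
      refine this.congr fun k => ?_
      rw [pow_succ']
      ring
    have h1 : Summable (fun k : ℕ => convPow φ (k + 1) u) :=
      hs.of_nonneg_of_le (fun k => (convPow_nice hφ _).nonneg u)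
        (fun k => convPow_succ_le hφ hu hM0 hM k)
    exact (summable_nat_add_iff 1).mp h1

end PropAux

namespace PropAux

section Psi

variable {φ ψ : ℝ → ℝ}

lemma psi_nonneg (hφ : NiceFn φ) (hψdef : ∀ t, ψ t = ∑' k, convPow φ k t) (t : ℝ) :
    0 ≤ ψ t := by
  rw [hψdef]
  exact tsum_nonneg fun k => (convPow_nice hφ k).nonneg t

lemma psi_supp (hφ : NiceFn φ) (hψdef : ∀ t, ψ t = ∑' k, convPow φ k t) :
    ∀ t : ℝ, t < 0 → ψ t = 0 := by
  intro t ht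
  rw [hψdef]
  rw [tsum_congr (fun k => (convPow_nice hφ k).supp t ht)]
  exact tsum_zero

lemma psi_eq_toReal (hc : Continuous φ) (hφ : NiceFn φ) (hL1 : (∫ t, φ t) < 1)
    (hψdef : ∀ t, ψ t = ∑' k, convPow φ k t) (t : ℝ) :
    ψ t = (∑' k, ENNReal.ofReal (convPow φ k t)).toReal := by
  rw [hψdef, ← ENNReal.ofReal_tsum_of_nonneg (fun k => (convPow_nice hφ k).nonneg t)
    (convPow_summable hc hφ hL1 t), ENNReal.toReal_ofReal
    (tsum_nonneg fun k => (convPow_nice hφ k).nonneg t)]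

lemma psi_meas (hc : Continuous φ) (hφ : NiceFn φ) (hL1 : (∫ t, φ t) < 1)
    (hψdef : ∀ t, ψ t = ∑' k, convPow φ k t) : Measurable ψ := by
  have : ψ = fun t => (∑' k, ENNReal.ofReal (convPow φ k t)).toReal := by
    funext t; exact psi_eq_toReal hc hφ hL1 hψdef t
  rw [this]
  exact ENNReal.measurable_toReal.comp
    (Measurable.ennreal_tsum fun k => (convPow_nice hφ k).meas.ennreal_ofReal)

lemma geom_summable (hφ : NiceFn φ) (hL1 : (∫ t, φ t) < 1) (c : ℝ) :
    Summable (fun k : ℕ => c * (∫ t, φ t) ^ (k + 1)) := by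
  have hL0 : 0 ≤ ∫ t, φ t := integral_nonneg hφ.nonneg
  have := (summable_geometric_of_lt_one hL0 hL1).mul_left (c * (∫ t, φ t))
  refine this.congr fun k => ?_
  rw [pow_succ']
  ring

lemma psi_integrable (hc : Continuous φ) (hφ : NiceFn φ) (hL1 : (∫ t, φ t) < 1)
    (hψdef : ∀ t, ψ t = ∑' k, convPow φ k t) : Integrable ψ := by
  set L := ∫ t, φ t with hLdef
  have hL0 : 0 ≤ L := integral_nonneg hφ.nonneg
  refine ⟨(psi_meas hc hφ hL1 hψdef).aestronglyMeasurable, ?_⟩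
  rw [hasFiniteIntegral_iff_ofReal (Eventually.of_forall (psi_nonneg hφ hψdef))]
  have h1 : ∀ t, ENNReal.ofReal (ψ t) = ∑' k, ENNReal.ofReal (convPow φ k t) := by
    intro t
    rw [hψdef, ENNReal.ofReal_tsum_of_nonneg (fun k => (convPow_nice hφ k).nonneg t)
      (convPow_summable hc hφ hL1 t)]
  calc ∫⁻ t, ENNReal.ofReal (ψ t)
      = ∫⁻ t, ∑' k, ENNReal.ofReal (convPow φ k t) := by
        exact lintegral_congr fun t => h1 t
    _ = ∑' k, ∫⁻ t, ENNReal.ofReal (convPow φ k t) :=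
        lintegral_tsum fun k => ((convPow_nice hφ k).meas.ennreal_ofReal).aemeasurable
    _ = ∑' k, ENNReal.ofReal (∫ t, convPow φ k t) := by
        refine tsum_congr fun k => ?_
        rw [ofReal_integral_eq_lintegral_ofReal (convPow_nice hφ k).int
          (Eventually.of_forall (convPow_nice hφ k).nonneg)]
    _ = ∑' k, ENNReal.ofReal (L ^ (k + 1)) := by
        refine tsum_congr fun k => ?_
        rw [convPow_integral hφ k]
    _ = ENNReal.ofReal (∑' k : ℕ, L ^ (k + 1)) := by
        rw [ENNReal.ofReal_tsum_of_nonneg (fun k => pow_nonneg hL0 _)]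
        have := geom_summable hφ hL1 1
        simpa using this
    _ < ⊤ := ENNReal.ofReal_lt_top

lemma renewal (hc : Continuous φ) (hφ : NiceFn φ) (hL1 : (∫ t, φ t) < 1)
    (hψdef : ∀ t, ψ t = ∑' k, convPow φ k t) (u : ℝ) :
    causalConv φ ψ u = ψ u - φ u := by
  have hψsupp := psi_supp hφ hψdef
  have hshift : ψ u = φ u + ∑' k, convPow φ (k + 1) u := by
    rw [hψdef]
    exact Summable.tsum_eq_zero_add (convPow_summable hc hφ hL1 u)
  rcases lt_or_ge u 0 with hu | hu
  · rw [cc_zero_of_nonpos hψsupp hu.le, hψsupp u hu, hφ.supp u hu]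
    ring
  · obtain ⟨M, hM0, hM⟩ := exists_bound hc hφ u hu
    set L := ∫ t, φ t with hLdef
    have hL0 : 0 ≤ L := integral_nonneg hφ.nonneg
    have key : causalConv φ ψ u = ∑' k, convPow φ (k + 1) u := by
      rw [cc_eq_setIoc hψsupp]
      have h1 : ∫ s in Set.Ioc 0 u, φ (u - s) * ψ s
          = ∫ s in Set.Ioc 0 u, ∑' k, φ (u - s) * convPow φ k s := by
        refine integral_congr_ae (Eventually.of_forall fun s => ?_)
        simp only [hψdef s, tsum_mul_left]
      rw [h1]
      have h2 : ∫ s in Set.Ioc 0 u, ∑' k, φ (u - s) * convPow φ k s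
          = ∑' k, ∫ s in Set.Ioc 0 u, φ (u - s) * convPow φ k s := by
        refine integral_tsum (fun k => ?_) ?_
        · exact ((hφ.meas.comp (measurable_const.sub measurable_id)).mul
            (convPow_nice hφ k).meas).aestronglyMeasurable
        · have hbound : ∀ k : ℕ, ∫⁻ s in Set.Ioc 0 u,
              ‖φ (u - s) * convPow φ k s‖₊ ≤ ENNReal.ofReal (M * L ^ (k + 1)) := by
            intro k
            have hnn : ∀ s : ℝ, 0 ≤ φ (u - s) * convPow φ k s := fun s =>
              mul_nonneg (hφ.nonneg _) ((convPow_nice hφ k).nonneg _)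
            have heq : ∫⁻ s in Set.Ioc 0 u, ‖φ (u - s) * convPow φ k s‖₊
                = ∫⁻ s in Set.Ioc 0 u, ENNReal.ofReal (φ (u - s) * convPow φ k s) := by
              refine lintegral_congr fun s => ?_
              rw [← Real.enorm_eq_ofReal (hnn s)]; rfl
            rw [heq, ← ofReal_integral_eq_lintegral_ofReal
              (integrand_integrableOn hφ hu hM k) (Eventually.of_forall hnn)]
            exact ENNReal.ofReal_le_ofReal (integrand_int_le hφ hu hM0 hM k)
          refine ne_top_of_le_ne_top ?_ (ENNReal.tsum_le_tsum hbound)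
          rw [← ENNReal.ofReal_tsum_of_nonneg
            (fun k => mul_nonneg hM0 (pow_nonneg hL0 _)) (geom_summable hφ hL1 M)]
          exact ENNReal.ofReal_ne_top
      rw [h2]
      exact tsum_congr fun k => (convPow_succ_eq hφ k u).symm
    rw [key, hshift]
    ring

end Psi

end PropAux

namespace PropAux

lemma setIntegral_shift (f : ℝ → ℝ) {S : Set ℝ} (hS : MeasurableSet S) (c : ℝ) :
    ∫ u in S, f (u - c) = ∫ u in (fun x => x + c) ⁻¹' S, f u := by
  have hT : MeasurableSet ((fun x => x + c) ⁻¹' S) := hS.preimage (measurable_add_const c)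
  rw [← integral_indicator hS, ← integral_indicator hT]
  have key : ∀ u : ℝ, S.indicator (fun u => f (u - c)) u
      = ((fun x => x + c) ⁻¹' S).indicator f (u - c) := by
    intro u
    by_cases h : u ∈ S
    · rw [Set.indicator_of_mem h, Set.indicator_of_mem
        (by simp only [Set.mem_preimage, sub_add_cancel]; exact h)]
    · rw [Set.indicator_of_notMem h, Set.indicator_of_notMem
        (by simp only [Set.mem_preimage, sub_add_cancel]; exact h)]
  calc ∫ u, S.indicator (fun u => f (u - c)) u
      = ∫ u, ((fun x => x + c) ⁻¹' S).indicator f (u - c) :=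
        integral_congr_ae (Eventually.of_forall key)
    _ = ∫ u, ((fun x => x + c) ⁻¹' S).indicator f u :=
        integral_sub_right_eq_self _ c

lemma shift_Ici (f : ℝ → ℝ) (t c : ℝ) :
    ∫ u in Set.Ici t, f (u - c) = ∫ u in Set.Ici (t - c), f u := by
  rw [setIntegral_shift f measurableSet_Ici c]
  have hset : (fun x : ℝ => x + c) ⁻¹' Set.Ici t = Set.Ici (t - c) := by
    ext x
    simp only [Set.mem_preimage, Set.mem_Ici]
    constructor <;> intro h <;> linarith
  rw [hset]

lemma shift_Ioc (f : ℝ → ℝ) (a b c : ℝ) :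
    ∫ u in Set.Ioc a b, f (u - c) = ∫ u in Set.Ioc (a - c) (b - c), f u := by
  rw [setIntegral_shift f measurableSet_Ioc c]
  have hset : (fun x : ℝ => x + c) ⁻¹' Set.Ioc a b = Set.Ioc (a - c) (b - c) := by
    ext x
    simp only [Set.mem_preimage, Set.mem_Ioc]
    constructor
    · rintro ⟨h1, h2⟩; exact ⟨by linarith, by linarith⟩
    · rintro ⟨h1, h2⟩; exact ⟨by linarith, by linarith⟩
  rw [hset]

lemma tail_split {ψ : ℝ → ℝ} (hI : Integrable ψ) (hsupp : ∀ x : ℝ, x < 0 → ψ x = 0)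
    {t : ℝ} (ht : 0 ≤ t) :
    ∫ u in Set.Ici t, ψ u = (∫ u, ψ u) - ∫ u in Set.Ioc 0 t, ψ u := by
  have h1 : (∫ u in Set.Ici t, ψ u) + ∫ u in Set.Iio t, ψ u = ∫ u, ψ u := by
    have := integral_add_compl measurableSet_Ici hI (f := ψ) (s := Set.Ici t)
    rwa [Set.compl_Ici] at this
  have hunion : Set.Iio (0:ℝ) ∪ Set.Ico 0 t = Set.Iio t := by
    ext x
    simp only [Set.mem_union, Set.mem_Iio, Set.mem_Ico]
    constructor
    · rintro (h | ⟨h1, h2⟩)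
      · linarith
      · exact h2
    · intro h
      rcases lt_or_ge x 0 with h' | h'
      · exact Or.inl h'
      · exact Or.inr ⟨h', h⟩
  have h2 : ∫ u in Set.Iio t, ψ u = ∫ u in Set.Ioc 0 t, ψ u := by
    rw [← hunion, setIntegral_union (by
        rw [Set.disjoint_left]
        rintro a ha ⟨h1', h2'⟩
        exact absurd ha (not_lt.mpr h1')) measurableSet_Ico hI.integrableOn hI.integrableOn]
    rw [setIntegral_congr_fun measurableSet_Iio (g := fun _ => (0:ℝ))
      (fun x hx => hsupp x hx), integral_zero, zero_add]
    exact setIntegral_congr_set Ico_ae_eq_Ioc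
  linarith

end PropAux


/-- the propagator kernel
`ζ(t) = κv(1 + ∫_t^∞ ψ − ∫_t^∞ ∫₀^t ψ(u−s)φ(s) ds du)` is differentiable on `(0,∞)`
with `ζ′(t) = −κv(1+‖ψ‖₁)φ(t) = −ζ(0)φ(t)`: the martingale condition of the
Hawkes-driven propagator price model. -/
theorem propagator_kernel_derivative
    (φ : ℝ → ℝ) (κ v : ℝ) (hκ : 0 < κ) (hv : 0 < v)
    (hφcont : Continuous φ)
    (hφpos : ∀ t : ℝ, 0 ≤ φ t)
    (hφsupp : ∀ t : ℝ, t < 0 → φ t = 0)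
    (hφint : IntegrableOn φ (Set.Ici (0:ℝ)))
    (hφnorm : ∫ t in Set.Ici (0:ℝ), φ t < 1)
    (ψ : ℝ → ℝ)
    (hψ : ∀ t : ℝ, ψ t = ∑' k : ℕ, convPow φ k t)
    (ζ : ℝ → ℝ)
    (hζ : ∀ t : ℝ, ζ t = κ * v *
      (1 + (∫ u in Set.Ici t, ψ u)
        - ∫ u in Set.Ici t, ∫ s in (0:ℝ)..t, ψ (u - s) * φ s)) :
    (∀ t : ℝ, 0 < t →
      HasDerivAt ζ (-(κ * v * (1 + ∫ u in Set.Ici (0:ℝ), ψ u) * φ t)) t) ∧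
    κ * v * (1 + ∫ u in Set.Ici (0:ℝ), ψ u) = ζ 0 := by
  have hφmeas : Measurable φ := hφcont.measurable
  have hφind : φ = (Set.Ici (0:ℝ)).indicator φ := by
    funext x
    by_cases hx : x ∈ Set.Ici (0:ℝ)
    · rw [Set.indicator_of_mem hx]
    · rw [Set.indicator_of_notMem hx, hφsupp x (by simpa using hx)]
  have hφint' : Integrable φ := by
    rw [hφind]; exact (integrable_indicator_iff measurableSet_Ici).2 hφint
  have hNice : PropAux.NiceFn φ := ⟨hφmeas, hφpos, hφsupp, hφint'⟩
  have hIci_eq : ∀ f : ℝ → ℝ, (∀ x : ℝ, x < 0 → f x = 0) →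
      ∫ x in Set.Ici (0:ℝ), f x = ∫ x, f x := by
    intro f hf
    rw [← integral_indicator measurableSet_Ici]
    refine integral_congr_ae (Eventually.of_forall fun x => ?_)
    by_cases hx : x ∈ Set.Ici (0:ℝ)
    · rw [Set.indicator_of_mem hx]
    · rw [Set.indicator_of_notMem hx, hf x (by simpa using hx)]
  have hL1 : (∫ x, φ x) < 1 := by rw [← hIci_eq φ hφsupp]; exact hφnorm
  have hψnn := PropAux.psi_nonneg hNice hψ
  have hψsupp := PropAux.psi_supp hNice hψ
  have hψmeas := PropAux.psi_meas hφcont hNice hL1 hψ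
  have hψint := PropAux.psi_integrable hφcont hNice hL1 hψ
  have hren := PropAux.renewal hφcont hNice hL1 hψ
  set C : ℝ := ∫ x, ψ x with hC
  have hCIci : ∫ u in Set.Ici (0:ℝ), ψ u = C := hIci_eq ψ hψsupp
  set Φ : ℝ → ℝ := fun x => ∫ s in Set.Ioc 0 x, φ s with hΦ
  set Ψ : ℝ → ℝ := fun x => ∫ u in Set.Ioc 0 x, ψ u with hΨ
  have hΨnn : ∀ x, 0 ≤ Ψ x := fun x =>
    setIntegral_nonneg measurableSet_Ioc fun u _ => hψnn u
  have hΨle : ∀ x, Ψ x ≤ C := fun x =>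
    setIntegral_le_integral hψint (Eventually.of_forall hψnn)
  have hΨmono : Monotone Ψ := by
    intro x y hxy
    exact setIntegral_mono_set hψint.integrableOn (Eventually.of_forall hψnn)
      ((Set.Ioc_subset_Ioc_right hxy).eventuallyLE)
  have hΨmeas : Measurable Ψ := hΨmono.measurable
  have hprodint : Integrable (fun p : ℝ × ℝ => ψ (p.1 - p.2) * φ p.2)
      (volume.prod volume) := by
    have h := hφint'.convolution_integrand (ContinuousLinearMap.mul ℝ ℝ) hψint
    exact h.congr (Eventually.of_forall fun p => mul_comm _ _)
  have hmain : ∀ t : ℝ, 0 < t → ζ t = κ * v * (1 + C) - κ * v * (1 + C) * Φ t := by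
    intro t ht
    have h0t : (0:ℝ) ≤ t := ht.le
    have hA : ∫ u in Set.Ici t, ψ u = C - Ψ t := by
      rw [PropAux.tail_split hψint hψsupp h0t]
    have hB1 : (∫ u in Set.Ici t, ∫ s in (0:ℝ)..t, ψ (u - s) * φ s)
        = ∫ u in Set.Ici t, ∫ s in Set.Ioc 0 t, ψ (u - s) * φ s := by
      refine integral_congr_ae (Eventually.of_forall fun u => ?_)
      simp only [intervalIntegral.integral_of_le h0t]
    have hsw1int : Integrable (Function.uncurry fun u s => ψ (u - s) * φ s)
        ((volume.restrict (Set.Ici t)).prod (volume.restrict (Set.Ioc 0 t))) := by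
      rw [Measure.prod_restrict]
      exact hprodint.integrableOn
    have hswap1 : (∫ u in Set.Ici t, ∫ s in Set.Ioc 0 t, ψ (u - s) * φ s)
        = ∫ s in Set.Ioc 0 t, ∫ u in Set.Ici t, ψ (u - s) * φ s :=
      integral_integral_swap hsw1int
    have hinner1 : ∀ s ∈ Set.Ioc 0 t, (∫ u in Set.Ici t, ψ (u - s) * φ s)
        = (C - Ψ (t - s)) * φ s := by
      intro s hs
      rw [integral_mul_const, PropAux.shift_Ici ψ t s,
        PropAux.tail_split hψint hψsupp (by linarith [hs.2] : (0:ℝ) ≤ t - s)]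
    have hDint : IntegrableOn (fun s => Ψ (t - s) * φ s) (Set.Ioc 0 t) := by
      refine Integrable.mono' ((hφint'.integrableOn).const_mul C) ?_ ?_
      · exact ((hΨmeas.comp (measurable_const.sub measurable_id)).mul
          hφmeas).aestronglyMeasurable
      · refine Eventually.of_forall fun s => ?_
        rw [Real.norm_of_nonneg (mul_nonneg (hΨnn _) (hφpos _))]
        exact mul_le_mul_of_nonneg_right (hΨle _) (hφpos _)
    have hB2 : (∫ s in Set.Ioc 0 t, (C - Ψ (t - s)) * φ s)
        = C * Φ t - ∫ s in Set.Ioc 0 t, Ψ (t - s) * φ s := by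
      have e : ∀ s : ℝ, (C - Ψ (t - s)) * φ s = C * φ s - Ψ (t - s) * φ s :=
        fun s => by ring
      rw [integral_congr_ae (Eventually.of_forall fun s => e s),
        integral_sub ((hφint'.integrableOn).const_mul C) hDint, integral_const_mul]
    have hΨshift : ∀ s : ℝ, Ψ (t - s) = ∫ u in Set.Ioc s t, ψ (u - s) := by
      intro s
      rw [hΨ]
      simp only
      rw [PropAux.shift_Ioc ψ s t s, sub_self]
    have hD1 : (∫ s in Set.Ioc 0 t, Ψ (t - s) * φ s)
        = ∫ s in Set.Ioc 0 t, ∫ u in Set.Ioc 0 t,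
            (Set.Ioc s t).indicator (fun u => ψ (u - s) * φ s) u := by
      refine setIntegral_congr_fun measurableSet_Ioc fun s hs => ?_
      have hset : Set.Ioc 0 t ∩ Set.Ioc s t = Set.Ioc s t := by
        ext x
        simp only [Set.mem_inter_iff, Set.mem_Ioc]
        constructor
        · rintro ⟨_, h2⟩; exact h2
        · rintro ⟨h1, h2⟩; exact ⟨⟨lt_trans hs.1 h1, h2⟩, ⟨h1, h2⟩⟩
      calc Ψ (t - s) * φ s
          = (∫ u in Set.Ioc s t, ψ (u - s)) * φ s := by rw [hΨshift s]
        _ = ∫ u in Set.Ioc s t, ψ (u - s) * φ s := (integral_mul_const _ _).symm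
        _ = ∫ u in Set.Ioc 0 t ∩ Set.Ioc s t, ψ (u - s) * φ s := by rw [hset]
        _ = ∫ u in Set.Ioc 0 t, (Set.Ioc s t).indicator
              (fun u => ψ (u - s) * φ s) u :=
            (setIntegral_indicator measurableSet_Ioc).symm
    have hcore : Integrable (fun p : ℝ × ℝ => ψ (p.2 - p.1) * φ p.1)
        (volume.prod volume) := hprodint.swap
    have hS2 : MeasurableSet {p : ℝ × ℝ | p.1 < p.2 ∧ p.2 ≤ t} :=
      (measurableSet_lt measurable_fst measurable_snd).inter
        (measurableSet_le measurable_snd measurable_const)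
    have hGeq : ∀ p : ℝ × ℝ, (Set.Ioc p.1 t).indicator
          (fun u => ψ (u - p.1) * φ p.1) p.2
        = ({p : ℝ × ℝ | p.1 < p.2 ∧ p.2 ≤ t}).indicator
            (fun q => ψ (q.2 - q.1) * φ q.1) p := by
      intro p
      by_cases hp : p.2 ∈ Set.Ioc p.1 t
      · rw [Set.indicator_of_mem hp, Set.indicator_of_mem (by exact ⟨hp.1, hp.2⟩)]
      · rw [Set.indicator_of_notMem hp,
          Set.indicator_of_notMem (fun hq => hp ⟨hq.1, hq.2⟩)]
    have hsw2int : Integrable (Function.uncurry fun s u =>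
        (Set.Ioc s t).indicator (fun u => ψ (u - s) * φ s) u)
        ((volume.restrict (Set.Ioc 0 t)).prod (volume.restrict (Set.Ioc 0 t))) := by
      rw [Measure.prod_restrict]
      exact ((hcore.integrableOn.integrable_indicator hS2).integrableOn).congr
        (Eventually.of_forall fun p => (hGeq p).symm)
    have hswap2 : (∫ s in Set.Ioc 0 t, ∫ u in Set.Ioc 0 t,
          (Set.Ioc s t).indicator (fun u => ψ (u - s) * φ s) u)
        = ∫ u in Set.Ioc 0 t, ∫ s in Set.Ioc 0 t,
            (Set.Ioc s t).indicator (fun u' => ψ (u' - s) * φ s) u :=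
      integral_integral_swap hsw2int
    have hinner2 : ∀ u ∈ Set.Ioc 0 t, (∫ s in Set.Ioc 0 t,
        (Set.Ioc s t).indicator (fun u' => ψ (u' - s) * φ s) u) = ψ u - φ u := by
      intro u hu
      have e1 : ∀ s ∈ Set.Ioc 0 t, (Set.Ioc s t).indicator
            (fun u' => ψ (u' - s) * φ s) u
          = (Set.Iio u).indicator (fun s => ψ (u - s) * φ s) s := by
        intro s hs
        by_cases h : s < u
        · rw [Set.indicator_of_mem (Set.mem_Ioc.mpr ⟨h, hu.2⟩),
            Set.indicator_of_mem (Set.mem_Iio.mpr h)]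
        · rw [Set.indicator_of_notMem (fun hc => h hc.1),
            Set.indicator_of_notMem (by simpa using h)]
      rw [setIntegral_congr_fun measurableSet_Ioc e1,
        setIntegral_indicator measurableSet_Iio]
      have hset2 : Set.Ioc 0 t ∩ Set.Iio u = Set.Ioo 0 u := by
        ext x
        simp only [Set.mem_inter_iff, Set.mem_Ioc, Set.mem_Iio, Set.mem_Ioo]
        constructor
        · rintro ⟨⟨h1, _⟩, h2⟩; exact ⟨h1, h2⟩
        · rintro ⟨h1, h2⟩; exact ⟨⟨h1, by linarith [hu.2]⟩, h2⟩
      rw [hset2, setIntegral_congr_set Ioo_ae_eq_Ioc]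
      have e2 : (∫ s in Set.Ioc 0 u, ψ (u - s) * φ s) = causalConv φ ψ u := by
        rw [← intervalIntegral.integral_of_le hu.1.le]
        calc ∫ s in (0:ℝ)..u, ψ (u - s) * φ s
            = ∫ s in (0:ℝ)..u, (fun y => ψ y * φ (u - y)) (u - s) := by
              refine intervalIntegral.integral_congr fun x hx => ?_
              simp only [sub_sub_cancel]
          _ = ∫ y in (0:ℝ)..u, ψ y * φ (u - y) := by
              rw [intervalIntegral.integral_comp_sub_left
                (fun y => ψ y * φ (u - y)) u, sub_self, sub_zero]
          _ = ∫ y in (0:ℝ)..u, φ (u - y) * ψ y :=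
              intervalIntegral.integral_congr fun x hx => mul_comm _ _
          _ = causalConv φ ψ u := rfl
      rw [e2, hren u]
    have hD : (∫ s in Set.Ioc 0 t, Ψ (t - s) * φ s) = Ψ t - Φ t := by
      rw [hD1, hswap2, setIntegral_congr_fun measurableSet_Ioc hinner2,
        integral_sub hψint.integrableOn hφint'.integrableOn]
    rw [hζ t, hB1, hswap1, setIntegral_congr_fun measurableSet_Ioc hinner1,
      hB2, hD, hA]
    ring
  constructor
  · intro t ht
    have hd1 : HasDerivAt (fun x => ∫ s in (0:ℝ)..x, φ s) (φ t) t :=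
      intervalIntegral.integral_hasDerivAt_right hφint'.intervalIntegrable
        (hφcont.stronglyMeasurableAtFilter _ _) hφcont.continuousAt
    have hd2 : HasDerivAt
        (fun x => κ * v * (1 + C) - κ * v * (1 + C) * ∫ s in (0:ℝ)..x, φ s)
        (-(κ * v * (1 + C) * φ t)) t := by
      simpa using (hd1.const_mul (κ * v * (1 + C))).const_sub (κ * v * (1 + C))
    have heq : ζ =ᶠ[nhds t]
        fun x => κ * v * (1 + C) - κ * v * (1 + C) * ∫ s in (0:ℝ)..x, φ s := by
      filter_upwards [Ioi_mem_nhds ht] with x hx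
      rw [hmain x hx, hΦ]
      simp only
      rw [intervalIntegral.integral_of_le (le_of_lt hx)]
    rw [hCIci]
    exact hd2.congr_of_eventuallyEq heq
  · rw [hζ 0, hCIci]
    simp
end

section
/- Let α ∈ (0,1), c > 0, and let Φ : [0,∞) → [0,∞) be bounded, measurable and integrable with x^{1+α} Φ(x) → α c^α as x → ∞. Then for every fixed z > 0, lim_{T→∞} T^α ∫₀^∞ Φ(t)(e^{i t z/T} − 1) dt = θ(1+α) · α · (cz)^α, where θ(1+α) = ∫₀^∞ (e^{iu} − 1) u^{−(1+α)} du. Consequently, writing Φ̂(ξ) = ∫₀^∞ Φ(t) e^{iξt} dt and assuming ∫₀^∞ Φ = 1, one has Φ̂(z/T) = 1 + θ(1+α) α (cz/T)^α + o(T^{−α}) as T → ∞. -/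
open MeasureTheory Filter Complex

lemma psi_norm_le (s : ℝ) (hs : 0 ≤ s) :
    ‖Complex.exp (Complex.I * s) - 1‖ ≤ 2 * min s 2 := by
  have habs : ‖Complex.exp (Complex.I * s)‖ = 1 := by
    rw [Complex.norm_exp]; simp
  rcases le_or_gt s 1 with h1 | h1
  · have : ‖Complex.I * s‖ ≤ 1 := by
      simpa [_root_.abs_of_nonneg hs] using h1
    have := Complex.norm_exp_sub_one_le this
    have h2 : ‖Complex.I * (s:ℂ)‖ = s := by simp [_root_.abs_of_nonneg hs]
    rw [h2] at this
    have : ‖Complex.exp (Complex.I * s) - 1‖ ≤ 2 * s := this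
    have hmin : min s 2 = s := min_eq_left (by linarith)
    rw [hmin]; exact this
  · have h2 : ‖Complex.exp (Complex.I * s) - 1‖ ≤ 2 := by
      calc ‖Complex.exp (Complex.I * s) - 1‖ ≤ ‖Complex.exp (Complex.I * s)‖ + ‖(1:ℂ)‖ :=
        norm_sub_le _ _
      _ = 2 := by rw [habs]; norm_num
    have : (1:ℝ) ≤ min s 2 := le_min h1.le one_le_two
    linarith

set_option maxHeartbeats 1000000 in
/-- Fourier asymptotics of a heavy-tailed Hawkes kernel shape. If
`Φ ≥ 0` is bounded, measurable, integrable with `x^{1+α}Φ(x) → αc^α`, then for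
fixed `z > 0`, `T^α ∫₀^∞ Φ(t)(e^{itz/T}−1)dt → θ(1+α)·α·(cz)^α`, and hence if
`∫Φ = 1`, `Φ̂(z/T) = 1 + θ(1+α)α(cz/T)^α + o(T^{−α})` as `T → ∞`. -/
theorem kernel_fourier_asymptotics
    (α c : ℝ) (hα : α ∈ Set.Ioo (0:ℝ) 1) (hc : 0 < c)
    (Φ : ℝ → ℝ)
    (hΦpos : ∀ t : ℝ, 0 ≤ Φ t)
    (hΦbdd : ∃ M : ℝ, ∀ t : ℝ, Φ t ≤ M)
    (hΦmeas : Measurable Φ)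
    (hΦint : IntegrableOn Φ (Set.Ioi (0:ℝ)))
    (hΦtail : Tendsto (fun x : ℝ => x ^ (1 + α) * Φ x) atTop (nhds (α * c ^ α)))
    (θ : ℂ)
    (hθ : θ = ∫ u in Set.Ioi (0:ℝ), (Complex.exp (Complex.I * u) - 1) / (u ^ (1 + α) : ℝ))
    (Φhat : ℝ → ℂ)
    (hΦhat : ∀ ξ : ℝ, Φhat ξ = ∫ t in Set.Ioi (0:ℝ), (Φ t : ℂ) * Complex.exp (Complex.I * ξ * t)) :
    ∀ z : ℝ, 0 < z →
      Tendsto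
          (fun T : ℝ => (T ^ α : ℝ) •
            ∫ t in Set.Ioi (0:ℝ), (Φ t : ℂ) * (Complex.exp (Complex.I * (z / T) * t) - 1))
          atTop (nhds (θ * ((α * (c * z) ^ α : ℝ) : ℂ))) ∧
      ((∫ t in Set.Ioi (0:ℝ), Φ t) = 1 →
        Tendsto
          (fun T : ℝ => (T ^ α : ℝ) *
            ‖Φhat (z / T) - 1 - θ * ((α * (c * z / T) ^ α : ℝ) : ℂ)‖)
          atTop (nhds 0)) := by
  obtain ⟨hα0, hα1⟩ := hα
  intro z hz
  obtain ⟨M, hM⟩ := hΦbdd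
  have hM0 : 0 ≤ M := le_trans (hΦpos 0) (hM 0)
  set β : ℝ := 1 + α with hβdef
  have hβ1 : 1 < β := by simp [hβdef]; linarith
  -- tail bound
  set C : ℝ := α * c ^ α + 1 with hCdef
  have hC0 : 0 < C := by positivity
  have htail : ∀ᶠ x in atTop, x ^ β * Φ x ≤ C := by
    have := hΦtail.eventually_le_const (show α * c ^ α < C by simp [hCdef])
    exact this
  obtain ⟨x₀', hx₀'⟩ := eventually_atTop.mp htail
  set x₀ : ℝ := max x₀' 1 with hx₀def
  have hx₀1 : (1:ℝ) ≤ x₀ := le_max_right _ _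
  have hx₀0 : (0:ℝ) < x₀ := lt_of_lt_of_le one_pos hx₀1
  have hΦle : ∀ x : ℝ, x₀ ≤ x → Φ x ≤ C * x ^ (-β) := by
    intro x hx
    have hx0 : 0 < x := lt_of_lt_of_le hx₀0 hx
    have h1 : x ^ β * Φ x ≤ C := hx₀' x (le_trans (le_max_left _ _) hx)
    have h2 : (0:ℝ) < x ^ β := Real.rpow_pos_of_pos hx0 _
    rw [Real.rpow_neg hx0.le]
    rw [← div_eq_mul_inv]
    rw [le_div_iff₀ h2]
    linarith [h1]
  set a : ℝ := max 2 (z * x₀) with hadef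
  have ha0 : (0:ℝ) < a := lt_of_lt_of_le two_pos (le_max_left _ _)
  set K : ℝ := 4 * C * z ^ α + 2 * M * z ^ α * x₀ ^ β with hKdef
  have hK1 : 2 * C * z ^ α ≤ K := by
    have : (0:ℝ) ≤ 2 * C * z ^ α := by positivity
    have h2 : (0:ℝ) ≤ 2 * M * z ^ α * x₀ ^ β := by positivity
    nlinarith [Real.rpow_pos_of_pos hz α]
  have hK2 : 4 * C * z ^ α ≤ K := by
    have h2 : (0:ℝ) ≤ 2 * M * z ^ α * x₀ ^ β := by positivity
    linarith
  have hK3 : 2 * M * z ^ α * x₀ ^ β ≤ K := by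
    have : (0:ℝ) ≤ 4 * C * z ^ α := by positivity
    linarith
  set h : ℝ → ℝ := fun s => if s ≤ a then K * s ^ (-α) else K * s ^ (-β) with hhdef
  set ψ : ℝ → ℂ := fun s => Complex.exp (Complex.I * s) - 1 with hψdef
  set F : ℝ → ℝ → ℂ := fun T s => (T ^ α * (T / z) * Φ (T / z * s)) • ψ s with hFdef
  set f : ℝ → ℂ := fun s => (α * c ^ α * z ^ α * s ^ (-β)) • ψ s with hfdef
  -- the bound
  have hbound : ∀ T : ℝ, 1 ≤ T → ∀ s : ℝ, 0 < s → ‖F T s‖ ≤ h s := by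
    intro T hT s hs
    have hT0 : (0:ℝ) < T := lt_of_lt_of_le one_pos hT
    have hb0 : (0:ℝ) < T / z := div_pos hT0 hz
    have hψ : ‖ψ s‖ ≤ 2 * min s 2 := psi_norm_le s hs.le
    have hψ0 : (0:ℝ) ≤ ‖ψ s‖ := norm_nonneg _
    have hsc0 : (0:ℝ) ≤ T ^ α * (T / z) * Φ (T / z * s) :=
      mul_nonneg (mul_nonneg (Real.rpow_nonneg hT0.le α) hb0.le) (hΦpos _)
    have hnorm : ‖F T s‖ = (T ^ α * (T / z) * Φ (T / z * s)) * ‖ψ s‖ := by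
      simp only [hFdef]
      rw [norm_smul, Real.norm_eq_abs, _root_.abs_of_nonneg hsc0]
    have hsβs : s ^ (-β) * s = s ^ (-α) := by
      nth_rewrite 2 [← Real.rpow_one s]
      rw [← Real.rpow_add hs]
      congr 1
      rw [hβdef]; ring
    have hzT : z ^ α * (T / z) ^ α = T ^ α := by
      rw [← Real.mul_rpow hz.le hb0.le, mul_div_cancel₀ _ hz.ne']
    rcases le_or_gt x₀ (T / z * s) with hcase | hcase
    · -- tail regime
      have hΦb : Φ (T / z * s) ≤ C * (T / z * s) ^ (-β) := hΦle _ hcase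
      have key : T ^ α * (T / z) * (T / z * s) ^ (-β) = z ^ α * s ^ (-β) := by
        rw [Real.mul_rpow hb0.le hs.le, Real.rpow_neg hb0.le,
          show (T/z) ^ β = (T/z) ^ α * (T/z) by
            rw [hβdef, add_comm, Real.rpow_add hb0, Real.rpow_one], ← hzT]
        have h1 : (T/z) ^ α ≠ 0 := (Real.rpow_pos_of_pos hb0 α).ne'
        field_simp
      have hstep : ‖F T s‖ ≤ C * z ^ α * s ^ (-β) * (2 * min s 2) := by
        rw [hnorm]
        have h1 : T ^ α * (T / z) * Φ (T / z * s) ≤ C * z ^ α * s ^ (-β) := by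
          calc T ^ α * (T / z) * Φ (T / z * s)
              ≤ T ^ α * (T / z) * (C * (T / z * s) ^ (-β)) := by
                apply mul_le_mul_of_nonneg_left hΦb
                positivity
            _ = C * (T ^ α * (T / z) * (T / z * s) ^ (-β)) := by ring
            _ = C * z ^ α * s ^ (-β) := by rw [key]; ring
        exact mul_le_mul h1 hψ hψ0 (by positivity)
      rcases le_or_gt s a with hsa | hsa
      · have hmin : min s 2 ≤ s := min_le_left _ _
        have : C * z ^ α * s ^ (-β) * (2 * min s 2) ≤ K * s ^ (-α) := by
          calc C * z ^ α * s ^ (-β) * (2 * min s 2)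
              ≤ C * z ^ α * s ^ (-β) * (2 * s) := by
                apply mul_le_mul_of_nonneg_left (by linarith) (by positivity)
            _ = 2 * C * z ^ α * (s ^ (-β) * s) := by ring
            _ = 2 * C * z ^ α * s ^ (-α) := by rw [hsβs]
            _ ≤ K * s ^ (-α) := by
                apply mul_le_mul_of_nonneg_right hK1 (Real.rpow_nonneg hs.le _)
        have hhs : h s = K * s ^ (-α) := by simp only [hhdef, if_pos hsa]
        rw [hhs]; linarith
      · have h2s : (2:ℝ) < s := lt_of_le_of_lt (le_max_left _ _) hsa
        have hmin : min s 2 = 2 := min_eq_right h2s.le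
        have : C * z ^ α * s ^ (-β) * (2 * min s 2) ≤ K * s ^ (-β) := by
          rw [hmin]
          calc C * z ^ α * s ^ (-β) * (2 * 2) = 4 * C * z ^ α * s ^ (-β) := by ring
            _ ≤ K * s ^ (-β) := by
                apply mul_le_mul_of_nonneg_right hK2 (Real.rpow_nonneg hs.le _)
        have hhs : h s = K * s ^ (-β) := by simp only [hhdef, if_neg (not_le.mpr hsa)]
        rw [hhs]; linarith
    · -- bounded regime
      have hsz : s / z ≤ T / z * s := by
        rw [div_mul_eq_mul_div, mul_comm]
        apply div_le_div_of_nonneg_right ?_ hz.le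
        nlinarith
      have hsa : s ≤ a := by
        have : s / z < x₀ := lt_of_le_of_lt hsz hcase
        have : s < z * x₀ := by
          rw [div_lt_iff₀ hz] at this; linarith [this]
        exact le_trans this.le (le_max_right _ _)
      have hTle : T ≤ z * x₀ / s := by
        rw [le_div_iff₀ hs]
        have : T / z * s < x₀ := hcase
        rw [div_mul_eq_mul_div, div_lt_iff₀ hz] at this
        nlinarith
      have h1 : T ^ β ≤ (z * x₀ / s) ^ β := Real.rpow_le_rpow hT0.le hTle (by linarith)
      have h2 : (z * x₀ / s) ^ β = z ^ β * x₀ ^ β * s ^ (-β) := by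
        rw [Real.div_rpow (by positivity) hs.le, Real.mul_rpow hz.le hx₀0.le,
          Real.rpow_neg hs.le, div_eq_mul_inv]
      have h3 : z ^ β = z ^ α * z := by
        rw [hβdef, add_comm, Real.rpow_add hz, Real.rpow_one]
      have h4 : T ^ α * (T / z) = T ^ β / z := by
        rw [hβdef, add_comm, Real.rpow_add hT0, Real.rpow_one]; ring
      have hψs : ‖ψ s‖ ≤ 2 * s := le_trans hψ (by
        have := min_le_left s 2; linarith)
      calc ‖F T s‖ = (T ^ α * (T / z) * Φ (T / z * s)) * ‖ψ s‖ := hnorm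
        _ ≤ (T ^ β / z * M) * (2 * s) := by
            apply mul_le_mul ?_ hψs hψ0 (by positivity)
            rw [h4]
            apply mul_le_mul_of_nonneg_left (hM _) (by positivity)
        _ ≤ ((z ^ β * x₀ ^ β * s ^ (-β)) / z * M) * (2 * s) := by
            have hle : T ^ β / z * M ≤ (z ^ β * x₀ ^ β * s ^ (-β)) / z * M := by
              apply mul_le_mul_of_nonneg_right ?_ hM0
              apply div_le_div_of_nonneg_right ?_ hz.le
              rw [← h2]; exact h1
            apply mul_le_mul_of_nonneg_right hle (by positivity)
        _ = 2 * M * z ^ α * x₀ ^ β * (s ^ (-β) * s) := by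
            rw [h3]; field_simp
        _ = 2 * M * z ^ α * x₀ ^ β * s ^ (-α) := by rw [hsβs]
        _ ≤ K * s ^ (-α) := mul_le_mul_of_nonneg_right hK3 (Real.rpow_nonneg hs.le _)
        _ = h s := by simp only [hhdef, if_pos hsa]
  -- integrability of the bound
  have hint : Integrable h (volume.restrict (Set.Ioi (0:ℝ))) := by
    have hsplit : Set.Ioi (0:ℝ) = Set.Ioc 0 a ∪ Set.Ioi a := (Set.Ioc_union_Ioi_eq_Ioi ha0.le).symm
    have h1 : IntegrableOn h (Set.Ioc 0 a) := by
      have base : IntegrableOn (fun s : ℝ => K * s ^ (-α)) (Set.Ioc 0 a) := by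
        rw [integrableOn_Ioc_iff_integrableOn_Ioo]
        exact ((intervalIntegral.integrableOn_Ioo_rpow_iff ha0).mpr (by linarith)).const_mul K
      apply base.congr_fun ?_ measurableSet_Ioc
      intro s hs
      simp only [hhdef, if_pos hs.2]
    have h2 : IntegrableOn h (Set.Ioi a) := by
      have base : IntegrableOn (fun s : ℝ => K * s ^ (-β)) (Set.Ioi a) :=
        ((integrableOn_Ioi_rpow_of_lt (by linarith) ha0)).const_mul K
      apply base.congr_fun ?_ measurableSet_Ioi
      intro s hs
      simp only [hhdef, if_neg (not_le.mpr (show a < s from hs))]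
    have := h1.union h2
    rwa [← hsplit] at this
  -- pointwise limit
  have hlim : ∀ s : ℝ, 0 < s → Tendsto (fun T => F T s) atTop (nhds (f s)) := by
    intro s hs
    have h1 : Tendsto (fun T : ℝ => T / z * s) atTop atTop :=
      (tendsto_id.atTop_div_const hz).atTop_mul_const hs
    have h2 : Tendsto (fun T : ℝ => (T / z * s) ^ β * Φ (T / z * s)) atTop (nhds (α * c ^ α)) :=
      hΦtail.comp h1
    have h3 := h2.mul_const (z ^ α * s ^ (-β))
    have heq : ∀ᶠ T in atTop,
        (T / z * s) ^ β * Φ (T / z * s) * (z ^ α * s ^ (-β)) = T ^ α * (T / z) * Φ (T / z * s) := by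
      filter_upwards [eventually_gt_atTop (0:ℝ)] with T hT0
      have hb0 : (0:ℝ) < T / z := div_pos hT0 hz
      have hzT : z ^ α * (T / z) ^ α = T ^ α := by
        rw [← Real.mul_rpow hz.le hb0.le, mul_div_cancel₀ _ hz.ne']
      have key : (T / z * s) ^ β * (z ^ α * s ^ (-β)) = T ^ α * (T / z) := by
        rw [Real.mul_rpow hb0.le hs.le, Real.rpow_neg hs.le,
          show (T/z) ^ β = (T/z) ^ α * (T/z) by
            rw [hβdef, add_comm, Real.rpow_add hb0, Real.rpow_one], ← hzT]
        have hsβ : s ^ β ≠ 0 := (Real.rpow_pos_of_pos hs β).ne'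
        field_simp
      rw [mul_right_comm, key]
    have h4 : Tendsto (fun T : ℝ => T ^ α * (T / z) * Φ (T / z * s)) atTop
        (nhds (α * c ^ α * (z ^ α * s ^ (-β)))) := h3.congr' heq
    have h5 := h4.smul_const (ψ s)
    simp only [hFdef, hfdef]
    rw [show α * c ^ α * z ^ α * s ^ (-β) = α * c ^ α * (z ^ α * s ^ (-β)) by ring]
    exact h5
  -- measurability
  have hmeas : ∀ T : ℝ, AEStronglyMeasurable (F T) (volume.restrict (Set.Ioi (0:ℝ))) := by
    intro T
    apply Measurable.aestronglyMeasurable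
    refine Measurable.smul (f := fun s => T ^ α * (T / z) * Φ (T / z * s)) (g := ψ) ?_ ?_
    · exact (hΦmeas.comp (measurable_const_mul (T / z))).const_mul _
    · have : Continuous ψ := by
        simp only [hψdef]
        exact (Complex.continuous_exp.comp
          (continuous_const.mul Complex.continuous_ofReal)).sub continuous_const
      exact this.measurable
  -- dominated convergence
  have hDCT : Tendsto (fun T : ℝ => ∫ s in Set.Ioi (0:ℝ), F T s) atTop
      (nhds (∫ s in Set.Ioi (0:ℝ), f s)) := by
    apply tendsto_integral_filter_of_dominated_convergence h
    · exact Eventually.of_forall hmeas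
    · filter_upwards [eventually_ge_atTop (1:ℝ)] with T hT
      rw [ae_restrict_iff' measurableSet_Ioi]
      exact Eventually.of_forall fun s hs => hbound T hT s hs
    · exact hint
    · rw [ae_restrict_iff' measurableSet_Ioi]
      exact Eventually.of_forall fun s hs => hlim s hs
  -- value of limit integral
  have hval : (∫ s in Set.Ioi (0:ℝ), f s) = θ * ((α * (c * z) ^ α : ℝ) : ℂ) := by
    have hfeq : Set.EqOn f
        (fun s => (α * c ^ α * z ^ α) •
          ((Complex.exp (Complex.I * s) - 1) / ((s ^ β : ℝ) : ℂ))) (Set.Ioi 0) := by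
      intro s hs
      have hs0 : (0:ℝ) < s := hs
      simp only [hfdef, hψdef]
      have hdiv : (Complex.exp (Complex.I * s) - 1) / ((s ^ β : ℝ) : ℂ)
          = s ^ (-β) • (Complex.exp (Complex.I * s) - 1) := by
        rw [Real.rpow_neg hs0.le, div_eq_inv_mul, ← Complex.ofReal_inv, Complex.real_smul]
      rw [hdiv, mul_smul]
    rw [setIntegral_congr_fun measurableSet_Ioi hfeq, integral_smul, ← hθ]
    rw [Complex.real_smul, mul_comm]
    congr 1
    rw [Real.mul_rpow hc.le hz.le]
    push_cast
    ring
  -- change of variables: eventual equality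
  have hcongr : ∀ᶠ T in atTop, (T ^ α : ℝ) •
      (∫ t in Set.Ioi (0:ℝ), (Φ t : ℂ) * (Complex.exp (Complex.I * (z / T) * t) - 1))
      = ∫ s in Set.Ioi (0:ℝ), F T s := by
    filter_upwards [eventually_gt_atTop (0:ℝ)] with T hT0
    have hb0 : (0:ℝ) < T / z := div_pos hT0 hz
    set g : ℝ → ℂ := fun t => (Φ t : ℂ) * (Complex.exp (Complex.I * (z / T) * t) - 1) with hgdef
    have hcv := integral_comp_mul_left_Ioi g 0 hb0
    rw [mul_zero] at hcv
    have hFg : ∫ s in Set.Ioi (0:ℝ), F T s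
        = (T ^ α * (T / z)) • ∫ x in Set.Ioi (0:ℝ), g (T / z * x) := by
      rw [← integral_smul]
      apply setIntegral_congr_fun measurableSet_Ioi
      intro s hs
      simp only [hFdef, hψdef, hgdef]
      have hTne : (T : ℂ) ≠ 0 := by exact_mod_cast hT0.ne'
      have hzne : (z : ℂ) ≠ 0 := by exact_mod_cast hz.ne'
      have harg : Complex.I * ((z : ℂ) / (T : ℂ)) * ((T / z * s : ℝ) : ℂ) = Complex.I * (s : ℂ) := by
        push_cast
        field_simp
      rw [harg, mul_smul]
      congr 1
    rw [hFg, hcv, smul_smul]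
    congr 1
    rw [mul_assoc, mul_inv_cancel₀ hb0.ne', mul_one]
  have hmain : Tendsto
      (fun T : ℝ => (T ^ α : ℝ) •
        ∫ t in Set.Ioi (0:ℝ), (Φ t : ℂ) * (Complex.exp (Complex.I * (z / T) * t) - 1))
      atTop (nhds (θ * ((α * (c * z) ^ α : ℝ) : ℂ))) := by
    rw [← hval]
    exact Tendsto.congr' (hcongr.mono fun T hT => hT.symm) hDCT
  refine ⟨hmain, ?_⟩
  intro hΦ1
  have hIψ : ∀ ξ : ℝ, Integrable
      (fun t => (Φ t : ℂ) * (Complex.exp (Complex.I * ξ * t) - 1))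
      (volume.restrict (Set.Ioi (0:ℝ))) := by
    intro ξ
    apply Integrable.mono' (hΦint.const_mul 2)
    · apply Measurable.aestronglyMeasurable
      apply Measurable.mul
      · exact Complex.measurable_ofReal.comp hΦmeas
      · exact (((Complex.continuous_exp.comp
          ((continuous_const.mul continuous_const).mul
            Complex.continuous_ofReal)).sub continuous_const)).measurable
    · apply Eventually.of_forall
      intro t
      rw [norm_mul, Complex.norm_real, Real.norm_eq_abs,
        _root_.abs_of_nonneg (hΦpos t), mul_comm]
      apply mul_le_mul_of_nonneg_right ?_ (hΦpos t)
      calc ‖Complex.exp (Complex.I * ξ * t) - 1‖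
          ≤ ‖Complex.exp (Complex.I * ξ * t)‖ + ‖(1:ℂ)‖ := norm_sub_le _ _
        _ ≤ 2 := by
            rw [Complex.norm_exp]
            simp
            norm_num
  have hIΦ : Integrable (fun t => (Φ t : ℂ)) (volume.restrict (Set.Ioi (0:ℝ))) :=
    hΦint.ofReal
  have hsplit : ∀ ξ : ℝ, Φhat ξ - 1
      = ∫ t in Set.Ioi (0:ℝ), (Φ t : ℂ) * (Complex.exp (Complex.I * ξ * t) - 1) := by
    intro ξ
    have h1 : ((1:ℝ) : ℂ) = ∫ t in Set.Ioi (0:ℝ), (Φ t : ℂ) := by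
      rw [← hΦ1]
      exact integral_ofReal.symm
    have h2 : ∫ t in Set.Ioi (0:ℝ), (Φ t : ℂ) * (Complex.exp (Complex.I * ξ * t) - 1)
        = (∫ t in Set.Ioi (0:ℝ), (Φ t : ℂ) * Complex.exp (Complex.I * ξ * t))
          - ∫ t in Set.Ioi (0:ℝ), (Φ t : ℂ) := by
      rw [← integral_sub ?_ hIΦ]
      · apply setIntegral_congr_fun measurableSet_Ioi
        intro t ht
        ring
      · have := hIψ ξ
        have heq : (fun t => (Φ t : ℂ) * Complex.exp (Complex.I * ξ * t))
            = fun t => (Φ t : ℂ) * (Complex.exp (Complex.I * ξ * t) - 1) + (Φ t : ℂ) := by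
          funext t; ring
        rw [heq]
        exact this.add hIΦ
    rw [hΦhat ξ, h2]
    push_cast at h1 ⊢
    rw [← h1]
  have h2 : ∀ᶠ T in atTop, (T ^ α : ℝ) *
      ‖Φhat (z / T) - 1 - θ * ((α * (c * z / T) ^ α : ℝ) : ℂ)‖
      = ‖(T ^ α : ℝ) • (∫ t in Set.Ioi (0:ℝ),
          (Φ t : ℂ) * (Complex.exp (Complex.I * (z / T) * t) - 1))
          - θ * ((α * (c * z) ^ α : ℝ) : ℂ)‖ := by
    filter_upwards [eventually_gt_atTop (0:ℝ)] with T hT0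
    have hTα : (0:ℝ) < T ^ α := Real.rpow_pos_of_pos hT0 α
    have hr : (T ^ α : ℝ) * (α * (c * z / T) ^ α) = α * (c * z) ^ α := by
      rw [Real.div_rpow (by positivity) hT0.le]
      field_simp
    have hsmul : (T ^ α : ℝ) • (Φhat (z / T) - 1 - θ * ((α * (c * z / T) ^ α : ℝ) : ℂ))
        = (T ^ α : ℝ) • (∫ t in Set.Ioi (0:ℝ),
            (Φ t : ℂ) * (Complex.exp (Complex.I * (z / T) * t) - 1))
            - θ * ((α * (c * z) ^ α : ℝ) : ℂ) := by
      rw [hsplit (z / T), smul_sub]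
      congr 1
      · simp only [Complex.ofReal_div]
      · rw [Complex.real_smul, ← hr]
        push_cast
        ring
    rw [← hsmul, norm_smul, Real.norm_eq_abs, _root_.abs_of_nonneg hTα.le]
  have h3 := (hmain.sub_const (θ * ((α * (c * z) ^ α : ℝ) : ℂ))).norm
  rw [sub_self, norm_zero] at h3
  exact Tendsto.congr' (h2.mono fun T hT => hT.symm) h3
end

section
/- Let α ∈ (0,1/2), c > 0, C_μ > 0, h > 0, and let Φ : [0,∞) → [0,∞) be bounded, measurable and integrable with ∫₀^∞ Φ = 1 and x^{1+α} Φ(x) → α c^α as x → ∞; write Φ̂(ξ) = ∫₀^∞ Φ(t) e^{iξt} dt, g^h(t) = (1 − |t|/h)^+, ĝ_z^h = ∫_ℝ g^h(t) e^{izt} dt. For T ≥ 1 and a ∈ [1/2,1) define Ĉ(z) := h C_μ T^{−2α} ĝ_z^h / |1 − a Φ̂(z/T)|². Then there exists a constant C > 0, independent of T, a and z, such that |Ĉ(z)| ≤ C min(1/z², 1)(1 + |z|^{−2α}) for all T ≥ 1, a ∈ [1/2,1) and z ≠ 0. -/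
open MeasureTheory Filter Complex

lemma expDeriv (z : ℝ) (t : ℝ) :
    HasDerivAt (fun s : ℝ => Complex.exp (Complex.I * z * s)) (Complex.I * z * Complex.exp (Complex.I * z * t)) t := by
  have h0 : HasDerivAt (fun s : ℝ => Complex.I * z * (s:ℂ)) (Complex.I * z) t := by
    simpa using (Complex.ofRealCLM.hasDerivAt (x := t)).const_mul (Complex.I * z)
  simpa [mul_comm] using h0.cexp

lemma linExpintegral (z : ℝ) (hz : z ≠ 0) (c₀ c₁ a b : ℝ) :
    (∫ t in a..b, ((c₀ + c₁ * t : ℝ) : ℂ) * Complex.exp (Complex.I * z * t))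
      = (((c₀ + c₁ * b : ℝ):ℂ)/(Complex.I*z) - (c₁:ℂ)/(Complex.I*z)^2) * Complex.exp (Complex.I * z * b)
        - (((c₀ + c₁ * a : ℝ):ℂ)/(Complex.I*z) - (c₁:ℂ)/(Complex.I*z)^2) * Complex.exp (Complex.I * z * a) := by
  have hIz : (Complex.I * z) ≠ 0 := by
    simp [Complex.ext_iff, hz, Complex.I_ne_zero]
  apply intervalIntegral.integral_eq_sub_of_hasDerivAt
  · intro t _
    have h1 : HasDerivAt (fun s : ℝ => (((c₀ + c₁ * s : ℝ):ℂ)/(Complex.I*z) - (c₁:ℂ)/(Complex.I*z)^2))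
        ((c₁:ℂ)/(Complex.I*z)) t := by
      have : HasDerivAt (fun s : ℝ => ((c₀:ℂ) + (c₁:ℂ) * s)) (c₁:ℂ) t := by
        simpa using ((Complex.ofRealCLM.hasDerivAt (x := t)).const_mul (c₁:ℂ)).const_add (c₀:ℂ)
      have h2 := (this.div_const (Complex.I*z)).sub_const ((c₁:ℂ)/(Complex.I*z)^2)
      convert h2 using 2
      · rfl
      · push_cast; ring
    have h2 := (h1.mul (expDeriv z t))
    convert h2 using 1
    · rfl
    · rfl
    push_cast
    field_simp [Complex.ofReal_ne_zero.mpr hz]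
    ring
  · apply ContinuousOn.intervalIntegrable
    apply Continuous.continuousOn
    continuity

lemma gcont (h : ℝ) (z : ℝ) :
    Continuous (fun t : ℝ => ((max (1 - |t| / h) 0 : ℝ) : ℂ) * Complex.exp (Complex.I * z * t)) := by
  apply Continuous.mul
  · exact Complex.continuous_ofReal.comp ((continuous_const.sub (_root_.continuous_abs.div_const h)).max continuous_const)
  · exact Complex.continuous_exp.comp (continuous_const.mul Complex.continuous_ofReal)

lemma ghat_eq (h z : ℝ) (hh : 0 < h) (hz : z ≠ 0) :
    (∫ t : ℝ, ((max (1 - |t| / h) 0 : ℝ) : ℂ) * Complex.exp (Complex.I * z * t))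
      = (Complex.exp (Complex.I*z*h) + Complex.exp (-(Complex.I*z*h)) - 2) / ((h:ℂ) * (Complex.I*z)^2) := by
  set f : ℝ → ℂ := fun t => ((max (1 - |t| / h) 0 : ℝ) : ℂ) * Complex.exp (Complex.I * z * t) with hf
  have hvanish : ∀ t ∉ Set.Icc (-h) h, f t = 0 := by
    intro t ht
    have habs : h < |t| := by
      rcases lt_or_ge t (-h) with hlt | hge
      · calc h < -t := by linarith
        _ ≤ |t| := neg_le_abs t
      · have hgt : h < t := by
          by_contra hc; push_neg at hc; exact ht ⟨hge, hc⟩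
        exact lt_of_lt_of_le hgt (le_abs_self t)
    have : max (1 - |t|/h) 0 = 0 := max_eq_right (by
      have := (one_lt_div hh).2 habs; linarith)
    simp [hf, this]
  have h1 : (∫ t : ℝ, f t) = ∫ t in Set.Icc (-h) h, f t :=
    (setIntegral_eq_integral_of_forall_compl_eq_zero hvanish).symm
  have h2 : (∫ t in Set.Icc (-h) h, f t) = ∫ t in (-h)..h, f t := by
    rw [integral_Icc_eq_integral_Ioc, intervalIntegral.integral_of_le (by linarith)]
  have hii : ∀ a b : ℝ, IntervalIntegrable f volume a b :=
    fun a b => ((gcont h z).continuousOn).intervalIntegrable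
  have h3 : (∫ t in (-h)..(0:ℝ), f t) + (∫ t in (0:ℝ)..h, f t) = ∫ t in (-h)..h, f t :=
    intervalIntegral.integral_add_adjacent_intervals (hii _ _) (hii _ _)
  have hneg : (∫ t in (-h)..(0:ℝ), f t)
      = ∫ t in (-h)..(0:ℝ), ((1 + (1/h) * t : ℝ) : ℂ) * Complex.exp (Complex.I * z * t) := by
    apply intervalIntegral.integral_congr
    intro t ht
    rw [Set.uIcc_of_le (by linarith)] at ht
    have h1 : |t| = -t := abs_of_nonpos ht.2
    have h2 : (0:ℝ) ≤ 1 - |t|/h := by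
      rw [h1, sub_nonneg, div_le_one hh]; linarith [ht.1]
    have key : (max (1 - |t|/h) 0 : ℝ) = 1 + (1/h) * t := by
      rw [max_eq_left h2, h1]; ring
    simp only [hf, key]
  have hpos : (∫ t in (0:ℝ)..h, f t)
      = ∫ t in (0:ℝ)..h, ((1 + (-(1/h)) * t : ℝ) : ℂ) * Complex.exp (Complex.I * z * t) := by
    apply intervalIntegral.integral_congr
    intro t ht
    rw [Set.uIcc_of_le (by linarith)] at ht
    have h1 : |t| = t := abs_of_nonneg ht.1
    have h2 : (0:ℝ) ≤ 1 - |t|/h := by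
      rw [h1, sub_nonneg, div_le_one hh]; linarith [ht.2]
    have key : (max (1 - |t|/h) 0 : ℝ) = 1 + (-(1/h)) * t := by
      rw [max_eq_left h2, h1]; ring
    simp only [hf, key]
  rw [h1, h2, ← h3, hneg, hpos, linExpintegral z hz 1 (1/h) (-h) 0, linExpintegral z hz 1 (-(1/h)) 0 h]
  have hIz : (Complex.I * z) ≠ 0 := by simp [Complex.ext_iff, hz, Complex.I_ne_zero]
  have hh' : (h:ℂ) ≠ 0 := by exact_mod_cast hh.ne'
  have hz' : (z:ℂ) ≠ 0 := by exact_mod_cast hz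
  push_cast
  rw [mul_neg]
  field_simp [hIz, hh']
  simp only [zero_mul, Complex.exp_zero]
  ring

lemma ghat_quad (h z : ℝ) (hh : 0 < h) (hz : z ≠ 0) :
    ‖∫ t : ℝ, ((max (1 - |t| / h) 0 : ℝ) : ℂ) * Complex.exp (Complex.I * z * t)‖
      ≤ 4 / (h * z ^ 2) := by
  rw [ghat_eq h z hh hz, norm_div]
  have hden : ‖(h:ℂ) * (Complex.I*z)^2‖ = h * z^2 := by
    rw [norm_mul, norm_pow, norm_mul, Complex.norm_I, Complex.norm_real, Complex.norm_real,
      one_mul, Real.norm_eq_abs, Real.norm_eq_abs, abs_of_pos hh, _root_.sq_abs]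
  rw [hden]
  have hnum : ‖Complex.exp (Complex.I*z*h) + Complex.exp (-(Complex.I*z*h)) - 2‖ ≤ 4 := by
    have he1 : ‖Complex.exp (Complex.I*z*h)‖ = 1 := by
      rw [Complex.norm_exp]; norm_num [Complex.mul_re]
    have he2 : ‖Complex.exp (-(Complex.I*z*h))‖ = 1 := by
      rw [Complex.norm_exp]; norm_num [Complex.mul_re]
    have h1 : ‖Complex.exp (Complex.I*z*h) + Complex.exp (-(Complex.I*z*h)) - 2‖
        ≤ ‖Complex.exp (Complex.I*z*h) + Complex.exp (-(Complex.I*z*h))‖ + ‖(2:ℂ)‖ :=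
      norm_sub_le _ _
    have h2 : ‖Complex.exp (Complex.I*z*h) + Complex.exp (-(Complex.I*z*h))‖
        ≤ ‖Complex.exp (Complex.I*z*h)‖ + ‖Complex.exp (-(Complex.I*z*h))‖ := norm_add_le _ _
    rw [he1, he2] at h2
    have h3 : ‖(2:ℂ)‖ = 2 := by norm_num
    rw [h3] at h1
    linarith
  have hz2 : (0:ℝ) < h * z^2 := by positivity
  gcongr

lemma ghat_triv (h z : ℝ) (hh : 0 < h) :
    ‖∫ t : ℝ, ((max (1 - |t| / h) 0 : ℝ) : ℂ) * Complex.exp (Complex.I * z * t)‖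
      ≤ 2 * h := by
  set f : ℝ → ℂ := fun t => ((max (1 - |t| / h) 0 : ℝ) : ℂ) * Complex.exp (Complex.I * z * t) with hf
  have hnormval : ∀ t : ℝ, ‖f t‖ = max (1 - |t| / h) 0 := by
    intro t
    have he : ‖Complex.exp (Complex.I * z * t)‖ = 1 := by
      rw [Complex.norm_exp]; norm_num [Complex.mul_re]
    simp only [hf, norm_mul, he, mul_one, Complex.norm_real, Real.norm_eq_abs]
    exact abs_of_nonneg (le_max_right _ _)
  calc ‖∫ t : ℝ, f t‖ = ‖∫ t : ℝ, f t‖ := rfl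
    _ ≤ ∫ t : ℝ, ‖f t‖ := norm_integral_le_integral_norm f
    _ = ∫ t in Set.Icc (-h) h, ‖f t‖ := by
        refine (setIntegral_eq_integral_of_forall_compl_eq_zero fun t ht => ?_).symm
        rw [hnormval t]
        have habs : h < |t| := by
          rcases lt_or_ge t (-h) with hlt | hge
          · calc h < -t := by linarith
            _ ≤ |t| := neg_le_abs t
          · have hgt : h < t := by
              by_contra hc; push_neg at hc; exact ht ⟨hge, hc⟩
            exact lt_of_lt_of_le hgt (le_abs_self t)
        exact max_eq_right (by
          have := (one_lt_div hh).2 habs; linarith)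
    _ ≤ ∫ t in Set.Icc (-h) h, (1:ℝ) := by
        apply setIntegral_mono_on
        · exact ((gcont h z).norm.continuousOn).integrableOn_compact isCompact_Icc
        · exact integrableOn_const measure_Icc_lt_top.ne
        · exact measurableSet_Icc
        · intro t _
          rw [hnormval t]
          apply max_le _ zero_le_one
          have : 0 ≤ |t| / h := by positivity
          linarith
    _ = 2 * h := by
        rw [setIntegral_const, smul_eq_mul, mul_one, Real.volume_real_Icc]
        rw [max_eq_left (by linarith)]
        ring

lemma phiexp_int (Φ : ℝ → ℝ) (hΦmeas : Measurable Φ)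
    (hΦint : IntegrableOn Φ (Set.Ioi (0:ℝ))) (ξ : ℝ) :
    IntegrableOn (fun t => (Φ t : ℂ) * Complex.exp (Complex.I * ξ * t)) (Set.Ioi (0:ℝ)) := by
  apply Integrable.mono hΦint
  · exact ((Complex.measurable_ofReal.comp hΦmeas).mul
      (Complex.measurable_exp.comp (measurable_const.mul Complex.measurable_ofReal))).aestronglyMeasurable
  · filter_upwards with t
    have he : ‖Complex.exp (Complex.I * ξ * t)‖ = 1 := by
      rw [Complex.norm_exp]; norm_num [Complex.mul_re]
    simp only [norm_mul, he, mul_one, Complex.norm_real, Real.norm_eq_abs,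
      _root_.abs_abs, le_refl]

lemma phicos_int (Φ : ℝ → ℝ) (hΦmeas : Measurable Φ)
    (hΦint : IntegrableOn Φ (Set.Ioi (0:ℝ))) (ξ : ℝ) :
    IntegrableOn (fun t => Φ t * Real.cos (ξ * t)) (Set.Ioi (0:ℝ)) := by
  apply Integrable.mono hΦint
  · exact (hΦmeas.mul (Real.measurable_cos.comp (measurable_const.mul measurable_id))).aestronglyMeasurable
  · filter_upwards with t
    simp only [Real.norm_eq_abs, abs_mul]
    calc |Φ t| * |Real.cos (ξ * t)| ≤ |Φ t| * 1 :=
      mul_le_mul_of_nonneg_left (Real.abs_cos_le_one _) (abs_nonneg _)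
    _ = |Φ t| := by ring

lemma phihat_re (Φ : ℝ → ℝ) (hΦmeas : Measurable Φ)
    (hΦint : IntegrableOn Φ (Set.Ioi (0:ℝ))) (ξ : ℝ) :
    (∫ t in Set.Ioi (0:ℝ), (Φ t : ℂ) * Complex.exp (Complex.I * ξ * t)).re
      = ∫ t in Set.Ioi (0:ℝ), Φ t * Real.cos (ξ * t) := by
  have h1 := integral_re (𝕜 := ℂ) (phiexp_int Φ hΦmeas hΦint ξ)
  rw [RCLike.re_to_complex] at h1
  rw [← h1]
  apply setIntegral_congr_fun measurableSet_Ioi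
  intro t _
  have harg : Complex.I * ξ * t = ((ξ * t : ℝ) : ℂ) * Complex.I := by push_cast; ring
  simp only [harg, RCLike.re_to_complex, Complex.mul_re, Complex.ofReal_re, Complex.ofReal_im,
    Complex.exp_ofReal_mul_I_re, zero_mul, sub_zero]

lemma phihat_abs_le_one (Φ : ℝ → ℝ) (hΦpos : ∀ t : ℝ, 0 ≤ Φ t)
    (hΦnorm : (∫ t in Set.Ioi (0:ℝ), Φ t) = 1) (ξ : ℝ) :
    ‖∫ t in Set.Ioi (0:ℝ), (Φ t : ℂ) * Complex.exp (Complex.I * ξ * t)‖ ≤ 1 := by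
  rw [← hΦnorm]
  calc ‖∫ t in Set.Ioi (0:ℝ), (Φ t : ℂ) * Complex.exp (Complex.I * ξ * t)‖
      ≤ ∫ t in Set.Ioi (0:ℝ), ‖(Φ t : ℂ) * Complex.exp (Complex.I * ξ * t)‖ :=
        norm_integral_le_integral_norm _
    _ = ∫ t in Set.Ioi (0:ℝ), Φ t := by
        apply setIntegral_congr_fun measurableSet_Ioi
        intro t _
        have he : ‖Complex.exp (Complex.I * ξ * t)‖ = 1 := by
          rw [Complex.norm_exp]; norm_num [Complex.mul_re]
        simp only [norm_mul, he, mul_one, Complex.norm_real, Real.norm_eq_abs,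
          _root_.abs_of_nonneg (hΦpos t)]

lemma phihat_cont (Φ : ℝ → ℝ) (hΦmeas : Measurable Φ)
    (hΦint : IntegrableOn Φ (Set.Ioi (0:ℝ))) :
    Continuous (fun ξ : ℝ => ∫ t in Set.Ioi (0:ℝ), (Φ t : ℂ) * Complex.exp (Complex.I * ξ * t)) := by
  apply continuous_of_dominated (bound := fun t => |Φ t|)
  · intro ξ
    exact ((Complex.measurable_ofReal.comp hΦmeas).mul
      (Complex.measurable_exp.comp (measurable_const.mul Complex.measurable_ofReal))).aestronglyMeasurable
  · intro ξ
    filter_upwards with t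
    have he : ‖Complex.exp (Complex.I * ξ * t)‖ = 1 := by
      rw [Complex.norm_exp]; norm_num [Complex.mul_re]
    simp [he]
  · exact hΦint.abs
  · filter_upwards with t
    exact continuous_const.mul (Complex.continuous_exp.comp
      ((continuous_const.mul Complex.continuous_ofReal).mul continuous_const))

lemma phihat_RL (Φ : ℝ → ℝ) (hΦmeas : Measurable Φ)
    (hΦint : IntegrableOn Φ (Set.Ioi (0:ℝ))) :
    ∃ R : ℝ, 0 < R ∧ ∀ ξ : ℝ, R ≤ |ξ| →
      ‖∫ t in Set.Ioi (0:ℝ), (Φ t : ℂ) * Complex.exp (Complex.I * ξ * t)‖ ≤ 1/2 := by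
  set f : ℝ → ℂ := Set.indicator (Set.Ioi (0:ℝ)) (fun t => (Φ t : ℂ)) with hfdef
  have htend := Real.tendsto_integral_exp_smul_cocompact f
  have hev : ∀ᶠ w in cocompact ℝ, ‖∫ v : ℝ, Real.fourierChar (-(v * w)) • f v‖ < 1/2 := by
    have := Metric.tendsto_nhds.mp htend (1/2) (by norm_num)
    simpa [dist_eq_norm] using this
  rw [(Filter.hasBasis_cocompact).eventually_iff] at hev
  obtain ⟨K, hK, hKev⟩ := hev
  obtain ⟨r, hr⟩ := hK.isBounded.subset_closedBall 0
  refine ⟨2 * Real.pi * (max r 0 + 1), by positivity, fun ξ hξ => ?_⟩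
  set w : ℝ := -ξ / (2 * Real.pi) with hw
  have hwK : w ∉ K := by
    intro hmem
    have h1 : |w| ≤ max r 0 := by
      have := hr hmem
      simp only [Metric.mem_closedBall, Real.dist_eq, sub_zero] at this
      exact le_trans this (le_max_left _ _)
    have h2 : |w| = |ξ| / (2 * Real.pi) := by
      rw [hw, abs_div, abs_neg]
      congr 1
      exact abs_of_pos (by positivity)
    have h3 : (max r 0 + 1) ≤ |ξ| / (2 * Real.pi) := by
      rw [le_div_iff₀ (by positivity)]
      calc (max r 0 + 1) * (2 * Real.pi) = 2 * Real.pi * (max r 0 + 1) := by ring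
      _ ≤ |ξ| := hξ
    linarith [h2 ▸ h1]
  have hval : (∫ v : ℝ, Real.fourierChar (-(v * w)) • f v)
      = ∫ t in Set.Ioi (0:ℝ), (Φ t : ℂ) * Complex.exp (Complex.I * ξ * t) := by
    rw [← integral_indicator (measurableSet_Ioi)]
    congr 1
    funext v
    rw [Circle.smul_def, smul_eq_mul, hfdef]
    by_cases hv : v ∈ Set.Ioi (0:ℝ)
    · rw [Set.indicator_of_mem hv, Set.indicator_of_mem hv, Real.fourierChar_apply]
      have hpi : (Real.pi : ℝ) ≠ 0 := Real.pi_ne_zero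
      have harg : ((2 * Real.pi * -(v * w) : ℝ) : ℂ) * Complex.I = Complex.I * ξ * v := by
        rw [hw]; push_cast; field_simp [Complex.ofReal_ne_zero.mpr Real.pi_ne_zero]
      rw [harg, mul_comm]
    · rw [Set.indicator_of_notMem hv, Set.indicator_of_notMem hv, mul_zero]
  have h2 := hKev (Set.mem_compl hwK)
  rw [hval] at h2
  exact le_of_lt (by simpa using h2)

lemma tail_lower (α c : ℝ) (hα : 0 < α) (hc : 0 < c) (Φ : ℝ → ℝ)
    (hΦtail : Tendsto (fun x : ℝ => x ^ (1 + α) * Φ x) atTop (nhds (α * c ^ α))) :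
    ∃ t₀ : ℝ, 1 ≤ t₀ ∧ ∀ t : ℝ, t₀ ≤ t → (α * c ^ α / 2) * t ^ (-(1 + α)) ≤ Φ t := by
  have hpos : (0:ℝ) < α * c ^ α := by positivity
  have hev : ∀ᶠ x in atTop, α * c ^ α / 2 < x ^ (1 + α) * Φ x :=
    hΦtail.eventually_const_lt (by linarith)
  obtain ⟨t₁, ht₁⟩ := eventually_atTop.mp hev
  refine ⟨max t₁ 1, le_max_right _ _, fun t ht => ?_⟩
  have htpos : (0:ℝ) < t := lt_of_lt_of_le one_pos (le_trans (le_max_right _ _) ht)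
  have h1 := le_of_lt (ht₁ t (le_trans (le_max_left _ _) ht))
  have hpows : (0:ℝ) < t ^ (1 + α) := Real.rpow_pos_of_pos htpos _
  rw [Real.rpow_neg htpos.le]
  have h2 : α * c ^ α / 2 / t ^ (1+α) ≤ Φ t := (div_le_iff₀' hpows).mpr h1
  calc α * c ^ α / 2 * (t ^ (1+α))⁻¹ = (α * c ^ α / 2) / t ^ (1+α) := by ring
  _ ≤ Φ t := h2

lemma cos_lb (x : ℝ) (hx : |x| ≤ 1) : 2 / Real.pi ^ 2 * x ^ 2 ≤ 1 - Real.cos x := by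
  have h1 : 1 - Real.cos x = 2 * Real.sin (x/2) ^ 2 := by
    have h1 := Real.cos_two_mul' (x/2)
    have h2 := Real.sin_sq_add_cos_sq (x/2)
    rw [show 2*(x/2) = x by ring] at h1; linarith
  have h2 : Real.sin (x/2) ^ 2 = Real.sin (|x|/2) ^ 2 := by
    rcases abs_cases x with ⟨he, _⟩ | ⟨he, _⟩
    · rw [he]
    · rw [he]; rw [show -x/2 = -(x/2) by ring, Real.sin_neg]; ring
  have h3 : 2 / Real.pi * (|x|/2) ≤ Real.sin (|x|/2) := by
    apply Real.mul_le_sin (by positivity)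
    calc |x|/2 ≤ 1/2 := by linarith
    _ ≤ Real.pi / 2 := by linarith [Real.pi_gt_three]
  have h4 : (0:ℝ) ≤ 2 / Real.pi * (|x|/2) := by positivity
  have h5 : (2 / Real.pi * (|x|/2)) ^ 2 ≤ Real.sin (|x|/2) ^ 2 := by
    exact pow_le_pow_left₀ h4 h3 2
  have h6 : (2 / Real.pi * (|x|/2)) ^ 2 = x ^ 2 / Real.pi ^ 2 := by
    rw [show (2:ℝ) / Real.pi * (|x| / 2) = |x| / Real.pi by ring]
    rw [div_pow, _root_.sq_abs]
  rw [h1, h2]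
  rw [h6] at h5
  calc 2 / Real.pi ^ 2 * x ^ 2 = 2 * (x ^ 2 / Real.pi ^ 2) := by ring
  _ ≤ 2 * Real.sin (|x|/2) ^ 2 := by linarith

lemma phicos1_int (Φ : ℝ → ℝ) (hΦmeas : Measurable Φ)
    (hΦint : IntegrableOn Φ (Set.Ioi (0:ℝ))) (ξ : ℝ) :
    IntegrableOn (fun t => Φ t * (1 - Real.cos (ξ * t))) (Set.Ioi (0:ℝ)) := by
  apply Integrable.mono (hΦint.add hΦint)
  · exact (hΦmeas.mul ((measurable_const.sub (Real.measurable_cos.comp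
      (measurable_const.mul measurable_id))))).aestronglyMeasurable
  · filter_upwards with t
    simp only [Real.norm_eq_abs, abs_mul, Pi.add_apply]
    have h1 : |1 - Real.cos (ξ * t)| ≤ 2 := by
      have := Real.neg_one_le_cos (ξ * t)
      have := Real.cos_le_one (ξ * t)
      rw [abs_le]; constructor <;> linarith
    calc |Φ t| * |1 - Real.cos (ξ * t)| ≤ |Φ t| * 2 :=
      mul_le_mul_of_nonneg_left h1 (abs_nonneg _)
    _ = |Φ t + Φ t| := by rw [← two_mul, abs_mul]; simp [mul_comm]

lemma small_xi (α : ℝ) (hα0 : 0 < α) (hα1 : α < 1/2) (Φ : ℝ → ℝ)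
    (hΦpos : ∀ t : ℝ, 0 ≤ Φ t) (hΦmeas : Measurable Φ)
    (hΦint : IntegrableOn Φ (Set.Ioi (0:ℝ)))
    (t₀ δ : ℝ) (ht₀ : 1 ≤ t₀) (hδ : 0 < δ)
    (hlow : ∀ t : ℝ, t₀ ≤ t → δ * t ^ (-(1 + α)) ≤ Φ t)
    (ξ : ℝ) (hξ0 : ξ ≠ 0) (hξs : |ξ| ≤ 1 / (2 * t₀)) :
    δ / (Real.pi ^ 2 * (2 - α)) * |ξ| ^ α
      ≤ ∫ t in Set.Ioi (0:ℝ), Φ t * (1 - Real.cos (ξ * t)) := by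
  have habs : (0:ℝ) < |ξ| := abs_pos.2 hξ0
  set b : ℝ := |ξ|⁻¹ with hbdef
  have hb : 0 < b := by positivity
  have h2t : 2 * t₀ ≤ b := by
    have k1 : |ξ| * (2 * t₀) ≤ 1 := (le_div_iff₀ (by positivity)).mp hξs
    rw [hbdef, ← one_div]
    exact (le_div_iff₀ habs).mpr (by linarith [mul_comm |ξ| (2*t₀)])
  have ht₀b : t₀ < b := by linarith
  have hpi2 : (0:ℝ) < Real.pi ^ 2 := by positivity
  have h2α : (0:ℝ) < 2 - α := by linarith
  set C : ℝ := 2 * δ * ξ^2 / Real.pi ^ 2 with hCdef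
  have hC : 0 < C := by rw [hCdef]; positivity
  have hnonneg : ∀ t : ℝ, 0 ≤ Φ t * (1 - Real.cos (ξ * t)) := fun t =>
    mul_nonneg (hΦpos t) (by linarith [Real.cos_le_one (ξ * t)])
  -- Step 1 : restrict the integral
  have step1 : (∫ t in Set.Ioc t₀ b, Φ t * (1 - Real.cos (ξ * t)))
      ≤ ∫ t in Set.Ioi (0:ℝ), Φ t * (1 - Real.cos (ξ * t)) := by
    apply setIntegral_mono_set (phicos1_int Φ hΦmeas hΦint ξ)
    · exact Filter.Eventually.of_forall hnonneg
    · exact HasSubset.Subset.eventuallyLE (fun x hx => lt_of_lt_of_le (by linarith) hx.1.le)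
  -- Step 2 : pointwise lower bound on the restricted set
  have step2 : (∫ t in Set.Ioc t₀ b, C * t ^ ((1:ℝ) - α))
      ≤ ∫ t in Set.Ioc t₀ b, Φ t * (1 - Real.cos (ξ * t)) := by
    apply setIntegral_mono_on
    · have hii : IntervalIntegrable (fun t : ℝ => t ^ ((1:ℝ) - α)) volume t₀ b :=
        intervalIntegral.intervalIntegrable_rpow' (by linarith)
      have := (intervalIntegrable_iff_integrableOn_Ioc_of_le ht₀b.le).mp hii
      exact this.const_mul C
    · exact (phicos1_int Φ hΦmeas hΦint ξ).mono_set
        (fun x hx => lt_of_lt_of_le (by linarith) hx.1.le)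
    · exact measurableSet_Ioc
    · intro t ht
      have htpos : (0:ℝ) < t := by linarith [ht.1]
      have hxt : |ξ * t| ≤ 1 := by
        rw [abs_mul, abs_of_pos htpos]
        calc |ξ| * t ≤ |ξ| * b := mul_le_mul_of_nonneg_left ht.2 habs.le
        _ = 1 := by rw [hbdef]; field_simp
      have hcos := cos_lb (ξ * t) hxt
      have hphi := hlow t ht.1.le
      have hkey : C * t ^ ((1:ℝ) - α) = (δ * t ^ (-(1 + α))) * (2 / Real.pi^2 * (ξ*t)^2) := by
        have ht2 : t ^ (-(1+α)) * t^(2:ℕ) = t ^ ((1:ℝ) - α) := by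
          rw [← Real.rpow_natCast t 2, ← Real.rpow_add htpos]
          congr 1; push_cast; ring
        rw [hCdef, ← ht2]
        push_cast
        ring
      rw [hkey]
      apply mul_le_mul hphi hcos (by positivity)
      exact hΦpos t
  -- Step 3 : compute the lower integral
  have step3 : (∫ t in Set.Ioc t₀ b, C * t ^ ((1:ℝ) - α))
      = C * ((b ^ ((2:ℝ) - α) - t₀ ^ ((2:ℝ) - α)) / (2 - α)) := by
    rw [integral_const_mul]
    congr 1
    rw [← intervalIntegral.integral_of_le ht₀b.le]
    rw [_root_.integral_rpow (Or.inl (by linarith : (-1:ℝ) < 1 - α))]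
    have he : (1:ℝ) - α + 1 = 2 - α := by ring
    rw [he]
  -- Step 4 : arithmetic
  have hbt : 2 * t₀ ^ ((2:ℝ) - α) ≤ b ^ ((2:ℝ) - α) := by
    calc 2 * t₀ ^ ((2:ℝ) - α) ≤ 2 ^ ((2:ℝ) - α) * t₀ ^ ((2:ℝ) - α) := by
          apply mul_le_mul_of_nonneg_right _ (Real.rpow_nonneg (by linarith) _)
          calc (2:ℝ) = 2 ^ (1:ℝ) := (Real.rpow_one 2).symm
          _ ≤ 2 ^ ((2:ℝ) - α) := (Real.rpow_le_rpow_left_iff one_lt_two).mpr (by linarith)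
    _ = (2 * t₀) ^ ((2:ℝ) - α) := (Real.mul_rpow (by norm_num) (by linarith)).symm
    _ ≤ b ^ ((2:ℝ) - α) := Real.rpow_le_rpow (by positivity) h2t (by linarith)
  have hxib : ξ^2 * b ^ ((2:ℝ) - α) = |ξ| ^ α := by
    rw [hbdef, Real.inv_rpow (abs_nonneg ξ), ← Real.rpow_neg (abs_nonneg ξ),
      ← _root_.sq_abs ξ, ← Real.rpow_natCast |ξ| 2, ← Real.rpow_add habs]
    congr 1; push_cast; ring
  calc δ / (Real.pi ^ 2 * (2 - α)) * |ξ| ^ α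
      = δ / (Real.pi ^ 2 * (2 - α)) * (ξ^2 * b ^ ((2:ℝ) - α)) := by rw [hxib]
    _ = C * (b ^ ((2:ℝ) - α) / 2 / (2 - α)) := by
        have h2α' : (2 - α) ≠ 0 := ne_of_gt h2α
        rw [hCdef]; field_simp
    _ ≤ C * ((b ^ ((2:ℝ) - α) - t₀ ^ ((2:ℝ) - α)) / (2 - α)) := by
        have hkey2 : b ^ ((2:ℝ)-α)/2 ≤ b^((2:ℝ)-α) - t₀^((2:ℝ)-α) := by linarith
        gcongr
    _ = ∫ t in Set.Ioc t₀ b, C * t ^ ((1:ℝ) - α) := step3.symm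
    _ ≤ _ := le_trans step2 step1

lemma I_pos (Φ : ℝ → ℝ) (hΦpos : ∀ t : ℝ, 0 ≤ Φ t) (hΦmeas : Measurable Φ)
    (hΦint : IntegrableOn Φ (Set.Ioi (0:ℝ)))
    (t₀ : ℝ) (ht₀ : 1 ≤ t₀)
    (hposlower : ∀ t : ℝ, t₀ ≤ t → 0 < Φ t)
    (ξ : ℝ) (hξ0 : ξ ≠ 0) :
    0 < ∫ t in Set.Ioi (0:ℝ), Φ t * (1 - Real.cos (ξ * t)) := by
  have hnonneg : ∀ t : ℝ, 0 ≤ Φ t * (1 - Real.cos (ξ * t)) := fun t =>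
    mul_nonneg (hΦpos t) (by linarith [Real.cos_le_one (ξ * t)])
  rw [setIntegral_pos_iff_support_of_nonneg_ae
    (Filter.Eventually.of_forall hnonneg) (phicos1_int Φ hΦmeas hΦint ξ)]
  set Z := {t : ℝ | Real.cos (ξ * t) = 1} with hZdef
  have hZc : Z.Countable := by
    have hsub : Z ⊆ (fun x : ℝ => x / ξ) '' (Set.range (fun n : ℤ => (n:ℝ) * (2 * Real.pi))) := by
      intro t ht
      obtain ⟨n, hn⟩ := (Real.cos_eq_one_iff (ξ * t)).mp ht
      exact ⟨(n:ℝ) * (2 * Real.pi), ⟨n, rfl⟩, by simp only [hn]; exact mul_div_cancel_left₀ t hξ0⟩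
    exact Set.Countable.mono hsub ((Set.countable_range _).image _)
  have hZ0 : volume Z = 0 := hZc.measure_zero _
  have hsub2 : Set.Ioi t₀ \ Z ⊆
      Function.support (fun t => Φ t * (1 - Real.cos (ξ * t))) ∩ Set.Ioi 0 := by
    intro t ⟨ht1, ht2⟩
    constructor
    · apply ne_of_gt
      apply mul_pos (hposlower t (le_of_lt ht1))
      have : Real.cos (ξ * t) ≠ 1 := ht2
      have := Real.cos_le_one (ξ * t)
      cases lt_or_eq_of_le ‹Real.cos (ξ * t) ≤ 1› with
      | inl h => linarith
      | inr h => exact absurd h ht2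
    · exact Set.mem_Ioi.mpr (by linarith [Set.mem_Ioi.mp ht1])
  have hmeas : volume (Set.Ioi t₀ \ Z) = ⊤ := by
    rw [measure_diff_null hZ0, Real.volume_Ioi]
  calc (0:ENNReal) < ⊤ := by norm_num
  _ = volume (Set.Ioi t₀ \ Z) := hmeas.symm
  _ ≤ _ := measure_mono hsub2

lemma F_eq (Φ : ℝ → ℝ) (hΦmeas : Measurable Φ)
    (hΦint : IntegrableOn Φ (Set.Ioi (0:ℝ)))
    (hΦnorm : (∫ t in Set.Ioi (0:ℝ), Φ t) = 1) (ξ : ℝ) :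
    (∫ t in Set.Ioi (0:ℝ), Φ t * (1 - Real.cos (ξ * t)))
      = 1 - (∫ t in Set.Ioi (0:ℝ), (Φ t : ℂ) * Complex.exp (Complex.I * ξ * t)).re := by
  rw [phihat_re Φ hΦmeas hΦint ξ]
  have hfun : (fun t => Φ t * (1 - Real.cos (ξ * t)))
      = fun t => Φ t - Φ t * Real.cos (ξ * t) := funext fun t => by ring
  rw [hfun, integral_sub hΦint (phicos_int Φ hΦmeas hΦint ξ), hΦnorm]

lemma large_xi (Φ : ℝ → ℝ) (hΦpos : ∀ t : ℝ, 0 ≤ Φ t) (hΦmeas : Measurable Φ)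
    (hΦint : IntegrableOn Φ (Set.Ioi (0:ℝ)))
    (hΦnorm : (∫ t in Set.Ioi (0:ℝ), Φ t) = 1)
    (t₀ : ℝ) (ht₀ : 1 ≤ t₀) (hposlower : ∀ t : ℝ, t₀ ≤ t → 0 < Φ t)
    (ξ₀ : ℝ) (hξ₀ : 0 < ξ₀) :
    ∃ κ₂ : ℝ, 0 < κ₂ ∧ ∀ ξ : ℝ, ξ₀ ≤ |ξ| →
      κ₂ ≤ ∫ t in Set.Ioi (0:ℝ), Φ t * (1 - Real.cos (ξ * t)) := by
  set F : ℝ → ℝ := fun ξ => ∫ t in Set.Ioi (0:ℝ), Φ t * (1 - Real.cos (ξ * t)) with hF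
  have hFcont : Continuous F := by
    have : F = fun ξ : ℝ => 1 - (∫ t in Set.Ioi (0:ℝ), (Φ t : ℂ) * Complex.exp (Complex.I * ξ * t)).re :=
      funext fun ξ => F_eq Φ hΦmeas hΦint hΦnorm ξ
    rw [this]
    exact continuous_const.sub (Complex.continuous_re.comp (phihat_cont Φ hΦmeas hΦint))
  obtain ⟨R, hR, hRbound⟩ := phihat_RL Φ hΦmeas hΦint
  set R' : ℝ := max R ξ₀ with hR'
  set K : Set ℝ := Set.Icc (-R') R' ∩ {x : ℝ | ξ₀ ≤ |x|} with hK
  have hKcomp : IsCompact K :=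
    isCompact_Icc.inter_right (isClosed_le continuous_const _root_.continuous_abs)
  have hKne : K.Nonempty := by
    refine ⟨ξ₀, ⟨⟨?_, le_max_right _ _⟩, ?_⟩⟩
    · have : (0:ℝ) ≤ R' := le_trans hR.le (le_max_left _ _); linarith
    · simp only [Set.mem_setOf_eq, abs_of_pos hξ₀, le_refl]
  obtain ⟨ξs, hξsmem, hξsmin⟩ := hKcomp.exists_isMinOn hKne hFcont.continuousOn
  have hξs0 : ξs ≠ 0 := by
    intro hz
    have := hξsmem.2
    rw [hz] at this
    simp at this
    linarith [this]
  have hFpos : 0 < F ξs := I_pos Φ hΦpos hΦmeas hΦint t₀ ht₀ hposlower ξs hξs0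
  refine ⟨min (F ξs) (1/2), lt_min hFpos (by norm_num), fun ξ hξ => ?_⟩
  rcases le_or_gt |ξ| R' with hle | hgt
  · have hmemK : ξ ∈ K := ⟨abs_le.mp hle, hξ⟩
    calc min (F ξs) (1/2) ≤ F ξs := min_le_left _ _
    _ ≤ F ξ := hξsmin hmemK
  · have hRle : R ≤ |ξ| := le_trans (le_max_left _ _) hgt.le
    have habs := hRbound ξ hRle
    have hre : (∫ t in Set.Ioi (0:ℝ), (Φ t : ℂ) * Complex.exp (Complex.I * ξ * t)).re ≤ 1/2 :=
      le_trans (Complex.re_le_norm _) habs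
    calc min (F ξs) (1/2) ≤ 1/2 := min_le_right _ _
    _ ≤ F ξ := by
        show (1:ℝ)/2 ≤ ∫ t in Set.Ioi (0:ℝ), Φ t * (1 - Real.cos (ξ * t))
        rw [F_eq Φ hΦmeas hΦint hΦnorm ξ]; linarith


set_option maxHeartbeats 1000000 in
/-- uniform domination of the Fourier transform of the autocovariance
of `h`-increments of the renormalized nearly unstable Hawkes process:
`|h C_μ T^{−2α} ĝ_z^h / |1 − aΦ̂(z/T)|²| ≤ C min(1/z²,1)(1+|z|^{−2α})` uniformly in
`T ≥ 1`, `a ∈ [1/2,1)` and `z ≠ 0`. -/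
theorem hawkes_covariance_fourier_domination
    (α c Cμ h : ℝ) (hα : α ∈ Set.Ioo (0:ℝ) (1/2)) (hc : 0 < c) (hCμ : 0 < Cμ) (hh : 0 < h)
    (Φ : ℝ → ℝ)
    (hΦpos : ∀ t : ℝ, 0 ≤ Φ t)
    (hΦbdd : ∃ M : ℝ, ∀ t : ℝ, Φ t ≤ M)
    (hΦmeas : Measurable Φ)
    (hΦint : IntegrableOn Φ (Set.Ioi (0:ℝ)))
    (hΦnorm : (∫ t in Set.Ioi (0:ℝ), Φ t) = 1)
    (hΦtail : Tendsto (fun x : ℝ => x ^ (1 + α) * Φ x) atTop (nhds (α * c ^ α)))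
    (Φhat : ℝ → ℂ)
    (hΦhat : ∀ ξ : ℝ, Φhat ξ = ∫ t in Set.Ioi (0:ℝ), (Φ t : ℂ) * Complex.exp (Complex.I * ξ * t))
    (ghat : ℝ → ℂ)
    (hghat : ∀ z : ℝ, ghat z = ∫ t : ℝ, ((max (1 - |t| / h) 0 : ℝ) : ℂ) *
      Complex.exp (Complex.I * z * t))
    (Chat : ℝ → ℝ → ℝ → ℂ)
    (hChat : ∀ T a z : ℝ, Chat T a z =
      ((h * Cμ * T ^ (-(2 * α)) : ℝ) : ℂ) * ghat z /
        (((‖1 - (a : ℂ) * Φhat (z / T)‖) ^ 2 : ℝ) : ℂ)) :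
    ∃ C : ℝ, 0 < C ∧ ∀ T : ℝ, 1 ≤ T → ∀ a ∈ Set.Ico (1/2 : ℝ) 1, ∀ z : ℝ, z ≠ 0 →
      ‖Chat T a z‖ ≤ C * min (1 / z ^ 2) 1 * (1 + |z| ^ (-(2 * α))) := by
  obtain ⟨hα0, hα12⟩ := hα
  obtain ⟨t₀, ht₀, hlow⟩ := tail_lower α c hα0 hc Φ hΦtail
  set δ : ℝ := α * c ^ α / 2 with hδdef
  have hδ : 0 < δ := by rw [hδdef]; positivity
  have hposlower : ∀ t : ℝ, t₀ ≤ t → 0 < Φ t := by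
    intro t ht
    have htp : (0:ℝ) < t := by linarith
    have h2 : 0 < δ * t ^ (-(1+α)) := mul_pos hδ (Real.rpow_pos_of_pos htp _)
    linarith [hlow t ht]
  have hξ₀ : (0:ℝ) < 1/(2*t₀) := by positivity
  obtain ⟨κ₂, hκ₂, hlarge⟩ := large_xi Φ hΦpos hΦmeas hΦint hΦnorm t₀ ht₀ hposlower (1/(2*t₀)) hξ₀
  have h2α : (0:ℝ) < 2 - α := by linarith
  set κ₁ : ℝ := δ / (Real.pi^2 * (2-α)) with hκ₁def
  have hκ₁ : 0 < κ₁ := div_pos hδ (mul_pos (by positivity) h2α)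
  set κ : ℝ := min κ₁ κ₂ with hκdef
  have hκ : 0 < κ := lt_min hκ₁ hκ₂
  have hden : ∀ ξ : ℝ, ξ ≠ 0 → κ * min (|ξ| ^ α) 1 ≤ 1 - (Φhat ξ).re := by
    intro ξ hξ
    rw [hΦhat ξ, ← F_eq Φ hΦmeas hΦint hΦnorm ξ]
    have hmnn : (0:ℝ) ≤ min (|ξ|^α) 1 := le_min (Real.rpow_nonneg (abs_nonneg _) _) zero_le_one
    rcases le_or_gt |ξ| (1/(2*t₀)) with hsm | hlg
    · calc κ * min (|ξ|^α) 1 ≤ κ₁ * (|ξ|^α) :=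
          mul_le_mul (min_le_left _ _) (min_le_left _ _) hmnn hκ₁.le
      _ ≤ _ := small_xi α hα0 hα12 Φ hΦpos hΦmeas hΦint t₀ δ ht₀ hδ hlow ξ hξ hsm
    · calc κ * min (|ξ|^α) 1 ≤ κ₂ * 1 :=
          mul_le_mul (min_le_right _ _) (min_le_right _ _) hmnn hκ₂.le
      _ = κ₂ := mul_one _
      _ ≤ _ := hlarge ξ hlg.le
  set M : ℝ := max (4/h) (2*h) with hMdef
  have hM : 0 < M := lt_of_lt_of_le (by positivity : (0:ℝ) < 4/h) (le_max_left _ _)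
  refine ⟨h * Cμ * (4/κ^2) * M, by positivity, ?_⟩
  intro T hT a ha z hz
  have hT0 : (0:ℝ) < T := lt_of_lt_of_le one_pos hT
  have hξ0 : z / T ≠ 0 := div_ne_zero hz (ne_of_gt hT0)
  have hξabs : 0 < |z / T| := abs_pos.mpr hξ0
  set m : ℝ := min (|z / T|^α) 1 with hmdef
  have hm : 0 < m := lt_min (Real.rpow_pos_of_pos hξabs _) one_pos
  have hre1 : (Φhat (z / T)).re ≤ 1 := by
    refine le_trans (Complex.re_le_norm _) ?_
    rw [hΦhat (z / T)]
    exact phihat_abs_le_one Φ hΦpos hΦnorm (z / T)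
  have hreκ : κ * m ≤ 1 - (Φhat (z / T)).re := hden (z / T) hξ0
  have hD : κ/2 * m ≤ ‖1 - (a:ℂ) * Φhat (z / T)‖ := by
    have e0 : (0:ℝ) ≤ 1 - (Φhat (z / T)).re := by
      have := mul_pos hκ hm; linarith
    have e1 : a * (1 - (Φhat (z / T)).re) ≤ 1 - a * (Φhat (z / T)).re := by
      nlinarith [ha.2.le, e0]
    have e2 : (1/2) * (1 - (Φhat (z / T)).re) ≤ a * (1 - (Φhat (z / T)).re) :=
      mul_le_mul_of_nonneg_right ha.1 e0
    have e3 : ((1:ℂ) - (a:ℂ) * Φhat (z / T)).re = 1 - a * (Φhat (z / T)).re := by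
      simp [Complex.sub_re, Complex.mul_re]
    have e4 := mul_le_mul_of_nonneg_left hreκ (by norm_num : (0:ℝ) ≤ 1/2)
    calc κ/2 * m = (1/2) * (κ * m) := by ring
    _ ≤ (1/2) * (1 - (Φhat (z / T)).re) := e4
    _ ≤ 1 - a * (Φhat (z / T)).re := le_trans e2 e1
    _ = ((1:ℂ) - (a:ℂ) * Φhat (z / T)).re := e3.symm
    _ ≤ ‖1 - (a:ℂ) * Φhat (z / T)‖ := Complex.re_le_norm _
  have hdpos : (0:ℝ) < κ/2 * m := mul_pos (by linarith) hm
  have hD2 : (κ/2 * m)^2 ≤ (‖1 - (a:ℂ) * Φhat (z / T)‖)^2 :=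
    pow_le_pow_left₀ hdpos.le hD 2
  have hG1 : ‖ghat z‖ ≤ 4/(h * z^2) := by rw [hghat z]; exact ghat_quad h z hh hz
  have hG2 : ‖ghat z‖ ≤ 2*h := by rw [hghat z]; exact ghat_triv h z hh
  have hGnn : 0 ≤ ‖ghat z‖ := norm_nonneg _
  have hz2 : (0:ℝ) < z^2 := by positivity
  have hminnn : (0:ℝ) ≤ min (1/z^2) 1 := le_min (by positivity) zero_le_one
  have hGmin : ‖ghat z‖ ≤ M * min (1/z^2) 1 := by
    rcases le_total (1/z^2) 1 with hmin | hmin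
    · rw [min_eq_left hmin]
      calc ‖ghat z‖ ≤ 4/(h*z^2) := hG1
      _ = (4/h) * (1/z^2) := by field_simp
      _ ≤ M * (1/z^2) := mul_le_mul_of_nonneg_right (le_max_left _ _) (by positivity)
    · rw [min_eq_right hmin]
      calc ‖ghat z‖ ≤ 2*h := hG2
      _ = (2*h) * 1 := (mul_one _).symm
      _ ≤ M * 1 := mul_le_mul_of_nonneg_right (le_max_right _ _) zero_le_one
  have hzabs : (0:ℝ) < |z| := abs_pos.mpr hz
  have hznn : (0:ℝ) ≤ |z| ^ (-(2*α)) := Real.rpow_nonneg (abs_nonneg z) _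
  have hRatio : T ^ (-(2*α)) ≤ (1 + |z| ^ (-(2*α))) * m^2 := by
    rcases le_total (|z / T|^α) 1 with hc1 | hc1
    · have hmeq : m = |z / T|^α := min_eq_left hc1
      have hξval : |z / T| = |z| / T := by rw [abs_div, abs_of_pos hT0]
      have hm2 : m^2 = |z|^(2*α) * T^(-(2*α)) := by
        rw [hmeq, hξval]
        rw [← Real.rpow_natCast ((|z|/T)^α) 2, ← Real.rpow_mul (by positivity)]
        rw [Real.div_rpow (abs_nonneg z) hT0.le]
        rw [Real.rpow_neg hT0.le]
        rw [show α * ((2:ℕ):ℝ) = 2 * α by push_cast; ring]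
        ring
      have hinv : |z|^(-(2*α)) * |z|^(2*α) = 1 := by
        rw [← Real.rpow_add hzabs]; norm_num
      calc T^(-(2*α)) = |z|^(-(2*α)) * m^2 := by
            rw [hm2, ← mul_assoc, hinv, one_mul]
      _ ≤ (1 + |z|^(-(2*α))) * m^2 := by nlinarith [sq_nonneg m]
    · have hmeq : m = 1 := min_eq_right hc1
      have h1 : T^(-(2*α)) ≤ 1 := Real.rpow_le_one_of_one_le_of_nonpos hT (by linarith)
      rw [hmeq]; nlinarith
  rw [hChat T a z, norm_div, norm_mul, Complex.norm_real, Complex.norm_real, Real.norm_eq_abs, Real.norm_eq_abs]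
  have hA : |h * Cμ * T^(-(2*α))| = h * Cμ * T^(-(2*α)) := abs_of_pos (by positivity)
  have hDD : |((‖1 - (a:ℂ) * Φhat (z / T)‖)^2 : ℝ)|
      = (‖1 - (a:ℂ) * Φhat (z / T)‖)^2 := abs_of_nonneg (by positivity)
  rw [hA, hDD]
  have hr2 : T^(-(2*α))/m^2 ≤ 1 + |z|^(-(2*α)) := (div_le_iff₀ (by positivity)).mpr hRatio
  calc h * Cμ * T^(-(2*α)) * ‖ghat z‖ / (‖1 - (a:ℂ) * Φhat (z / T)‖)^2
      ≤ h * Cμ * T^(-(2*α)) * ‖ghat z‖ / ((κ/2*m)^2) := by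
        apply div_le_div_of_nonneg_left (by positivity) (pow_pos hdpos 2) hD2
    _ = (h * Cμ * (4/κ^2)) * (‖ghat z‖) * (T^(-(2*α)) / m^2) := by
        field_simp
        ring
    _ ≤ (h * Cμ * (4/κ^2)) * (M * min (1/z^2) 1) * (T^(-(2*α)) / m^2) := by
        apply mul_le_mul_of_nonneg_right
          (mul_le_mul_of_nonneg_left hGmin (by positivity)) (by positivity)
    _ ≤ (h * Cμ * (4/κ^2)) * (M * min (1/z^2) 1) * (1 + |z|^(-(2*α))) := by
        apply mul_le_mul_of_nonneg_left hr2
        apply mul_nonneg (by positivity)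
        exact mul_nonneg hM.le hminnn
    _ = h * Cμ * (4/κ^2) * M * min (1/z^2) 1 * (1 + |z|^(-(2*α))) := by ring
end

section
/- Let α ∈ (0,1/2), c > 0, C_μ > 0, h > 0, and let Φ : [0,∞) → [0,∞) be bounded, measurable and integrable with ∫₀^∞ Φ = 1 and x^{1+α} Φ(x) → α c^α as x → ∞; write Φ̂(ξ) = ∫₀^∞ Φ(t) e^{iξt} dt, ĝ_z^h = ∫_ℝ (1 − |t|/h)^+ e^{izt} dt, and let (a_T) ⊂ (0,1) satisfy T^α (1 − a_T) → 0 as T → ∞. Then for every fixed z > 0, lim_{T→∞} h C_μ T^{−2α} ĝ_z^h / |1 − a_T Φ̂(z/T)|² = h C_μ ĝ_z^h / (|θ(1+α)|² α² c^{2α} z^{2α}), where θ(1+α) = ∫₀^∞ (e^{iu} − 1) u^{−(1+α)} du. -/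
open MeasureTheory Filter Complex
open Set
lemma expBound (u : ℝ) : ‖1 - Complex.exp (Complex.I * u)‖ ≤ 2 * min |u| 1 := by
  rcases le_or_gt |u| 1 with h | h
  · rw [min_eq_left h, ← norm_neg, neg_sub]
    have := Complex.norm_exp_sub_one_le (x := Complex.I * u) (by simp [h])
    simpa using this
  · rw [min_eq_right h.le]
    calc ‖1 - Complex.exp (Complex.I * u)‖
        ≤ ‖(1:ℂ)‖ + ‖Complex.exp (Complex.I * u)‖ := by
          simpa using norm_sub_le (1:ℂ) (Complex.exp (Complex.I * u))
      _ ≤ 2 := by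
          rw [mul_comm Complex.I (u:ℂ)]
          norm_num [Complex.norm_exp_ofReal_mul_I]
      _ ≤ 2 * 1 := by norm_num

lemma boundInt {α : ℝ} (h0 : 0 < α) (h1 : α < 1) :
    IntegrableOn (fun u : ℝ => min u 1 * u ^ (-(1+α))) (Set.Ioi (0:ℝ)) := by
  have : Set.Ioi (0:ℝ) = Set.Ioc (0:ℝ) 1 ∪ Set.Ioi 1 := by
    rw [Set.Ioc_union_Ioi_eq_Ioi]; norm_num
  rw [this, integrableOn_union]
  constructor
  · have h2 : IntegrableOn (fun u : ℝ => u ^ (-α)) (Set.Ioo (0:ℝ) 1) := by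
      rw [intervalIntegral.integrableOn_Ioo_rpow_iff one_pos]; linarith
    have h3 : IntegrableOn (fun u : ℝ => u ^ (-α)) (Set.Ioc (0:ℝ) 1) :=
      h2.congr_set_ae Ioo_ae_eq_Ioc.symm
    refine h3.congr_fun (fun u hu => ?_) measurableSet_Ioc
    rw [min_eq_left hu.2]
    have h4 := Real.rpow_add hu.1 1 (-(1+α))
    rw [Real.rpow_one] at h4
    rw [← h4]
    norm_num
  · have h2 : IntegrableOn (fun u : ℝ => u ^ (-(1+α))) (Set.Ioi (1:ℝ)) :=
      integrableOn_Ioi_rpow_of_lt (by linarith) one_pos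
    refine h2.congr_fun (fun u hu => ?_) measurableSet_Ioi
    rw [min_eq_right (le_of_lt hu), one_mul]

lemma thetaIntegrable {α : ℝ} (h0 : 0 < α) (h1 : α < 1) :
    IntegrableOn (fun u : ℝ => (Complex.exp (Complex.I * u) - 1) / ((u ^ (1+α) : ℝ) : ℂ))
      (Set.Ioi (0:ℝ)) := by
  have hb := (boundInt h0 h1).const_mul 2
  refine Integrable.mono' hb ?_ ?_
  · apply Measurable.aestronglyMeasurable
    fun_prop
  · filter_upwards [ae_restrict_mem measurableSet_Ioi] with u hu
    have hu0 : (0:ℝ) < u := hu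
    rw [norm_div]
    have h2 : ‖((u ^ (1+α) : ℝ) : ℂ)‖ = u ^ (1+α) := by
      rw [Complex.norm_real, Real.norm_eq_abs, abs_of_pos (Real.rpow_pos_of_pos hu0 _)]
    rw [h2, div_eq_mul_inv, ← Real.rpow_neg hu0.le]
    have h3 : ‖Complex.exp (Complex.I * u) - 1‖ ≤ 2 * min u 1 := by
      have := expBound u
      rw [abs_of_pos hu0] at this
      rw [← norm_neg, neg_sub] at this
      exact this
    calc ‖Complex.exp (Complex.I * u) - 1‖ * u ^ (-(1+α))
        ≤ (2 * min u 1) * u ^ (-(1+α)) := by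
          exact mul_le_mul_of_nonneg_right h3 (Real.rpow_nonneg hu0.le _)
      _ = 2 * (min u 1 * u ^ (-(1+α))) := by ring

lemma thetaNeZero {α : ℝ} (h0 : 0 < α) (h1 : α < 1) :
    (∫ u in Set.Ioi (0:ℝ), (Complex.exp (Complex.I * u) - 1) / ((u ^ (1+α) : ℝ) : ℂ)) ≠ 0 := by
  set f : ℝ → ℂ := fun u => (Complex.exp (Complex.I * u) - 1) / ((u ^ (1+α) : ℝ) : ℂ) with hf
  have hint := thetaIntegrable h0 h1
  have hre : (∫ u in Set.Ioi (0:ℝ), f u).re = ∫ u in Set.Ioi (0:ℝ), (f u).re :=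
    (integral_re hint).symm
  have hreval : ∀ u ∈ Set.Ioi (0:ℝ), (f u).re = (Real.cos u - 1) / u ^ (1+α) := by
    intro u hu
    rw [hf]
    simp only [Complex.div_ofReal_re]
    congr 1
    rw [mul_comm Complex.I (u:ℂ), Complex.sub_re, Complex.exp_ofReal_mul_I_re]
    simp
  have hneg : (∫ u in Set.Ioi (0:ℝ), (f u).re) < 0 := by
    have heq : ∫ u in Set.Ioi (0:ℝ), (f u).re
        = - ∫ u in Set.Ioi (0:ℝ), (1 - Real.cos u) / u ^ (1+α) := by
      rw [← integral_neg]
      refine setIntegral_congr_fun measurableSet_Ioi (fun u hu => ?_)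
      rw [hreval u hu]; ring
    rw [heq, neg_lt, neg_zero]
    have hnn : 0 ≤ᵐ[volume.restrict (Set.Ioi (0:ℝ))]
        fun u => (1 - Real.cos u) / u ^ (1+α) := by
      filter_upwards [ae_restrict_mem measurableSet_Ioi] with u hu
      have hu0 : (0:ℝ) < u := hu
      exact div_nonneg (by linarith [Real.cos_le_one u]) (Real.rpow_pos_of_pos hu0 _).le
    have hintre : IntegrableOn (fun u => (1 - Real.cos u) / u ^ (1+α)) (Set.Ioi (0:ℝ)) := by
      have h5 : IntegrableOn (fun u => -(f u).re) (Set.Ioi (0:ℝ)) := hint.re.neg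
      refine h5.congr_fun (fun u hu => ?_) measurableSet_Ioi
      show -(f u).re = _
      rw [hreval u hu]; ring
    rw [setIntegral_pos_iff_support_of_nonneg_ae hnn hintre]
    have hsub : Set.Ioo (0:ℝ) 1 ⊆
        (Function.support fun u => (1 - Real.cos u) / u ^ (1+α)) ∩ Set.Ioi 0 := by
      intro u hu
      have hu0 : (0:ℝ) < u := hu.1
      have hu1 : u < 1 := hu.2
      have hcos : Real.cos u < 1 := by
        rcases lt_or_eq_of_le (Real.cos_le_one u) with h | h
        · exact h
        · exfalso
          have hpi := Real.pi_gt_three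
          have := (Real.cos_eq_one_iff_of_lt_of_lt (x := u) (by linarith) (by linarith)).mp h
          linarith
      refine ⟨?_, hu0⟩
      simp only [Function.mem_support]
      have : 0 < (1 - Real.cos u) / u ^ (1+α) :=
        div_pos (by linarith) (Real.rpow_pos_of_pos hu0 _)
      exact ne_of_gt this
    calc (0:ENNReal) < volume (Set.Ioo (0:ℝ) 1) := by simp
      _ ≤ _ := measure_mono hsub
  intro h
  rw [h] at hre
  simp only [Complex.zero_re] at hre
  rw [← hre] at hneg
  exact lt_irrefl 0 hneg


lemma coreLimit {α c : ℝ} (h0 : 0 < α) (h1 : α < 1) (hc : 0 < c)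
    (Φ : ℝ → ℝ) (hΦpos : ∀ t : ℝ, 0 ≤ Φ t) (M : ℝ) (hM : ∀ t : ℝ, Φ t ≤ M)
    (hΦmeas : Measurable Φ) (hΦint : IntegrableOn Φ (Set.Ioi (0:ℝ)))
    (hΦnorm : (∫ t in Set.Ioi (0:ℝ), Φ t) = 1)
    (hΦtail : Tendsto (fun x : ℝ => x ^ (1 + α) * Φ x) atTop (nhds (α * c ^ α))) :
    Tendsto (fun ξ : ℝ => ((ξ ^ (-α) : ℝ) : ℂ) *
        (1 - ∫ t in Set.Ioi (0:ℝ), (Φ t : ℂ) * Complex.exp (Complex.I * ξ * t)))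
      (nhdsWithin 0 (Set.Ioi 0))
      (nhds (-(((α * c ^ α : ℝ)) : ℂ) *
        ∫ u in Set.Ioi (0:ℝ), (Complex.exp (Complex.I * u) - 1) / ((u ^ (1+α) : ℝ) : ℂ))) := by
  have hM0 : 0 ≤ M := le_trans (hΦpos 0) (hM 0)
  obtain ⟨R₀, hR₀⟩ : ∃ N : ℝ, ∀ x ≥ N, |x ^ (1+α) * Φ x - α * c ^ α| < 1 := by
    obtain ⟨N, hN⟩ := Metric.tendsto_atTop.mp hΦtail 1 one_pos
    exact ⟨N, fun x hx => by simpa [Real.dist_eq] using hN x hx⟩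
  set C : ℝ := α * c ^ α + 1 with hC
  have hCpos : 0 < C := by positivity
  set R : ℝ := max R₀ 1 with hR
  have hR1 : (1:ℝ) ≤ R := le_max_right _ _
  have hR0 : (0:ℝ) < R := lt_of_lt_of_le one_pos hR1
  have hCb : ∀ x : ℝ, R ≤ x → x ^ (1+α) * Φ x ≤ C := by
    intro x hx
    have h2 := abs_lt.mp (hR₀ x (le_trans (le_max_left _ _) hx))
    linarith [h2.2]
  set F : ℝ → ℝ → ℂ := fun ξ u =>
    (1 - Complex.exp (Complex.I * u)) * ((ξ ^ (-(1+α)) * Φ (u / ξ) : ℝ) : ℂ) with hF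
  set G : ℝ → ℝ → ℂ := fun ξ u => Set.indicator (Set.Ioi (R * ξ)) (F ξ) u with hG
  set bound : ℝ → ℝ := fun u => (2 * C) * (min u 1 * u ^ (-(1+α))) with hbound
  set L : ℂ := ∫ u in Set.Ioi (0:ℝ),
      (1 - Complex.exp (Complex.I * u)) * ((α * c ^ α * u ^ (-(1+α)) : ℝ) : ℂ) with hL
  -- integrability of the Fourier integrand
  have hnormeq : ∀ ξ t : ℝ, ‖(Φ t : ℂ) * Complex.exp (Complex.I * ξ * t)‖ = Φ t := by
    intro ξ t
    rw [norm_mul, Complex.norm_real, Real.norm_eq_abs, _root_.abs_of_nonneg (hΦpos t),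
      mul_assoc, mul_comm Complex.I, show ((ξ:ℂ) * (t:ℂ)) = ((ξ*t : ℝ) : ℂ) by push_cast; ring,
      Complex.norm_exp_ofReal_mul_I, mul_one]
  have hIξ : ∀ ξ : ℝ, IntegrableOn
      (fun t => (Φ t : ℂ) * Complex.exp (Complex.I * ξ * t)) (Set.Ioi 0) := by
    intro ξ
    refine Integrable.mono' hΦint ?_ (Eventually.of_forall fun t => (hnormeq ξ t).le)
    apply Measurable.aestronglyMeasurable
    fun_prop
  -- the identity
  have hid : ∀ ξ : ℝ, 0 < ξ →
      ((ξ ^ (-α) : ℝ) : ℂ) * (1 - ∫ t in Set.Ioi (0:ℝ), (Φ t : ℂ) *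
        Complex.exp (Complex.I * ξ * t)) = ∫ u in Set.Ioi (0:ℝ), F ξ u := by
    intro ξ hξ
    have hΦC : IntegrableOn (fun t => (Φ t : ℂ)) (Set.Ioi 0) := by
      refine Integrable.mono' hΦint ?_ (Eventually.of_forall fun t => ?_)
      · exact (Complex.measurable_ofReal.comp hΦmeas).aestronglyMeasurable
      · rw [Complex.norm_real, Real.norm_eq_abs, _root_.abs_of_nonneg (hΦpos t)]
    have hone : (∫ t in Set.Ioi (0:ℝ), (Φ t : ℂ)) = 1 := by
      have h9 : (∫ t in Set.Ioi (0:ℝ), (Φ t : ℂ)) = ((∫ t in Set.Ioi (0:ℝ), Φ t : ℝ) : ℂ) :=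
        integral_ofReal
      rw [h9, hΦnorm, Complex.ofReal_one]
    have h2 : (1:ℂ) - (∫ t in Set.Ioi (0:ℝ), (Φ t : ℂ) * Complex.exp (Complex.I * ξ * t))
        = ∫ t in Set.Ioi (0:ℝ), (Φ t : ℂ) * (1 - Complex.exp (Complex.I * (ξ * t))) := by
      calc (1:ℂ) - (∫ t in Set.Ioi (0:ℝ), (Φ t : ℂ) * Complex.exp (Complex.I * ξ * t))
          = (∫ t in Set.Ioi (0:ℝ), (Φ t : ℂ)) -
            (∫ t in Set.Ioi (0:ℝ), (Φ t : ℂ) * Complex.exp (Complex.I * ξ * t)) := by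
            rw [hone]
        _ = ∫ t in Set.Ioi (0:ℝ), ((Φ t : ℂ) - (Φ t : ℂ) * Complex.exp (Complex.I * ξ * t)) :=
            (integral_sub hΦC (hIξ ξ)).symm
        _ = ∫ t in Set.Ioi (0:ℝ), (Φ t : ℂ) * (1 - Complex.exp (Complex.I * (ξ * t))) := by
            refine setIntegral_congr_fun measurableSet_Ioi fun t _ => ?_
            rw [mul_sub, mul_one, mul_assoc]
    have h3 : (∫ t in Set.Ioi (0:ℝ), (Φ t : ℂ) * (1 - Complex.exp (Complex.I * (ξ * t))))
        = ξ⁻¹ • ∫ u in Set.Ioi (0:ℝ), (Φ (u / ξ) : ℂ) * (1 - Complex.exp (Complex.I * u)) := by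
      have h4 := integral_comp_mul_left_Ioi
        (fun u => (Φ (u / ξ) : ℂ) * (1 - Complex.exp (Complex.I * u))) 0 hξ
      rw [mul_zero] at h4
      rw [← h4]
      refine setIntegral_congr_fun measurableSet_Ioi fun t _ => ?_
      simp only [mul_div_cancel_left₀ _ (ne_of_gt hξ), Complex.ofReal_mul]
    rw [h2, h3, Complex.real_smul, ← mul_assoc, ← Complex.ofReal_mul]
    have h5 : ξ ^ (-α) * ξ⁻¹ = ξ ^ (-(1+α)) := by
      rw [← Real.rpow_neg_one ξ, ← Real.rpow_add hξ]
      ring_nf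
    rw [h5, ← integral_const_mul]
    refine setIntegral_congr_fun measurableSet_Ioi fun u _ => ?_
    rw [hF]
    push_cast
    ring
  -- integrability of F ξ
  have hFint : ∀ ξ : ℝ, 0 < ξ → IntegrableOn (F ξ) (Set.Ioi 0) := by
    intro ξ hξ
    have hcomp : IntegrableOn (fun u => Φ (ξ⁻¹ * u)) (Set.Ioi 0) := by
      have h9 := (integrableOn_Ioi_comp_mul_left_iff Φ 0 (inv_pos.mpr hξ)).mpr
      simpa using h9 (by simpa using hΦint)
    refine Integrable.mono' ((hcomp.const_mul (2 * ξ ^ (-(1+α))))) ?_ ?_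
    · apply Measurable.aestronglyMeasurable
      fun_prop
    · filter_upwards [ae_restrict_mem measurableSet_Ioi] with u hu
      rw [hF]
      rw [norm_mul, Complex.norm_real, Real.norm_eq_abs,
        _root_.abs_of_nonneg (mul_nonneg (Real.rpow_nonneg (le_of_lt hξ) _) (hΦpos _))]
      have hb2 : ‖(1:ℂ) - Complex.exp (Complex.I * u)‖ ≤ 2 := by
        refine (expBound u).trans ?_
        nlinarith [min_le_right |u| 1]
      have heq : u / ξ = ξ⁻¹ * u := by ring
      calc ‖(1:ℂ) - Complex.exp (Complex.I * u)‖ * (ξ ^ (-(1+α)) * Φ (u / ξ))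
          ≤ 2 * (ξ ^ (-(1+α)) * Φ (u / ξ)) := by
            refine mul_le_mul_of_nonneg_right hb2 ?_
            exact mul_nonneg (Real.rpow_nonneg (le_of_lt hξ) _) (hΦpos _)
        _ = 2 * ξ ^ (-(1+α)) * Φ (ξ⁻¹ * u) := by rw [heq]; ring
  -- DCT for G
  have hGlim : Tendsto (fun ξ => ∫ u in Set.Ioi (0:ℝ), G ξ u)
      (nhdsWithin 0 (Set.Ioi 0)) (nhds L) := by
    rw [hL]
    refine tendsto_integral_filter_of_dominated_convergence bound ?_ ?_ ?_ ?_
    · filter_upwards [self_mem_nhdsWithin] with ξ _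
      apply Measurable.aestronglyMeasurable
      apply Measurable.indicator ?_ measurableSet_Ioi
      fun_prop
    · filter_upwards [self_mem_nhdsWithin] with ξ hξ
      have hξ0 : (0:ℝ) < ξ := hξ
      filter_upwards [ae_restrict_mem measurableSet_Ioi] with u hu
      have hu0 : (0:ℝ) < u := hu
      have hbnn : 0 ≤ bound u := by
        rw [hbound]
        have : (0:ℝ) ≤ min u 1 := le_min hu0.le zero_le_one
        positivity
      by_cases hmem : u ∈ Set.Ioi (R * ξ)
      · rw [hG]
        simp only [Set.indicator_of_mem hmem]
        have hkey : ξ ^ (-(1+α)) * Φ (u / ξ) ≤ C * u ^ (-(1+α)) := by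
          have hdiv : (0:ℝ) < u / ξ := div_pos hu0 hξ0
          have hRle : R ≤ u / ξ := (le_div_iff₀ hξ0).mpr (le_of_lt hmem)
          have h6 := hCb _ hRle
          have hpow : (0:ℝ) < (u / ξ) ^ (1+α) := Real.rpow_pos_of_pos hdiv _
          have h7 : Φ (u / ξ) ≤ C / (u / ξ) ^ (1+α) := by
            rw [le_div_iff₀ hpow]
            nlinarith
          have h8 : ξ ^ (-(1+α)) * (C / (u / ξ) ^ (1+α)) = C * u ^ (-(1+α)) := by
            rw [Real.div_rpow hu0.le hξ0.le, Real.rpow_neg hξ0.le, Real.rpow_neg hu0.le]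
            have h10 : (0:ℝ) < ξ ^ (1+α) := Real.rpow_pos_of_pos hξ0 _
            have h11 : (0:ℝ) < u ^ (1+α) := Real.rpow_pos_of_pos hu0 _
            field_simp
          calc ξ ^ (-(1+α)) * Φ (u / ξ) ≤ ξ ^ (-(1+α)) * (C / (u / ξ) ^ (1+α)) := by
                refine mul_le_mul_of_nonneg_left h7 (Real.rpow_nonneg hξ0.le _)
            _ = C * u ^ (-(1+α)) := h8
        rw [hF, norm_mul, Complex.norm_real, Real.norm_eq_abs,
          _root_.abs_of_nonneg (mul_nonneg (Real.rpow_nonneg hξ0.le _) (hΦpos _))]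
        have hb1 : ‖(1:ℂ) - Complex.exp (Complex.I * u)‖ ≤ 2 * min u 1 := by
          have := expBound u
          rwa [_root_.abs_of_pos hu0] at this
        have hmin : (0:ℝ) ≤ min u 1 := le_min hu0.le zero_le_one
        calc ‖(1:ℂ) - Complex.exp (Complex.I * u)‖ * (ξ ^ (-(1+α)) * Φ (u / ξ))
            ≤ (2 * min u 1) * (C * u ^ (-(1+α))) := by
              refine mul_le_mul hb1 hkey ?_ (by positivity)
              exact mul_nonneg (Real.rpow_nonneg hξ0.le _) (hΦpos _)
          _ = bound u := by rw [hbound]; ring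
      · rw [hG]
        simp only [Set.indicator_of_notMem hmem]
        simpa using hbnn
    · have := (boundInt h0 h1).const_mul (2 * C)
      rw [hbound]
      exact this
    · filter_upwards [ae_restrict_mem measurableSet_Ioi] with u hu
      have hu0 : (0:ℝ) < u := hu
      have hq : Tendsto (fun ξ : ℝ => u / ξ) (nhdsWithin 0 (Set.Ioi 0)) atTop := by
        have h12 : Tendsto (fun ξ : ℝ => u * ξ⁻¹) (nhdsWithin 0 (Set.Ioi 0)) atTop :=
          Tendsto.const_mul_atTop hu0 tendsto_inv_nhdsGT_zero
        exact h12.congr fun ξ => (div_eq_mul_inv u ξ).symm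
      have hC1 : Tendsto (fun ξ : ℝ => ξ ^ (-(1+α)) * Φ (u / ξ))
          (nhdsWithin 0 (Set.Ioi 0)) (nhds (α * c ^ α * u ^ (-(1+α)))) := by
        have h7 := (hΦtail.comp hq).mul_const (u ^ (-(1+α)))
        refine Tendsto.congr' ?_ h7
        filter_upwards [self_mem_nhdsWithin] with ξ hξ
        have hξ0 : (0:ℝ) < ξ := hξ
        have h13 : (u / ξ) ^ (1+α) * u ^ (-(1+α)) = ξ ^ (-(1+α)) := by
          rw [Real.div_rpow hu0.le hξ0.le, Real.rpow_neg hξ0.le, Real.rpow_neg hu0.le]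
          have h10 : (0:ℝ) < ξ ^ (1+α) := Real.rpow_pos_of_pos hξ0 _
          have h11 : (0:ℝ) < u ^ (1+α) := Real.rpow_pos_of_pos hu0 _
          field_simp
        show (u / ξ) ^ (1+α) * Φ (u / ξ) * u ^ (-(1+α)) = ξ ^ (-(1+α)) * Φ (u / ξ)
        rw [← h13]; ring
      have h8 : Tendsto (fun ξ : ℝ => F ξ u) (nhdsWithin 0 (Set.Ioi 0))
          (nhds ((1 - Complex.exp (Complex.I * u)) *
            ((α * c ^ α * u ^ (-(1+α)) : ℝ) : ℂ))) := by
        have h14 := (Complex.continuous_ofReal.tendsto _).comp hC1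
        exact h14.const_mul _
      refine Tendsto.congr' ?_ h8
      filter_upwards [Ioo_mem_nhdsGT_of_mem ⟨le_refl (0:ℝ), div_pos hu0 hR0⟩] with ξ hξ
      have hmem : u ∈ Set.Ioi (R * ξ) := by
        have := hξ.2
        have := (lt_div_iff₀ hR0).mp this
        simpa [Set.mem_Ioi] using by nlinarith
      rw [hG]
      simp only [Set.indicator_of_mem hmem]
  -- difference between F and G integrals tends to 0
  have hdiff : Tendsto (fun ξ => (∫ u in Set.Ioi (0:ℝ), F ξ u) - ∫ u in Set.Ioi (0:ℝ), G ξ u)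
      (nhdsWithin 0 (Set.Ioi 0)) (nhds 0) := by
    apply squeeze_zero_norm' (a := fun ξ => (2 * M * R ^ 2) * ξ ^ (1 - α))
    · filter_upwards [self_mem_nhdsWithin] with ξ hξ
      have hξ0 : (0:ℝ) < ξ := hξ
      have hRξ : (0:ℝ) < R * ξ := mul_pos hR0 hξ0
      have hGeq : (∫ u in Set.Ioi (0:ℝ), G ξ u) = ∫ u in Set.Ioi (R * ξ), F ξ u := by
        rw [hG]
        rw [setIntegral_indicator measurableSet_Ioi]
        congr 1
        rw [Set.Ioi_inter_Ioi, max_eq_right hRξ.le]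
      have hsplit : (∫ u in Set.Ioi (0:ℝ), F ξ u)
          = (∫ u in Set.Ioc (0:ℝ) (R * ξ), F ξ u) + ∫ u in Set.Ioi (R * ξ), F ξ u := by
        rw [← setIntegral_union (Set.Ioc_disjoint_Ioi le_rfl) measurableSet_Ioi
          ((hFint ξ hξ0).mono_set Set.Ioc_subset_Ioi_self)
          ((hFint ξ hξ0).mono_set (Set.Ioi_subset_Ioi hRξ.le)),
          Set.Ioc_union_Ioi_eq_Ioi hRξ.le]
      rw [hGeq, hsplit, add_sub_cancel_right]
      have hFb : ∀ u ∈ Set.Ioc (0:ℝ) (R * ξ), ‖F ξ u‖ ≤ 2 * M * ξ ^ (-(1+α)) * (R * ξ) := by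
        intro u hu
        rw [hF, norm_mul, Complex.norm_real, Real.norm_eq_abs,
          _root_.abs_of_nonneg (mul_nonneg (Real.rpow_nonneg hξ0.le _) (hΦpos _))]
        have hb1 : ‖(1:ℂ) - Complex.exp (Complex.I * u)‖ ≤ 2 * u := by
          refine (expBound u).trans ?_
          rw [_root_.abs_of_pos hu.1]
          nlinarith [min_le_left u 1, hu.1]
        calc ‖(1:ℂ) - Complex.exp (Complex.I * u)‖ * (ξ ^ (-(1+α)) * Φ (u / ξ))
            ≤ (2 * u) * (ξ ^ (-(1+α)) * M) := by
              refine mul_le_mul hb1 ?_ ?_ (by linarith [hu.1])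
              · exact mul_le_mul_of_nonneg_left (hM _) (Real.rpow_nonneg hξ0.le _)
              · exact mul_nonneg (Real.rpow_nonneg hξ0.le _) (hΦpos _)
          _ ≤ (2 * (R * ξ)) * (ξ ^ (-(1+α)) * M) := by
              refine mul_le_mul_of_nonneg_right ?_ (by positivity)
              nlinarith [hu.2]
          _ = 2 * M * ξ ^ (-(1+α)) * (R * ξ) := by ring
      have hnorm1 : ‖∫ u in Set.Ioc (0:ℝ) (R * ξ), F ξ u‖
          ≤ (2 * M * ξ ^ (-(1+α)) * (R * ξ)) * (volume (Set.Ioc (0:ℝ) (R * ξ))).toReal :=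
        norm_setIntegral_le_of_norm_le_const measure_Ioc_lt_top hFb
      have hvol : (volume (Set.Ioc (0:ℝ) (R * ξ))).toReal = R * ξ := by
        rw [Real.volume_Ioc, sub_zero, ENNReal.toReal_ofReal hRξ.le]
      rw [hvol] at hnorm1
      refine hnorm1.trans (le_of_eq ?_)
      have hpow : ξ ^ (-(1+α)) * ξ * ξ = ξ ^ (1 - α) := by
        have : (1 : ℝ) - α = (-(1+α)) + 1 + 1 := by ring
        rw [this, Real.rpow_add hξ0, Real.rpow_add hξ0, Real.rpow_one]
      calc 2 * M * ξ ^ (-(1+α)) * (R * ξ) * (R * ξ)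
          = 2 * M * R ^ 2 * (ξ ^ (-(1+α)) * ξ * ξ) := by ring
        _ = 2 * M * R ^ 2 * ξ ^ (1 - α) := by rw [hpow]
    · have hrp : Tendsto (fun ξ : ℝ => ξ ^ (1 - α)) (nhdsWithin 0 (Set.Ioi 0)) (nhds 0) := by
        have hcont : ContinuousAt (fun ξ : ℝ => ξ ^ (1 - α)) 0 :=
          Real.continuousAt_rpow_const 0 (1 - α) (Or.inr (by linarith))
        have := hcont.tendsto.mono_left (nhdsWithin_le_nhds (s := Set.Ioi (0:ℝ)))
        rwa [Real.zero_rpow (by linarith : (1:ℝ) - α ≠ 0)] at this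
      have := hrp.const_mul (2 * M * R ^ 2)
      simpa using this
  -- combine
  have hFlim : Tendsto (fun ξ => ∫ u in Set.Ioi (0:ℝ), F ξ u)
      (nhdsWithin 0 (Set.Ioi 0)) (nhds L) := by
    have h15 := hGlim.add hdiff
    rw [add_zero] at h15
    refine Tendsto.congr (fun ξ => ?_) h15
    ring
  -- identify the limit
  have hLval : L = -(((α * c ^ α : ℝ)) : ℂ) *
      ∫ u in Set.Ioi (0:ℝ), (Complex.exp (Complex.I * u) - 1) / ((u ^ (1+α) : ℝ) : ℂ) := by
    rw [hL, ← integral_const_mul]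
    refine setIntegral_congr_fun measurableSet_Ioi fun u hu => ?_
    have hu0 : (0:ℝ) < u := hu
    have hne : ((u ^ (1+α) : ℝ) : ℂ) ≠ 0 := by
      exact_mod_cast ne_of_gt (Real.rpow_pos_of_pos hu0 _)
    rw [Real.rpow_neg hu0.le]
    push_cast
    field_simp
    ring
  rw [hLval] at hFlim
  refine Tendsto.congr' ?_ hFlim
  filter_upwards [self_mem_nhdsWithin] with ξ hξ
  exact (hid ξ hξ).symm


/-- pointwise limit of the Fourier transform of the autocovariance of
`h`-increments of the renormalized nearly unstable Hawkes process. If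
`T^α(1 − a_T) → 0`, then for fixed `z > 0`,
`h C_μ T^{−2α} ĝ_z^h / |1 − a_T Φ̂(z/T)|² → h C_μ ĝ_z^h / (|θ(1+α)|² α² c^{2α} z^{2α})`. -/
theorem hawkes_covariance_fourier_limit
    (α c Cμ h : ℝ) (hα : α ∈ Set.Ioo (0:ℝ) (1/2)) (hc : 0 < c) (hCμ : 0 < Cμ) (hh : 0 < h)
    (Φ : ℝ → ℝ)
    (hΦpos : ∀ t : ℝ, 0 ≤ Φ t)
    (hΦbdd : ∃ M : ℝ, ∀ t : ℝ, Φ t ≤ M)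
    (hΦmeas : Measurable Φ)
    (hΦint : IntegrableOn Φ (Set.Ioi (0:ℝ)))
    (hΦnorm : (∫ t in Set.Ioi (0:ℝ), Φ t) = 1)
    (hΦtail : Tendsto (fun x : ℝ => x ^ (1 + α) * Φ x) atTop (nhds (α * c ^ α)))
    (Φhat : ℝ → ℂ)
    (hΦhat : ∀ ξ : ℝ, Φhat ξ = ∫ t in Set.Ioi (0:ℝ), (Φ t : ℂ) * Complex.exp (Complex.I * ξ * t))
    (ghat : ℝ → ℂ)
    (hghat : ∀ z : ℝ, ghat z = ∫ t : ℝ, ((max (1 - |t| / h) 0 : ℝ) : ℂ) *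
      Complex.exp (Complex.I * z * t))
    (θ : ℂ)
    (hθ : θ = ∫ u in Set.Ioi (0:ℝ), (Complex.exp (Complex.I * u) - 1) / (u ^ (1 + α) : ℝ))
    (a : ℝ → ℝ)
    (ha : ∀ T : ℝ, a T ∈ Set.Ioo (0:ℝ) 1)
    (haT : Tendsto (fun T : ℝ => T ^ α * (1 - a T)) atTop (nhds 0)) :
    ∀ z : ℝ, 0 < z →
      Tendsto
        (fun T : ℝ =>
          ((h * Cμ * T ^ (-(2 * α)) : ℝ) : ℂ) * ghat z /
            ((‖1 - (a T : ℂ) * Φhat (z / T)‖ ^ 2 : ℝ) : ℂ))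
        atTop
        (nhds (((h * Cμ / (‖θ‖ ^ 2 * α ^ 2 * c ^ (2 * α) * z ^ (2 * α)) : ℝ) : ℂ)
          * ghat z)) := by
  intro z hz
  obtain ⟨hα0, hα2⟩ := hα
  have hα1 : α < 1 := lt_trans hα2 (by norm_num)
  obtain ⟨M, hM⟩ := hΦbdd
  have hθne : θ ≠ 0 := by rw [hθ]; exact thetaNeZero hα0 hα1
  -- composition with ξ = z / T
  have h_zT : Tendsto (fun T : ℝ => z / T) atTop (nhdsWithin 0 (Set.Ioi 0)) := by
    rw [tendsto_nhdsWithin_iff]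
    constructor
    · have h2 := tendsto_inv_atTop_zero (𝕜 := ℝ)
      have h3 := h2.const_mul z
      rw [mul_zero] at h3
      exact h3.congr fun T => (div_eq_mul_inv z T).symm
    · filter_upwards [eventually_gt_atTop (0:ℝ)] with T hT
      exact div_pos hz hT
  have hA : Tendsto (fun T : ℝ => (((z/T) ^ (-α) : ℝ) : ℂ) * (1 - Φhat (z/T))) atTop
      (nhds (-(((α * c ^ α : ℝ)) : ℂ) * θ)) := by
    rw [hθ]
    have h4 := (coreLimit hα0 hα1 hc Φ hΦpos M hM hΦmeas hΦint hΦnorm hΦtail).comp h_zT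
    refine Tendsto.congr (fun T => ?_) h4
    rw [Function.comp_apply, hΦhat]
  have hB : Tendsto (fun T : ℝ => ((T ^ α : ℝ) : ℂ) * (1 - Φhat (z/T))) atTop
      (nhds (-((z ^ α * (α * c ^ α) : ℝ) : ℂ) * θ)) := by
    have h5 := hA.const_mul (((z ^ α : ℝ)) : ℂ)
    have h5' : Tendsto (fun T : ℝ => ((z ^ α : ℝ) : ℂ) * ((((z/T) ^ (-α) : ℝ) : ℂ) *
        (1 - Φhat (z/T)))) atTop (nhds (-((z ^ α * (α * c ^ α) : ℝ) : ℂ) * θ)) := by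
      refine h5.congr' (by filter_upwards with T; ring) |>.mono_right (le_of_eq ?_)
      congr 1
      push_cast
      ring
    refine Tendsto.congr' ?_ h5'
    filter_upwards [eventually_gt_atTop (0:ℝ)] with T hT
    have h6 : z ^ α * (z/T) ^ (-α) = T ^ α := by
      rw [Real.rpow_neg (div_pos hz hT).le, Real.div_rpow hz.le hT.le]
      have hz1 : (0:ℝ) < z ^ α := Real.rpow_pos_of_pos hz _
      have hT1 : (0:ℝ) < T ^ α := Real.rpow_pos_of_pos hT _
      field_simp
    calc ((z ^ α : ℝ) : ℂ) * ((((z/T) ^ (-α) : ℝ) : ℂ) * (1 - Φhat (z/T)))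
        = (((z ^ α * (z/T) ^ (-α) : ℝ)) : ℂ) * (1 - Φhat (z/T)) := by push_cast; ring
      _ = ((T ^ α : ℝ) : ℂ) * (1 - Φhat (z/T)) := by rw [h6]
  -- a T → 1
  have haT1 : Tendsto a atTop (nhds 1) := by
    have hz0 : Tendsto (fun T => a T - 1) atTop (nhds 0) := by
      apply squeeze_zero_norm' (a := fun T : ℝ => T ^ α * (1 - a T))
      · filter_upwards [eventually_ge_atTop (1:ℝ)] with T hT
        have h7 := (ha T).1
        have h8 := (ha T).2
        have h9 : (1:ℝ) ≤ T ^ α := Real.one_le_rpow hT hα0.le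
        rw [Real.norm_eq_abs, abs_of_nonpos (by linarith)]
        nlinarith
      · exact haT
    have := hz0.add (tendsto_const_nhds (x := (1:ℝ)))
    rw [zero_add] at this
    exact this.congr fun T => by ring
  -- main complex limit
  have hC2 : Tendsto (fun T : ℝ => ((T ^ α : ℝ) : ℂ) * (1 - (a T : ℂ) * Φhat (z/T))) atTop
      (nhds (-((z ^ α * (α * c ^ α) : ℝ) : ℂ) * θ)) := by
    have h10 : Tendsto (fun T : ℝ => Complex.ofReal (T ^ α * (1 - a T))) atTop (nhds 0) := by
      have := (Complex.continuous_ofReal.tendsto 0).comp haT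
      simpa [Function.comp_def] using this
    have h11 : Tendsto (fun T : ℝ => ((a T : ℝ) : ℂ)) atTop (nhds 1) := by
      have := (Complex.continuous_ofReal.tendsto 1).comp haT1
      simpa [Function.comp_def] using this
    have h12 := h10.add (h11.mul hB)
    rw [zero_add, one_mul] at h12
    refine Tendsto.congr (fun T => ?_) h12
    push_cast
    ring
  -- limit of the squared modulus
  have hq : Tendsto (fun T : ℝ =>
      ‖((T ^ α : ℝ) : ℂ) * (1 - (a T : ℂ) * Φhat (z/T))‖ ^ 2) atTop
      (nhds (‖-((z ^ α * (α * c ^ α) : ℝ) : ℂ) * θ‖ ^ 2)) := by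
    have h13 := (continuous_norm.tendsto _).comp hC2
    exact h13.pow 2
  have habsw : ‖-((z ^ α * (α * c ^ α) : ℝ) : ℂ) * θ‖
      = z ^ α * (α * c ^ α) * ‖θ‖ := by
    rw [norm_mul, norm_neg, Complex.norm_real, Real.norm_eq_abs,
      _root_.abs_of_nonneg (by positivity : (0:ℝ) ≤ z ^ α * (α * c ^ α))]
  have hwpos : 0 < ‖-((z ^ α * (α * c ^ α) : ℝ) : ℂ) * θ‖ ^ 2 := by
    rw [habsw]
    have h14 : 0 < ‖θ‖ := by
      rw [norm_pos_iff]
      exact hθne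
    have : 0 < z ^ α := Real.rpow_pos_of_pos hz _
    have : 0 < c ^ α := Real.rpow_pos_of_pos hc _
    positivity
  have hfrac : Tendsto (fun T : ℝ => (h * Cμ) /
      ‖((T ^ α : ℝ) : ℂ) * (1 - (a T : ℂ) * Φhat (z/T))‖ ^ 2) atTop
      (nhds ((h * Cμ) / ‖-((z ^ α * (α * c ^ α) : ℝ) : ℂ) * θ‖ ^ 2)) :=
    tendsto_const_nhds.div hq (ne_of_gt hwpos)
  have hfinal := ((Complex.continuous_ofReal.tendsto _).comp hfrac).mul_const (ghat z)
  -- identify the limit constant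
  have hcst : (h * Cμ) / ‖-((z ^ α * (α * c ^ α) : ℝ) : ℂ) * θ‖ ^ 2
      = h * Cμ / (‖θ‖ ^ 2 * α ^ 2 * c ^ (2 * α) * z ^ (2 * α)) := by
    rw [habsw]
    congr 1
    rw [show (2:ℝ) * α = α + α by ring, Real.rpow_add hz, Real.rpow_add hc]
    ring
  rw [hcst] at hfinal
  refine Tendsto.congr' ?_ hfinal
  filter_upwards [eventually_gt_atTop (0:ℝ)] with T hT
  have hTα : (0:ℝ) < T ^ α := Real.rpow_pos_of_pos hT _
  have habs2 : ‖((T ^ α : ℝ) : ℂ) * (1 - (a T : ℂ) * Φhat (z/T))‖ ^ 2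
      = (T ^ α) ^ 2 * ‖1 - (a T : ℂ) * Φhat (z/T)‖ ^ 2 := by
    rw [norm_mul, Complex.norm_real, Real.norm_eq_abs, _root_.abs_of_pos hTα, mul_pow]
  have hrpow : T ^ (-(2 * α)) = ((T ^ α) ^ 2)⁻¹ := by
    rw [show -(2 * α) = -(α + α) by ring, Real.rpow_neg hT.le, Real.rpow_add hT, sq]
  show ((h * Cμ / ‖((T ^ α : ℝ) : ℂ) * (1 - (a T : ℂ) * Φhat (z/T))‖ ^ 2 : ℝ) : ℂ)
      * ghat z
      = ((h * Cμ * T ^ (-(2 * α)) : ℝ) : ℂ) * ghat z /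
        ((‖1 - (a T : ℂ) * Φhat (z/T)‖ ^ 2 : ℝ) : ℂ)
  rw [habs2, hrpow]
  push_cast
  rw [div_eq_mul_inv, div_eq_mul_inv, mul_inv]
  ring
end

section
/- Let α ∈ (0,1/2), h > 0 and set H := 1/2 + α. Then for every t ∈ ℝ, ∫_ℝ (1 − |t−s|/h)^+ · |s|^{2α−1} ds = (|t+h|^{2H} + |t−h|^{2H} − 2|t|^{2H}) / (2H(2H−1)h). -/
open MeasureTheory Set Filter

/-- `|x|^p` is interval integrable for `p > -1`. -/
lemma aux_intervalIntegrable (p : ℝ) (hp : -1 < p) (a b : ℝ) :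
    IntervalIntegrable (fun x : ℝ => |x| ^ p) volume a b := by
  suffices H : ∀ c : ℝ, IntervalIntegrable (fun x : ℝ => |x| ^ p) volume 0 c by
    exact (H a).symm.trans (H b)
  have Hpos : ∀ c : ℝ, 0 ≤ c → IntervalIntegrable (fun x : ℝ => |x| ^ p) volume 0 c := by
    intro c hc
    refine (intervalIntegral.intervalIntegrable_rpow' hp (a := 0) (b := c)).congr ?_
    intro x hx
    rw [uIoc_of_le hc] at hx
    simp only [abs_of_pos hx.1]
  intro c
  rcases le_or_gt 0 c with hc | hc
  · exact Hpos c hc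
  · have h1 : IntervalIntegrable (fun x : ℝ => |x| ^ p) volume 0 (-c) :=
      Hpos (-c) (by linarith)
    have h2 := (IntervalIntegrable.iff_comp_neg (by simp)).mp h1
    simpa using h2

lemma aux_integral_zero (p : ℝ) (hp : -1 < p) (c : ℝ) :
    ∫ x in (0:ℝ)..c, |x| ^ p = c * |c| ^ p / (p + 1) := by
  have hp1 : p + 1 ≠ 0 := by linarith
  have Hpos : ∀ c : ℝ, 0 ≤ c → ∫ x in (0:ℝ)..c, |x| ^ p = c * |c| ^ p / (p + 1) := by
    intro c hc
    have h1 : ∫ x in (0:ℝ)..c, |x| ^ p = ∫ x in (0:ℝ)..c, x ^ p := by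
      apply intervalIntegral.integral_congr
      intro x hx
      rw [uIcc_of_le hc] at hx
      simp only [abs_of_nonneg hx.1]
    rw [h1, integral_rpow (Or.inl hp), Real.zero_rpow hp1, abs_of_nonneg hc,
      Real.rpow_add' hc hp1, Real.rpow_one]
    ring
  rcases le_or_gt 0 c with hc | hc
  · exact Hpos c hc
  · have h1 : ∫ x in (0:ℝ)..c, |x| ^ p = ∫ x in (0:ℝ)..c, |(-x)| ^ p := by
      simp only [abs_neg]
    rw [h1, intervalIntegral.integral_comp_neg (fun x => |x| ^ p), neg_zero,
      intervalIntegral.integral_symm, Hpos (-c) (by linarith)]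
    rw [abs_neg, abs_of_nonpos hc.le]
    ring

lemma aux_integral_abs_rpow (p : ℝ) (hp : -1 < p) (a b : ℝ) :
    ∫ x in a..b, |x| ^ p = (b * |b| ^ p - a * |a| ^ p) / (p + 1) := by
  have hadd := intervalIntegral.integral_add_adjacent_intervals
    (aux_intervalIntegrable p hp a 0) (aux_intervalIntegrable p hp 0 b)
  have ha0 : ∫ x in a..(0:ℝ), |x| ^ p = -(a * |a| ^ p / (p + 1)) := by
    rw [intervalIntegral.integral_symm, aux_integral_zero p hp a]
  rw [← hadd, ha0, aux_integral_zero p hp b]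
  ring

/-- derivative of `|x|^(p+2)/(p+2)` is `x * |x|^p`, everywhere, for `-1 < p`. -/
lemma aux_hasDerivAt (p : ℝ) (hp : -1 < p) (x : ℝ) :
    HasDerivAt (fun y : ℝ => |y| ^ (p + 2) / (p + 2)) (x * |x| ^ p) x := by
  have hp2 : (0:ℝ) < p + 2 := by linarith
  have hp1 : (0:ℝ) < p + 1 := by linarith
  rcases lt_trichotomy x 0 with hx | hx | hx
  · -- x < 0
    have hne : (-x) ≠ 0 := by intro h; nlinarith [neg_eq_zero.mp h]
    have hinner : HasDerivAt (fun y : ℝ => -y) (-1 : ℝ) x := hasDerivAt_neg x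
    have houter := Real.hasDerivAt_rpow_const (x := -x) (p := p + 2) (Or.inl hne)
    have hcomp := houter.comp x hinner
    have hderiv := hcomp.div_const (p + 2)
    have heq : (fun y : ℝ => (fun u : ℝ => u ^ (p + 2)) (-y) / (p + 2))
        =ᶠ[nhds x] (fun y : ℝ => |y| ^ (p + 2) / (p + 2)) := by
      filter_upwards [Iio_mem_nhds hx] with y hy
      simp only [abs_of_neg (mem_Iio.mp hy)]
    have := hderiv.congr_of_eventuallyEq heq.symm
    refine this.congr_deriv ?_
    have hxabs : |x| = -x := abs_of_neg hx
    have h1 : (-x) ^ (p + 2 - 1) = (-x) ^ (p + 1) := by congr 1; ring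
    rw [hxabs, h1, show p + 1 = p + 1 from rfl,
      Real.rpow_add' (by linarith : (0:ℝ) ≤ -x) (by linarith : p + 1 ≠ 0), Real.rpow_one]
    field_simp
  · -- x = 0
    subst hx
    have hval : (0:ℝ) * |0| ^ p = 0 := by rw [zero_mul]
    rw [hasDerivAt_iff_tendsto_slope, hval]
    apply squeeze_zero_norm' (a := fun y : ℝ => |y| ^ (p + 1) / (p + 2))
    · filter_upwards [self_mem_nhdsWithin] with y hy
      have hy0 : y ≠ 0 := hy
      have hyabs : (0:ℝ) < |y| := abs_pos.mpr hy0
      have hs : slope (fun y : ℝ => |y| ^ (p + 2) / (p + 2)) 0 y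
          = |y| ^ (p + 2) / (p + 2) / y := by
        rw [slope_def_field]
        simp [Real.zero_rpow (by linarith : p + 2 ≠ 0)]
      have h3 : |y| ^ (p + 2) = |y| ^ (p + 1) * |y| := by
        rw [show p + 2 = (p + 1) + 1 by ring, Real.rpow_add hyabs, Real.rpow_one]
      rw [hs, Real.norm_eq_abs, abs_div, abs_div,
        abs_of_nonneg (Real.rpow_nonneg (abs_nonneg y) _), abs_of_pos hp2, h3]
      apply le_of_eq
      field_simp
    · have hc : ContinuousAt (fun y : ℝ => |y| ^ (p + 1)) 0 := by
        exact (Real.continuousAt_rpow_const _ _ (Or.inr hp1.le)).comp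
          continuous_abs.continuousAt
      have htend : Filter.Tendsto (fun y : ℝ => |y| ^ (p + 1) / (p + 2))
          (nhdsWithin 0 {(0:ℝ)}ᶜ) (nhds (|(0:ℝ)| ^ (p + 1) / (p + 2))) :=
        (hc.tendsto.div_const (p + 2)).mono_left nhdsWithin_le_nhds
      simpa [Real.zero_rpow (ne_of_gt hp1)] using htend
  · -- 0 < x
    have hne : x ≠ 0 := ne_of_gt hx
    have houter := Real.hasDerivAt_rpow_const (x := x) (p := p + 2) (Or.inl hne)
    have hderiv := houter.div_const (p + 2)
    have heq : (fun y : ℝ => y ^ (p + 2) / (p + 2))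
        =ᶠ[nhds x] (fun y : ℝ => |y| ^ (p + 2) / (p + 2)) := by
      filter_upwards [Ioi_mem_nhds hx] with y hy
      simp only [abs_of_pos (mem_Ioi.mp hy)]
    have := hderiv.congr_of_eventuallyEq heq.symm
    refine this.congr_deriv ?_
    have h1 : x ^ (p + 2 - 1) = x ^ (p + 1) := by congr 1; ring
    rw [abs_of_pos hx, h1,
      Real.rpow_add' hx.le (by linarith : p + 1 ≠ 0), Real.rpow_one]
    field_simp

lemma aux_integral_mul_abs_rpow (p : ℝ) (hp : -1 < p) (a b : ℝ) :
    ∫ x in a..b, x * |x| ^ p = (|b| ^ (p + 2) - |a| ^ (p + 2)) / (p + 2) := by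
  have hint : IntervalIntegrable (fun x : ℝ => x * |x| ^ p) volume a b :=
    (aux_intervalIntegrable p hp a b).continuousOn_mul continuousOn_id
  rw [intervalIntegral.integral_eq_sub_of_hasDerivAt
    (fun x _ => aux_hasDerivAt p hp x) hint]
  ring

/-- convolution of the triangle function with the Riesz kernel:
for `α ∈ (0,1/2)`, `h > 0` and `H = 1/2 + α`,
`∫_ℝ (1 − |t−s|/h)⁺ |s|^{2α−1} ds = (|t+h|^{2H} + |t−h|^{2H} − 2|t|^{2H}) / (2H(2H−1)h)`,
the (rescaled) autocovariance of `h`-increments of fractional Brownian motion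
of Hurst index `H`. -/
theorem triangle_conv_riesz_kernel
    (α h : ℝ) (hα : α ∈ Set.Ioo (0:ℝ) (1/2)) (hh : 0 < h) :
    ∀ t : ℝ,
      ∫ s : ℝ, max (1 - |t - s| / h) 0 * |s| ^ (2 * α - 1) =
        (|t + h| ^ (2 * (1/2 + α)) + |t - h| ^ (2 * (1/2 + α))
            - 2 * |t| ^ (2 * (1/2 + α))) /
          (2 * (1/2 + α) * (2 * (1/2 + α) - 1) * h) := by
  obtain ⟨hα0, hα2⟩ := hα
  intro t
  set p : ℝ := 2 * α - 1 with hp_def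
  clear_value p
  have hp : -1 < p := by rw [hp_def]; linarith
  have hp1 : (0:ℝ) < p + 1 := by linarith
  have hp2 : (0:ℝ) < p + 2 := by linarith
  have hexp : 2 * (1/2 + α) = p + 2 := by rw [hp_def]; ring
  rw [hexp]
  -- step 1: reduce to an interval integral over [t-h, t+h]
  have key : (fun s : ℝ => max (1 - |t - s| / h) 0 * |s| ^ p) =
      (Ioc (t - h) (t + h)).indicator
        (fun s : ℝ => max (1 - |t - s| / h) 0 * |s| ^ p) := by
    funext s
    by_cases hs : s ∈ Ioc (t - h) (t + h)
    · rw [indicator_of_mem hs]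
    · rw [indicator_of_notMem hs]
      have habs : h ≤ |t - s| := by
        rw [mem_Ioc, not_and_or] at hs
        rcases hs with hs | hs
        · push_neg at hs
          calc h ≤ t - s := by linarith
          _ ≤ |t - s| := le_abs_self _
        · push_neg at hs
          calc h ≤ -(t - s) := by linarith
          _ ≤ |t - s| := neg_le_abs _
      have hmax : max (1 - |t - s| / h) 0 = 0 := by
        apply max_eq_right
        have : 1 ≤ |t - s| / h := (one_le_div hh).mpr habs
        linarith
      rw [hmax, zero_mul]
  rw [key, integral_indicator measurableSet_Ioc,
    ← intervalIntegral.integral_of_le (by linarith : t - h ≤ t + h)]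
  -- step 2: split at t
  have hcont : ∀ a b : ℝ, ContinuousOn (fun s : ℝ => max (1 - |t - s| / h) 0) (uIcc a b) := by
    intro a b
    apply Continuous.continuousOn
    fun_prop
  have hi1 : IntervalIntegrable (fun s : ℝ => max (1 - |t - s| / h) 0 * |s| ^ p)
      volume (t - h) t :=
    (aux_intervalIntegrable p hp _ _).continuousOn_mul (hcont _ _)
  have hi2 : IntervalIntegrable (fun s : ℝ => max (1 - |t - s| / h) 0 * |s| ^ p)
      volume t (t + h) :=
    (aux_intervalIntegrable p hp _ _).continuousOn_mul (hcont _ _)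
  rw [← intervalIntegral.integral_add_adjacent_intervals hi1 hi2]
  -- step 3: identify integrands on each interval
  have e1 : ∫ s in (t - h)..t, max (1 - |t - s| / h) 0 * |s| ^ p
      = ∫ s in (t - h)..t, ((1 - t / h) * |s| ^ p + (1 / h) * (s * |s| ^ p)) := by
    apply intervalIntegral.integral_congr
    intro s hs
    rw [uIcc_of_le (by linarith : t - h ≤ t)] at hs
    obtain ⟨hs1, hs2⟩ := hs
    have habs : |t - s| = t - s := abs_of_nonneg (by linarith)
    have hmax : max (1 - |t - s| / h) 0 = 1 - (t - s) / h := by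
      rw [habs]
      apply max_eq_left
      have : (t - s) / h ≤ 1 := (div_le_one hh).mpr (by linarith)
      linarith
    simp only [hmax]
    field_simp
    ring
  have e2 : ∫ s in t..(t + h), max (1 - |t - s| / h) 0 * |s| ^ p
      = ∫ s in t..(t + h), ((1 + t / h) * |s| ^ p + (-(1 / h)) * (s * |s| ^ p)) := by
    apply intervalIntegral.integral_congr
    intro s hs
    rw [uIcc_of_le (by linarith : t ≤ t + h)] at hs
    obtain ⟨hs1, hs2⟩ := hs
    have habs : |t - s| = s - t := by
      rw [abs_of_nonpos (by linarith)]; ring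
    have hmax : max (1 - |t - s| / h) 0 = 1 - (s - t) / h := by
      rw [habs]
      apply max_eq_left
      have : (s - t) / h ≤ 1 := (div_le_one hh).mpr (by linarith)
      linarith
    simp only [hmax]
    field_simp
    ring
  rw [e1, e2]
  -- step 4: compute via linearity and the FTC lemmas
  have j1 : ∀ a b : ℝ, IntervalIntegrable (fun s : ℝ => s * |s| ^ p) volume a b :=
    fun a b => (aux_intervalIntegrable p hp a b).continuousOn_mul continuousOn_id
  rw [intervalIntegral.integral_add ((aux_intervalIntegrable p hp _ _).const_mul _)
      ((j1 _ _).const_mul _),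
    intervalIntegral.integral_add ((aux_intervalIntegrable p hp _ _).const_mul _)
      ((j1 _ _).const_mul _),
    intervalIntegral.integral_const_mul, intervalIntegral.integral_const_mul,
    intervalIntegral.integral_const_mul, intervalIntegral.integral_const_mul,
    aux_integral_abs_rpow p hp, aux_integral_abs_rpow p hp,
    aux_integral_mul_abs_rpow p hp, aux_integral_mul_abs_rpow p hp]
  -- step 5: algebra
  have sq : ∀ x : ℝ, |x| ^ (p + 2) = x * (x * |x| ^ p) := by
    intro x
    rw [Real.rpow_add' (abs_nonneg x) (by linarith : p + 2 ≠ 0)]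
    rw [show ((2:ℝ)) = ((2:ℕ):ℝ) by norm_num, Real.rpow_natCast, sq_abs]
    ring
  rw [sq (t - h), sq t, sq (t + h)]
  have hh0 : h ≠ 0 := ne_of_gt hh
  have hp1' : p + 1 ≠ 0 := ne_of_gt hp1
  have hp2' : p + 2 ≠ 0 := ne_of_gt hp2
  rw [show p + 2 - 1 = p + 1 by ring]
  field_simp
  ring
end
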